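/- arXiv:2101.06093 — 4 statements merged into one kernel-verified Lean document; each statement's English description precedes it below -/
import Mathlib

section
/- Let 0 < a < b < ∞, 0 < c < d < ∞, -1 < p, q ≤ 0 and 0 < α, β < 1, and set γ = min{α, β}. If f : [a,b] × [c,d] → ℝ is continuous, then its mixed Katugampola fractional integral I f satisfies a Hölder condition of exponent γ: there is a constant C > 0 such that |(I f)(x+h, y+k) - (I f)(x,y)| ≤ C ‖(h,k)‖₂^{γ} for all points (x,y) and (x+h, y+k) in [a,b] × [c,d] with h, k ≥ 0 sufficiently small. -/
open MeasureTheory Set Filter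
open scoped Classical

/-- Mixed (left-hand sided) Katugampola fractional integral of a bivariate function. -/
noncomputable def mixedKI (a c p q α β : ℝ) (f : ℝ → ℝ → ℝ) (x y : ℝ) : ℝ :=
  ((p + 1) ^ (1 - α) * (q + 1) ^ (1 - β) / (Real.Gamma α * Real.Gamma β)) *
    ∫ s in a..x, ∫ t in c..y,
      (x ^ (p + 1) - s ^ (p + 1)) ^ (α - 1) * (y ^ (q + 1) - t ^ (q + 1)) ^ (β - 1)
        * s ^ p * t ^ q * f s t

/-- Univariate Katugampola fractional integral. -/
noncomputable def KI (a p α : ℝ) (g : ℝ → ℝ) (x : ℝ) : ℝ :=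
  ((p + 1) ^ (1 - α) / Real.Gamma α) *
    ∫ t in a..x, (x ^ (p + 1) - t ^ (p + 1)) ^ (α - 1) * t ^ p * g t

/-- Bounded variation in the sense of Arzelà on `[a,b] × [c,d]`. -/
def ArzelaBV (a b c d : ℝ) (f : ℝ → ℝ → ℝ) : Prop :=
  ∃ M > 0, ∀ (m : ℕ) (x y : ℕ → ℝ),
    x 0 = a → x m = b → y 0 = c → y m = d →
    (∀ i < m, x i ≤ x (i + 1)) → (∀ i < m, y i ≤ y (i + 1)) →
    ∑ i ∈ Finset.range m, |f (x (i + 1)) (y (i + 1)) - f (x i) (y i)| ≤ M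

/-- A bounded bivariate function, monotone (nondecreasing) in each variable on the rectangle. -/
def MonotoneRect (a b c d : ℝ) (g : ℝ → ℝ → ℝ) : Prop :=
  (∃ M : ℝ, ∀ x ∈ Icc a b, ∀ y ∈ Icc c d, |g x y| ≤ M) ∧
  (∀ x ∈ Icc a b, ∀ x' ∈ Icc a b, x ≤ x' → ∀ y ∈ Icc c d, g x y ≤ g x' y) ∧
  (∀ y ∈ Icc c d, ∀ y' ∈ Icc c d, y ≤ y' → ∀ x ∈ Icc a b, g x y ≤ g x y')

/-- Graph of a bivariate function over the rectangle `[a,b] × [c,d]`, as a subset of `ℝ³`. -/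
def graphRect (a b c d : ℝ) (f : ℝ → ℝ → ℝ) : Set (ℝ × ℝ × ℝ) :=
  {p | p.1 ∈ Icc a b ∧ p.2.1 ∈ Icc c d ∧ p.2.2 = f p.1 p.2.1}

/-- A cube of the standard `δ`-mesh of `ℝ³`. -/
def meshCube (δ : ℝ) (i j k : ℤ) : Set (ℝ × ℝ × ℝ) :=
  Icc (i * δ) ((i + 1) * δ) ×ˢ Icc (j * δ) ((j + 1) * δ) ×ˢ Icc (k * δ) ((k + 1) * δ)

/-- Number of `δ`-mesh cubes of `ℝ³` that intersect `S`. -/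
noncomputable def meshCount (δ : ℝ) (S : Set (ℝ × ℝ × ℝ)) : ℕ :=
  Nat.card {p : ℤ × ℤ × ℤ | (meshCube δ p.1 p.2.1 p.2.2 ∩ S).Nonempty}

/-- Upper box (Minkowski) dimension of a subset of `ℝ³`. -/
noncomputable def upperBoxDim (S : Set (ℝ × ℝ × ℝ)) : ℝ :=
  limsup (fun δ : ℝ => Real.log (meshCount δ S) / (-Real.log δ)) (nhdsWithin 0 (Ioi 0))

/-- Lower box (Minkowski) dimension of a subset of `ℝ³`. -/
noncomputable def lowerBoxDim (S : Set (ℝ × ℝ × ℝ)) : ℝ :=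
  liminf (fun δ : ℝ => Real.log (meshCount δ S) / (-Real.log δ)) (nhdsWithin 0 (Ioi 0))

/-- Maximum range of `f` over a subset `A` of the plane. -/
noncomputable def Rf (f : ℝ → ℝ → ℝ) (A : Set (ℝ × ℝ)) : ℝ :=
  sSup {r | ∃ p ∈ A, ∃ q ∈ A, r = |f p.1 p.2 - f q.1 q.2|}

/-- The `(i,j)`-th sub-rectangle of the `m × n` uniform partition of `[a,b] × [c,d]`. -/
def subRect (a b c d : ℝ) (m n : ℕ) (i j : ℕ) : Set (ℝ × ℝ) :=
  Icc (a + ((i : ℝ) - 1) * (b - a) / m) (a + (i : ℝ) * (b - a) / m) ×ˢ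
    Icc (c + ((j : ℝ) - 1) * (d - c) / n) (c + (j : ℝ) * (d - c) / n)

/-- The sequence `a₀ = a`, `aₙ = a + (b-a)/2 + ⋯ + (b-a)/2ⁿ = b - (b-a)/2ⁿ`. -/
noncomputable def aseq (a b : ℝ) (n : ℕ) : ℝ := b - (b - a) / 2 ^ n

/-- The affine map `ψₙ : [aₙ₋₁, aₙ] → [a₀, a₁]`. -/
noncomputable def psiN (a b : ℝ) (n : ℕ) (x : ℝ) : ℝ :=
  2 ^ n * ((aseq a b 1 - aseq a b 0) * x + aseq a b 0 * aseq a b n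
    - aseq a b 1 * aseq a b (n - 1)) / (b - a)

/-- The function `Fₙ(x,y) = (1/n) φ(ψₙ(x), y) + ((n-1)/n) φ(a₀, y)` (for `n = 1` this is `φ`). -/
noncomputable def Fseq (a b : ℝ) (φ : ℝ → ℝ → ℝ) (n : ℕ) (x y : ℝ) : ℝ :=
  (1 / (n : ℝ)) * φ (psiN a b n x) y + (((n : ℝ) - 1) / (n : ℝ)) * φ (aseq a b 0) y


lemma cont_rpow_base {e : ℝ} (he : 0 ≤ e) : Continuous fun s : ℝ => s ^ e :=
  Real.continuous_rpow_const he

noncomputable def kerF (p α xx : ℝ) (s : ℝ) : ℝ := (xx ^ (p+1) - s ^ (p+1)) ^ (α - 1) * s ^ p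


lemma ae_Ioc_of_Ioo {l r : ℝ} {P : ℝ → Prop} (h : ∀ s ∈ Set.Ioo l r, P s) :
    ∀ᵐ s ∂(volume.restrict (Set.Ioc l r)), P s := by
  rw [← Measure.restrict_congr_set Ioo_ae_eq_Ioc]
  exact (ae_restrict_iff' measurableSet_Ioo).2 (Filter.Eventually.of_forall h)

lemma aesm_of_contOn_Ioo {l r : ℝ} {f : ℝ → ℝ} (h : ContinuousOn f (Set.Ioo l r)) :
    AEStronglyMeasurable f (volume.restrict (Set.Ioc l r)) := by
  rw [← Measure.restrict_congr_set Ioo_ae_eq_Ioc]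
  exact h.aestronglyMeasurable measurableSet_Ioo

lemma usub_pos {p s xx : ℝ} (hp : 0 < p + 1) (hs : 0 < s) (hsx : s < xx) :
    0 < xx ^ (p+1) - s ^ (p+1) :=
  sub_pos.2 (Real.rpow_lt_rpow hs.le hsx hp)

lemma usub_nonneg {p s xx : ℝ} (hp : 0 < p + 1) (hs : 0 ≤ s) (hsx : s ≤ xx) :
    0 ≤ xx ^ (p+1) - s ^ (p+1) :=
  sub_nonneg.2 (Real.rpow_le_rpow hs hsx hp.le)

lemma kerF_nonneg {p α xx s : ℝ} (hp : 0 < p + 1) (hs : 0 ≤ s) (hsx : s ≤ xx) :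
    0 ≤ kerF p α xx s :=
  mul_nonneg (Real.rpow_nonneg (usub_nonneg hp hs hsx) _) (Real.rpow_nonneg hs _)

lemma kerF_anti {p α xx xx' s : ℝ} (hp : 0 < p + 1) (hα1 : α ≤ 1) (hs : 0 < s)
    (hsx : s < xx) (hxx : xx ≤ xx') : kerF p α xx' s ≤ kerF p α xx s := by
  unfold kerF
  have h1 : 0 < xx ^ (p+1) - s ^ (p+1) := usub_pos hp hs hsx
  have h2 : xx ^ (p+1) - s ^ (p+1) ≤ xx' ^ (p+1) - s ^ (p+1) := by
    have := Real.rpow_le_rpow (le_of_lt (hs.trans hsx)) hxx hp.le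
    linarith
  exact mul_le_mul_of_nonneg_right
    (Real.rpow_le_rpow_of_nonpos h1 h2 (by linarith)) (Real.rpow_nonneg hs.le _)

lemma kerF_contOn {p α xx : ℝ} (hp : 0 < p + 1) {l r : ℝ} (hl : 0 < l) (hr : r ≤ xx) :
    ContinuousOn (kerF p α xx) (Set.Ioo l r) := by
  intro s hs
  have hs0 : 0 < s := hl.trans hs.1
  have hpos : 0 < xx ^ (p+1) - s ^ (p+1) := usub_pos hp hs0 (hs.2.trans_le hr)
  apply ContinuousAt.continuousWithinAt
  apply ContinuousAt.mul
  · have hinner : ContinuousAt (fun s : ℝ => xx ^ (p+1) - s ^ (p+1)) s :=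
      continuousAt_const.sub (cont_rpow_base hp.le).continuousAt
    exact hinner.rpow_const (Or.inl hpos.ne')
  · exact Real.continuousAt_rpow_const _ _ (Or.inl hs0.ne')

noncomputable def Gfun (p α xx : ℝ) (s : ℝ) : ℝ := -((xx ^ (p+1) - s ^ (p+1)) ^ α / ((p+1) * α))



lemma Gfun_hasDeriv {p α xx : ℝ} (hp : 0 < p + 1) (hα : 0 < α) {s : ℝ}
    (hs : 0 < s) (hsx : s < xx) : HasDerivAt (Gfun p α xx) (kerF p α xx s) s := by
  have hux : 0 < xx ^ (p+1) - s ^ (p+1) := usub_pos hp hs hsx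
  have h1 : HasDerivAt (fun s : ℝ => s ^ (p+1)) ((p+1) * s ^ (p+1-1)) s :=
    Real.hasDerivAt_rpow_const (Or.inl hs.ne')
  have h2 : HasDerivAt (fun s : ℝ => xx ^ (p+1) - s ^ (p+1)) (-((p+1) * s ^ p)) s := by
    simpa [show p + 1 - 1 = p by ring] using h1.const_sub (xx ^ (p+1))
  have h3 : HasDerivAt (fun z : ℝ => z ^ α) (α * (xx ^ (p+1) - s ^ (p+1)) ^ (α - 1))
      (xx ^ (p+1) - s ^ (p+1)) := Real.hasDerivAt_rpow_const (Or.inl hux.ne')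
  have h4 := (h3.comp s h2).div_const ((p+1) * α)
  have h5 := h4.neg
  refine h5.congr_deriv ?_
  unfold kerF
  field_simp

lemma Gfun_cont {p α xx : ℝ} (hp : 0 < p + 1) (hα : 0 < α) : Continuous (Gfun p α xx) := by
  unfold Gfun
  exact (((continuous_const.sub (cont_rpow_base hp.le)).rpow_const
    (fun s => Or.inr hα.le)).div_const _).neg

lemma kerF_nonneg' {p α xx s : ℝ} (hp : 0 < p + 1) (hs : 0 ≤ s) (hsx : s ≤ xx) :
    0 ≤ kerF p α xx s :=
  mul_nonneg (Real.rpow_nonneg (sub_nonneg.2 (Real.rpow_le_rpow hs hsx hp.le)) _)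
    (Real.rpow_nonneg hs _)

lemma kerF_intervalIntegrable {p α : ℝ} (hp : 0 < p + 1) (hα : 0 < α)
    {l r xx : ℝ} (hl : 0 < l) (hlr : l ≤ r) (hrx : r ≤ xx) :
    IntervalIntegrable (kerF p α xx) volume l r := by
  apply intervalIntegral.intervalIntegrable_deriv_of_nonneg
    ((Gfun_cont hp hα).continuousOn)
  · intro s hs
    rw [min_eq_left hlr, max_eq_right hlr] at hs
    exact Gfun_hasDeriv hp hα (hl.trans hs.1) (hs.2.trans_le hrx)
  · intro s hs
    rw [min_eq_left hlr, max_eq_right hlr] at hs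
    exact kerF_nonneg' hp (hl.trans hs.1).le ((hs.2.trans_le hrx)).le

lemma kerF_integral {p α : ℝ} (hp : 0 < p + 1) (hα : 0 < α)
    {l r xx : ℝ} (hl : 0 < l) (hlr : l ≤ r) (hrx : r ≤ xx) :
    ∫ s in l..r, kerF p α xx s =
      ((xx ^ (p+1) - l ^ (p+1)) ^ α - (xx ^ (p+1) - r ^ (p+1)) ^ α) / ((p+1) * α) := by
  have := intervalIntegral.integral_eq_sub_of_hasDeriv_right_of_le hlr
    ((Gfun_cont hp hα).continuousOn)
    (fun s hs => (Gfun_hasDeriv hp hα (hl.trans hs.1) (hs.2.trans_le hrx)).hasDerivWithinAt)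
    (kerF_intervalIntegrable hp hα hl hlr hrx)
  rw [this]
  unfold Gfun
  ring

lemma rpow_contOn_pos {e l r : ℝ} (hl : 0 < l) :
    ContinuousOn (fun s : ℝ => s ^ e) (Set.Icc l r) := fun s hs =>
  (Real.continuousAt_rpow_const s e (Or.inl (hl.trans_le hs.1).ne')).continuousWithinAt

lemma u_inc {p a x x' : ℝ} (hp : 0 < p + 1) (hp0 : p ≤ 0) (ha : 0 < a)
    (hax : a ≤ x) (hxx : x ≤ x') :
    x' ^ (p+1) - x ^ (p+1) ≤ (p+1) * a ^ p * (x' - x) := by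
  have hx0 : 0 < x := ha.trans_le hax
  have hint : IntervalIntegrable (fun s : ℝ => (p+1) * s ^ p) volume x x' := by
    apply ContinuousOn.intervalIntegrable
    rw [uIcc_of_le hxx]
    exact continuousOn_const.mul (rpow_contOn_pos hx0)
  have hftc : ∫ s in x..x', (p+1) * s ^ p = x' ^ (p+1) - x ^ (p+1) := by
    apply intervalIntegral.integral_eq_sub_of_hasDerivAt
    · intro s hs
      rw [uIcc_of_le hxx] at hs
      have : HasDerivAt (fun s : ℝ => s ^ (p+1)) ((p+1) * s ^ (p+1-1)) s :=
        Real.hasDerivAt_rpow_const (Or.inl (hx0.trans_le hs.1).ne')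
      simpa [show p + 1 - 1 = p by ring] using this
    · exact hint
  rw [← hftc]
  have : ∫ s in x..x', (p+1) * a ^ p = (p+1) * a ^ p * (x' - x) := by
    rw [intervalIntegral.integral_const, smul_eq_mul]; ring
  rw [← this]
  apply intervalIntegral.integral_mono_on hxx hint
  · exact intervalIntegrable_const
  · intro s hs
    have : s ^ p ≤ a ^ p := Real.rpow_le_rpow_of_nonpos ha (hax.trans hs.1) hp0
    nlinarith

noncomputable def PhiF (c q β : ℝ) (F : ℝ → ℝ → ℝ) (y s : ℝ) : ℝ :=
  ∫ t in c..y, kerF q β y t * F s t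

lemma ae_Ioc_of_forall {l r : ℝ} {P : ℝ → Prop} (h : ∀ s ∈ Set.Ioc l r, P s) :
    ∀ᵐ s ∂(volume.restrict (Set.Ioc l r)), P s :=
  (ae_restrict_iff' measurableSet_Ioc).2 (Filter.Eventually.of_forall h)

lemma ae_Icc_of_Ioo {l r : ℝ} {P : ℝ → Prop} (h : ∀ s ∈ Set.Ioo l r, P s) :
    ∀ᵐ s ∂(volume.restrict (Set.Icc l r)), P s := by
  rw [← Measure.restrict_congr_set Ioo_ae_eq_Icc]
  exact (ae_restrict_iff' measurableSet_Ioo).2 (Filter.Eventually.of_forall h)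

/-- integrability of kernel times a bounded a.e.-continuous-on-Ioo function -/
lemma kerF_mul_integrable {p α : ℝ} (hp : 0 < p + 1) (hα : 0 < α)
    {l r xx B : ℝ} (hl : 0 < l) (hlr : l ≤ r) (hrx : r ≤ xx)
    {g : ℝ → ℝ} (hg : Continuous g) (hgB : ∀ s, |g s| ≤ B) :
    IntervalIntegrable (fun s => kerF p α xx s * g s) volume l r := by
  apply IntervalIntegrable.mono_fun'
    (g := fun s => B * kerF p α xx s)
    ((kerF_intervalIntegrable hp hα hl hlr hrx).const_mul B)
  · rw [uIoc_of_le hlr]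
    apply aesm_of_contOn_Ioo
    exact ((kerF_contOn hp hl hrx).mul hg.continuousOn)
  · rw [uIoc_of_le hlr]
    apply ae_Ioc_of_forall
    intro s hs
    have hk := kerF_nonneg' (α := α) (s := s) (xx := xx) hp (hl.trans hs.1).le (hs.2.trans hrx)
    have := hgB s
    simp only [norm_mul, Real.norm_eq_abs, abs_of_nonneg hk]
    calc kerF p α xx s * |g s| ≤ kerF p α xx s * B := by
          exact mul_le_mul_of_nonneg_left (hgB s) hk
      _ = B * kerF p α xx s := mul_comm _ _

/-- The basic kernel integral value with right endpoint equal to the singularity. -/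
lemma kerF_integral_full {p α : ℝ} (hp : 0 < p + 1) (hα : 0 < α)
    {l xx : ℝ} (hl : 0 < l) (hlx : l ≤ xx) :
    ∫ s in l..xx, kerF p α xx s = (xx ^ (p+1) - l ^ (p+1)) ^ α / ((p+1) * α) := by
  rw [kerF_integral hp hα hl hlx le_rfl, sub_self, Real.zero_rpow hα.ne', sub_zero]

lemma norm_int_ker_mul_le {p α : ℝ} (hp : 0 < p + 1) (hα : 0 < α)
    {l r xx B : ℝ} (hl : 0 < l) (hlr : l ≤ r) (hrx : r ≤ xx) (hB : 0 ≤ B)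
    {g : ℝ → ℝ} (hgB : ∀ s ∈ Set.Ioc l r, |g s| ≤ B) :
    |∫ s in l..r, kerF p α xx s * g s| ≤
      B * (((xx ^ (p+1) - l ^ (p+1)) ^ α - (xx ^ (p+1) - r ^ (p+1)) ^ α) / ((p+1) * α)) := by
  have hker := kerF_intervalIntegrable hp hα hl hlr hrx
  have h1 : |∫ s in l..r, kerF p α xx s * g s| ≤ |∫ s in l..r, B * kerF p α xx s| := by
    rw [← Real.norm_eq_abs]
    apply intervalIntegral.norm_integral_le_abs_of_norm_le _ (hker.const_mul B)
    rw [uIoc_of_le hlr]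
    apply ae_Ioc_of_forall
    intro s hs
    have hk := kerF_nonneg' (α := α) (s := s) (xx := xx) hp (hl.trans hs.1).le (hs.2.trans hrx)
    simp only [norm_mul, Real.norm_eq_abs, abs_of_nonneg hk]
    calc kerF p α xx s * |g s| ≤ kerF p α xx s * B :=
          mul_le_mul_of_nonneg_left (hgB s hs) hk
      _ = B * kerF p α xx s := mul_comm _ _
  have h2 : ∫ s in l..r, B * kerF p α xx s
      = B * (((xx ^ (p+1) - l ^ (p+1)) ^ α - (xx ^ (p+1) - r ^ (p+1)) ^ α) / ((p+1) * α)) := by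
    rw [intervalIntegral.integral_const_mul, kerF_integral hp hα hl hlr hrx]
  rw [h2] at h1
  refine h1.trans (le_of_eq (abs_of_nonneg ?_))
  have hnn : 0 ≤ ((xx ^ (p+1) - l ^ (p+1)) ^ α - (xx ^ (p+1) - r ^ (p+1)) ^ α) / ((p+1) * α) := by
    apply div_nonneg _ (by positivity)
    have : xx ^ (p+1) - r ^ (p+1) ≤ xx ^ (p+1) - l ^ (p+1) := by
      have := Real.rpow_le_rpow hl.le hlr hp.le
      linarith
    have h0 : 0 ≤ xx ^ (p+1) - r ^ (p+1) := by
      have := Real.rpow_le_rpow (hl.le.trans hlr) hrx hp.le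
      linarith
    have := Real.rpow_le_rpow h0 this hα.le
    linarith
  positivity

lemma PhiF_bound {c q β M : ℝ} {F : ℝ → ℝ → ℝ} (hq : 0 < q + 1) (hβ : 0 < β)
    (hc : 0 < c) {y : ℝ} (hy : c ≤ y) (hM : ∀ s t, |F s t| ≤ M) (s : ℝ) :
    |PhiF c q β F y s| ≤ M * ((y ^ (q+1) - c ^ (q+1)) ^ β / ((q+1) * β)) := by
  have := norm_int_ker_mul_le hq hβ hc hy le_rfl
    ((abs_nonneg _).trans (hM 0 0)) (g := fun t => F s t) (fun t _ => hM s t)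
  rw [sub_self, Real.zero_rpow hβ.ne', sub_zero] at this
  exact this

lemma PhiF_cont {c q β M : ℝ} {F : ℝ → ℝ → ℝ} (hq : 0 < q + 1) (hβ : 0 < β)
    (hc : 0 < c) {y : ℝ} (hy : c ≤ y)
    (hFc : Continuous fun pt : ℝ × ℝ => F pt.1 pt.2) (hM : ∀ s t, |F s t| ≤ M) :
    Continuous (PhiF c q β F y) := by
  unfold PhiF
  apply intervalIntegral.continuous_of_dominated_interval
    (bound := fun t => M * kerF q β y t)
  · intro s
    rw [uIoc_of_le hy]
    apply aesm_of_contOn_Ioo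
    exact (kerF_contOn hq hc le_rfl).mul
      ((hFc.comp (continuous_const.prodMk continuous_id)).continuousOn)
  · intro s
    apply Filter.Eventually.of_forall
    intro t ht
    rw [uIoc_of_le hy] at ht
    have hk := kerF_nonneg' (α := β) (s := t) (xx := y) hq (hc.trans ht.1).le ht.2
    simp only [norm_mul, Real.norm_eq_abs, abs_of_nonneg hk]
    calc kerF q β y t * |F s t| ≤ kerF q β y t * M :=
          mul_le_mul_of_nonneg_left (hM s t) hk
      _ = M * kerF q β y t := mul_comm _ _
  · exact (kerF_intervalIntegrable hq hβ hc hy le_rfl).const_mul M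
  · apply Filter.Eventually.of_forall
    intro t _
    exact continuous_const.mul (hFc.comp (continuous_id.prodMk continuous_const))

lemma PhiF_diff {c q β M : ℝ} {F : ℝ → ℝ → ℝ} (hq : 0 < q + 1) (hβ : 0 < β) (hβ1 : β ≤ 1)
    (hc : 0 < c) {y y' : ℝ} (hy : c ≤ y) (hyy : y ≤ y')
    (hFc : Continuous fun pt : ℝ × ℝ => F pt.1 pt.2) (hM : ∀ s t, |F s t| ≤ M) (s : ℝ) :
    |PhiF c q β F y' s - PhiF c q β F y s| ≤
      2 * M * ((y' ^ (q+1) - y ^ (q+1)) ^ β / ((q+1) * β)) := by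
  have hM0 : 0 ≤ M := (abs_nonneg _).trans (hM 0 0)
  have hy0 : 0 < y := hc.trans_le hy
  have hgc : Continuous fun t => F s t := hFc.comp (continuous_const.prodMk continuous_id)
  have hI1 : IntervalIntegrable (fun t => kerF q β y' t * F s t) volume c y :=
    kerF_mul_integrable hq hβ hc hy hyy hgc (fun t => hM s t)
  have hI2 : IntervalIntegrable (fun t => kerF q β y' t * F s t) volume y y' :=
    kerF_mul_integrable hq hβ hy0 hyy le_rfl hgc (fun t => hM s t)
  have hI0 : IntervalIntegrable (fun t => kerF q β y t * F s t) volume c y :=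
    kerF_mul_integrable hq hβ hc hy le_rfl hgc (fun t => hM s t)
  have hdiff : PhiF c q β F y' s - PhiF c q β F y s =
      (∫ t in c..y, (kerF q β y' t * F s t - kerF q β y t * F s t)) +
        ∫ t in y..y', kerF q β y' t * F s t := by
    have hsplit := intervalIntegral.integral_add_adjacent_intervals hI1 hI2
    unfold PhiF
    rw [intervalIntegral.integral_sub hI1 hI0, ← hsplit]
    ring
  have hT2 : |∫ t in y..y', kerF q β y' t * F s t| ≤
      M * ((y' ^ (q+1) - y ^ (q+1)) ^ β / ((q+1) * β)) := by
    have := norm_int_ker_mul_le hq hβ hy0 hyy le_rfl hM0 (g := fun t => F s t)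
      (fun t _ => hM s t)
    rwa [sub_self, Real.zero_rpow hβ.ne', sub_zero] at this
  have hkiy := kerF_intervalIntegrable (α := β) (xx := y) hq hβ hc hy le_rfl
  have hkiy' := kerF_intervalIntegrable (α := β) (xx := y') hq hβ hc hy hyy
  have hbi : IntervalIntegrable (fun t => M * (kerF q β y t - kerF q β y' t)) volume c y :=
    (hkiy.sub hkiy').const_mul M
  have hT1 : |∫ t in c..y, (kerF q β y' t * F s t - kerF q β y t * F s t)| ≤
      M * ((y' ^ (q+1) - y ^ (q+1)) ^ β / ((q+1) * β)) := by
    have hle : |∫ t in c..y, (kerF q β y' t * F s t - kerF q β y t * F s t)| ≤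
        |∫ t in c..y, M * (kerF q β y t - kerF q β y' t)| := by
      rw [← Real.norm_eq_abs]
      apply intervalIntegral.norm_integral_le_abs_of_norm_le _ hbi
      rw [uIoc_of_le hy, ← Measure.restrict_congr_set Ioo_ae_eq_Ioc]
      apply (ae_restrict_iff' measurableSet_Ioo).2 (Filter.Eventually.of_forall ?_)
      intro t ht
      have h1 : kerF q β y' t ≤ kerF q β y t := kerF_anti hq hβ1 (hc.trans ht.1) ht.2 hyy
      have heq : kerF q β y' t * F s t - kerF q β y t * F s t
          = (kerF q β y' t - kerF q β y t) * F s t := by ring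
      rw [heq, Real.norm_eq_abs, abs_mul, abs_of_nonpos (by linarith), neg_sub]
      calc (kerF q β y t - kerF q β y' t) * |F s t|
          ≤ (kerF q β y t - kerF q β y' t) * M :=
            mul_le_mul_of_nonneg_left (hM s t) (by linarith)
        _ = M * (kerF q β y t - kerF q β y' t) := mul_comm _ _
    have hval : ∫ t in c..y, M * (kerF q β y t - kerF q β y' t) =
        M * ((y ^ (q+1) - c ^ (q+1)) ^ β / ((q+1) * β) -
          ((y' ^ (q+1) - c ^ (q+1)) ^ β - (y' ^ (q+1) - y ^ (q+1)) ^ β) / ((q+1) * β)) := by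
      rw [intervalIntegral.integral_const_mul, intervalIntegral.integral_sub hkiy hkiy',
        kerF_integral_full hq hβ hc hy, kerF_integral hq hβ hc hy hyy]
    have hpos : 0 ≤ ∫ t in c..y, M * (kerF q β y t - kerF q β y' t) := by
      apply intervalIntegral.integral_nonneg_of_ae_restrict hy
      apply ae_Icc_of_Ioo
      intro t ht
      have h1 := kerF_anti hq hβ1 (hc.trans ht.1) ht.2 hyy
      exact mul_nonneg hM0 (by linarith)
    have hmono : (y ^ (q+1) - c ^ (q+1)) ^ β ≤ (y' ^ (q+1) - c ^ (q+1)) ^ β := by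
      apply Real.rpow_le_rpow
      · have := Real.rpow_le_rpow hc.le hy hq.le; linarith
      · have := Real.rpow_le_rpow hy0.le hyy hq.le; linarith
      · exact hβ.le
    refine hle.trans ?_
    rw [abs_of_nonneg hpos, hval]
    have hcb : 0 < (q+1) * β := by positivity
    rw [div_sub_div_same, ← mul_div_assoc, ← mul_div_assoc]
    gcongr
    nlinarith
  calc |PhiF c q β F y' s - PhiF c q β F y s|
      ≤ |∫ t in c..y, (kerF q β y' t * F s t - kerF q β y t * F s t)| +
        |∫ t in y..y', kerF q β y' t * F s t| := by rw [hdiff]; exact abs_add_le _ _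
    _ ≤ 2 * M * ((y' ^ (q+1) - y ^ (q+1)) ^ β / ((q+1) * β)) := by
        have := hT1; have := hT2; linarith

noncomputable def c0 (p q α β : ℝ) : ℝ :=
  (p + 1) ^ (1 - α) * (q + 1) ^ (1 - β) / (Real.Gamma α * Real.Gamma β)

lemma c0_pos {p q α β : ℝ} (hp : 0 < p + 1) (hq : 0 < q + 1) (hα : 0 < α) (hβ : 0 < β) :
    0 < c0 p q α β :=
  div_pos (mul_pos (Real.rpow_pos_of_pos hp _) (Real.rpow_pos_of_pos hq _))
    (mul_pos (Real.Gamma_pos_of_pos hα) (Real.Gamma_pos_of_pos hβ))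

lemma mixedKI_eq {a c p q α β : ℝ} (F : ℝ → ℝ → ℝ) (X Y : ℝ) :
    mixedKI a c p q α β F X Y =
      c0 p q α β * ∫ s in a..X, kerF p α X s * PhiF c q β F Y s := by
  unfold mixedKI c0 PhiF kerF
  congr 1
  apply intervalIntegral.integral_congr
  intro s _
  simp only
  rw [← intervalIntegral.integral_const_mul]
  apply intervalIntegral.integral_congr
  intro t _
  simp only
  ring

lemma main_estimate {a b c d p q α β M : ℝ} {F : ℝ → ℝ → ℝ}
    (ha : 0 < a) (hc : 0 < c)
    (hp : 0 < p + 1) (hp0 : p ≤ 0) (hq : 0 < q + 1) (hq0 : q ≤ 0)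
    (hα : 0 < α) (hα1 : α ≤ 1) (hβ : 0 < β) (hβ1 : β ≤ 1)
    (hFc : Continuous fun pt : ℝ × ℝ => F pt.1 pt.2) (hM : ∀ s t, |F s t| ≤ M)
    {x y x' y' : ℝ} (hax : a ≤ x) (hxx : x ≤ x') (hxb : x' ≤ b)
    (hcy : c ≤ y) (hyy : y ≤ y') (hyd : y' ≤ d) :
    |mixedKI a c p q α β F x' y' - mixedKI a c p q α β F x y| ≤
      c0 p q α β * (2 * (M * ((d ^ (q+1) - c ^ (q+1)) ^ β / ((q+1) * β))) *
          ((p+1) * a ^ p) ^ α / ((p+1) * α)) * (x' - x) ^ α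
      + c0 p q α β * (2 * M * ((b ^ (p+1) - a ^ (p+1)) ^ α / ((p+1) * α)) *
          ((q+1) * c ^ q) ^ β / ((q+1) * β)) * (y' - y) ^ β := by
  have hM0 : 0 ≤ M := (abs_nonneg _).trans (hM 0 0)
  have hx0 : 0 < x := ha.trans_le hax
  have hyd' : y ≤ d := hyy.trans hyd
  set MP : ℝ := M * ((d ^ (q+1) - c ^ (q+1)) ^ β / ((q+1) * β)) with hMPdef
  have hcd : c ≤ d := hcy.trans hyd'
  have hMP0 : 0 ≤ MP := by
    apply mul_nonneg hM0
    apply div_nonneg (Real.rpow_nonneg ?_ _) (by positivity)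
    have := Real.rpow_le_rpow hc.le hcd hq.le
    linarith
  -- uniform bound for PhiF
  have hPB : ∀ Y, c ≤ Y → Y ≤ d → ∀ s, |PhiF c q β F Y s| ≤ MP := by
    intro Y h1 h2 s
    refine (PhiF_bound hq hβ hc h1 hM s).trans ?_
    rw [hMPdef]
    have hm : (Y ^ (q+1) - c ^ (q+1)) ^ β ≤ (d ^ (q+1) - c ^ (q+1)) ^ β := by
      apply Real.rpow_le_rpow
      · have := Real.rpow_le_rpow hc.le h1 hq.le; linarith
      · have := Real.rpow_le_rpow (hc.le.trans h1) h2 hq.le; linarith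
      · exact hβ.le
    have hcb : (0:ℝ) < (q+1) * β := by positivity
    gcongr
  -- continuity of PhiF
  have hPC : ∀ Y, c ≤ Y → Continuous (PhiF c q β F Y) :=
    fun Y h1 => PhiF_cont hq hβ hc h1 hFc hM
  -- integrability facts
  have hI1 : IntervalIntegrable (fun s => kerF p α x' s * PhiF c q β F y' s) volume a x :=
    kerF_mul_integrable hp hα ha hax hxx (hPC y' (hcy.trans hyy))
      (hPB y' (hcy.trans hyy) hyd)
  have hI2 : IntervalIntegrable (fun s => kerF p α x' s * PhiF c q β F y' s) volume x x' :=
    kerF_mul_integrable hp hα hx0 hxx le_rfl (hPC y' (hcy.trans hyy))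
      (hPB y' (hcy.trans hyy) hyd)
  have hI0 : IntervalIntegrable (fun s => kerF p α x s * PhiF c q β F y s) volume a x :=
    kerF_mul_integrable hp hα ha hax le_rfl (hPC y hcy) (hPB y hcy hyd')
  -- decomposition
  have hdiff : (∫ s in a..x', kerF p α x' s * PhiF c q β F y' s)
      - (∫ s in a..x, kerF p α x s * PhiF c q β F y s)
      = (∫ s in a..x, (kerF p α x' s * PhiF c q β F y' s
            - kerF p α x s * PhiF c q β F y s))
        + ∫ s in x..x', kerF p α x' s * PhiF c q β F y' s := by
    have hsplit := intervalIntegral.integral_add_adjacent_intervals hI1 hI2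
    rw [intervalIntegral.integral_sub hI1 hI0, ← hsplit]
    ring
  -- bound for the adjacent piece
  have hT2 : |∫ s in x..x', kerF p α x' s * PhiF c q β F y' s| ≤
      MP * ((x' ^ (p+1) - x ^ (p+1)) ^ α / ((p+1) * α)) := by
    have := norm_int_ker_mul_le hp hα hx0 hxx le_rfl hMP0
      (g := PhiF c q β F y') (fun s _ => hPB y' (hcy.trans hyy) hyd s)
    rwa [sub_self, Real.zero_rpow hα.ne', sub_zero] at this
  -- bound for the main piece
  set E : ℝ := 2 * M * ((y' ^ (q+1) - y ^ (q+1)) ^ β / ((q+1) * β)) with hEdef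
  have hE0 : 0 ≤ E := by
    apply mul_nonneg (by positivity)
    apply div_nonneg (Real.rpow_nonneg ?_ _) (by positivity)
    have := Real.rpow_le_rpow (hc.le.trans hcy) hyy hq.le
    linarith
  have hkix := kerF_intervalIntegrable (α := α) (xx := x) hp hα ha hax le_rfl
  have hkix' := kerF_intervalIntegrable (α := α) (xx := x') hp hα ha hax hxx
  have hbi2 : IntervalIntegrable
      (fun s => E * kerF p α x' s + MP * (kerF p α x s - kerF p α x' s)) volume a x :=
    (hkix'.const_mul E).add ((hkix.sub hkix').const_mul MP)
  have hT1 : |∫ s in a..x, (kerF p α x' s * PhiF c q β F y' s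
        - kerF p α x s * PhiF c q β F y s)| ≤
      E * ((b ^ (p+1) - a ^ (p+1)) ^ α / ((p+1) * α))
        + MP * ((x' ^ (p+1) - x ^ (p+1)) ^ α / ((p+1) * α)) := by
    have hle : |∫ s in a..x, (kerF p α x' s * PhiF c q β F y' s
          - kerF p α x s * PhiF c q β F y s)| ≤
        |∫ s in a..x, (E * kerF p α x' s + MP * (kerF p α x s - kerF p α x' s))| := by
      rw [← Real.norm_eq_abs]
      apply intervalIntegral.norm_integral_le_abs_of_norm_le _ hbi2
      rw [uIoc_of_le hax, ← Measure.restrict_congr_set Ioo_ae_eq_Ioc]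
      apply (ae_restrict_iff' measurableSet_Ioo).2 (Filter.Eventually.of_forall ?_)
      intro s hs
      have h1 : kerF p α x' s ≤ kerF p α x s := kerF_anti hp hα1 (ha.trans hs.1) hs.2 hxx
      have h2 : 0 ≤ kerF p α x' s :=
        kerF_nonneg' hp (ha.trans hs.1).le (hs.2.le.trans hxx)
      have hd := PhiF_diff hq hβ hβ1 hc hcy hyy hFc hM s
      have hb := hPB y hcy hyd' s
      have heq : kerF p α x' s * PhiF c q β F y' s - kerF p α x s * PhiF c q β F y s
          = kerF p α x' s * (PhiF c q β F y' s - PhiF c q β F y s)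
            + (kerF p α x' s - kerF p α x s) * PhiF c q β F y s := by ring
      rw [heq, Real.norm_eq_abs]
      calc |kerF p α x' s * (PhiF c q β F y' s - PhiF c q β F y s)
            + (kerF p α x' s - kerF p α x s) * PhiF c q β F y s|
          ≤ |kerF p α x' s * (PhiF c q β F y' s - PhiF c q β F y s)|
            + |(kerF p α x' s - kerF p α x s) * PhiF c q β F y s| := abs_add_le _ _
        _ = kerF p α x' s * |PhiF c q β F y' s - PhiF c q β F y s|
            + (kerF p α x s - kerF p α x' s) * |PhiF c q β F y s| := by
            rw [abs_mul, abs_mul, abs_of_nonneg h2,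
              abs_of_nonpos (show kerF p α x' s - kerF p α x s ≤ 0 by linarith), neg_sub]
        _ ≤ kerF p α x' s * E + (kerF p α x s - kerF p α x' s) * MP := by
            rw [hEdef]
            have := mul_le_mul_of_nonneg_left hd h2
            have := mul_le_mul_of_nonneg_left hb (show (0:ℝ) ≤ kerF p α x s - kerF p α x' s by linarith)
            linarith
        _ = E * kerF p α x' s + MP * (kerF p α x s - kerF p α x' s) := by ring
    have hval : ∫ s in a..x, (E * kerF p α x' s + MP * (kerF p α x s - kerF p α x' s))
        = E * (((x' ^ (p+1) - a ^ (p+1)) ^ α - (x' ^ (p+1) - x ^ (p+1)) ^ α) / ((p+1) * α))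
          + MP * ((x ^ (p+1) - a ^ (p+1)) ^ α / ((p+1) * α)
            - ((x' ^ (p+1) - a ^ (p+1)) ^ α - (x' ^ (p+1) - x ^ (p+1)) ^ α) / ((p+1) * α)) := by
      rw [intervalIntegral.integral_add (hkix'.const_mul E) ((hkix.sub hkix').const_mul MP),
        intervalIntegral.integral_const_mul, intervalIntegral.integral_const_mul,
        intervalIntegral.integral_sub hkix hkix',
        kerF_integral_full hp hα ha hax, kerF_integral hp hα ha hax hxx]
    have hpos : 0 ≤ ∫ s in a..x, (E * kerF p α x' s + MP * (kerF p α x s - kerF p α x' s)) := by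
      apply intervalIntegral.integral_nonneg_of_ae_restrict hax
      apply ae_Icc_of_Ioo
      intro s hs
      have h1 : kerF p α x' s ≤ kerF p α x s := kerF_anti hp hα1 (ha.trans hs.1) hs.2 hxx
      have h2 : 0 ≤ kerF p α x' s :=
        kerF_nonneg' hp (ha.trans hs.1).le (hs.2.le.trans hxx)
      have h3 := mul_nonneg hE0 h2
      have h4 := mul_nonneg hMP0 (show (0:ℝ) ≤ kerF p α x s - kerF p α x' s by linarith)
      show (0:ℝ) ≤ E * kerF p α x' s + MP * (kerF p α x s - kerF p α x' s)
      linarith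
    refine hle.trans ?_
    rw [abs_of_nonneg hpos, hval]
    have hcA : (0:ℝ) < (p+1) * α := by positivity
    have m1 : (x' ^ (p+1) - a ^ (p+1)) ^ α ≤ (b ^ (p+1) - a ^ (p+1)) ^ α := by
      apply Real.rpow_le_rpow
      · have := Real.rpow_le_rpow ha.le (hax.trans hxx) hp.le; linarith
      · have := Real.rpow_le_rpow (ha.le.trans (hax.trans hxx)) hxb hp.le; linarith
      · exact hα.le
    have m2 : (x ^ (p+1) - a ^ (p+1)) ^ α ≤ (x' ^ (p+1) - a ^ (p+1)) ^ α := by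
      apply Real.rpow_le_rpow
      · have := Real.rpow_le_rpow ha.le hax hp.le; linarith
      · have := Real.rpow_le_rpow hx0.le hxx hp.le; linarith
      · exact hα.le
    have m3 : (0:ℝ) ≤ (x' ^ (p+1) - x ^ (p+1)) ^ α := Real.rpow_nonneg (by
      have := Real.rpow_le_rpow hx0.le hxx hp.le; linarith) _
    have hEm := mul_le_mul_of_nonneg_left
      ((div_le_div_iff_of_pos_right hcA).2 (by linarith :
        (x' ^ (p+1) - a ^ (p+1)) ^ α - (x' ^ (p+1) - x ^ (p+1)) ^ α
          ≤ (b ^ (p+1) - a ^ (p+1)) ^ α)) hE0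
    have hMm := mul_le_mul_of_nonneg_left
      ((div_le_div_iff_of_pos_right hcA).2 (by linarith :
        (x ^ (p+1) - a ^ (p+1)) ^ α - ((x' ^ (p+1) - a ^ (p+1)) ^ α
          - (x' ^ (p+1) - x ^ (p+1)) ^ α) ≤ (x' ^ (p+1) - x ^ (p+1)) ^ α)) hMP0
    calc E * (((x' ^ (p+1) - a ^ (p+1)) ^ α - (x' ^ (p+1) - x ^ (p+1)) ^ α) / ((p+1) * α))
          + MP * ((x ^ (p+1) - a ^ (p+1)) ^ α / ((p+1) * α)
            - ((x' ^ (p+1) - a ^ (p+1)) ^ α - (x' ^ (p+1) - x ^ (p+1)) ^ α) / ((p+1) * α))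
        = E * (((x' ^ (p+1) - a ^ (p+1)) ^ α - (x' ^ (p+1) - x ^ (p+1)) ^ α) / ((p+1) * α))
          + MP * (((x ^ (p+1) - a ^ (p+1)) ^ α - ((x' ^ (p+1) - a ^ (p+1)) ^ α
            - (x' ^ (p+1) - x ^ (p+1)) ^ α)) / ((p+1) * α)) := by ring
      _ ≤ E * ((b ^ (p+1) - a ^ (p+1)) ^ α / ((p+1) * α))
          + MP * ((x' ^ (p+1) - x ^ (p+1)) ^ α / ((p+1) * α)) := by linarith
  -- increment bounds
  have hu0 : 0 ≤ x' ^ (p+1) - x ^ (p+1) := by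
    have := Real.rpow_le_rpow hx0.le hxx hp.le; linarith
  have hv0 : 0 ≤ y' ^ (q+1) - y ^ (q+1) := by
    have := Real.rpow_le_rpow (hc.trans_le hcy).le hyy hq.le; linarith
  have hua : (x' ^ (p+1) - x ^ (p+1)) ^ α ≤ ((p+1) * a ^ p) ^ α * (x' - x) ^ α := by
    rw [← Real.mul_rpow (by positivity) (by linarith)]
    exact Real.rpow_le_rpow hu0 (u_inc hp hp0 ha hax hxx) hα.le
  have hva : (y' ^ (q+1) - y ^ (q+1)) ^ β ≤ ((q+1) * c ^ q) ^ β * (y' - y) ^ β := by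
    rw [← Real.mul_rpow (by positivity) (by linarith)]
    exact Real.rpow_le_rpow hv0 (u_inc hq hq0 hc hcy hyy) hβ.le
  have hBa0 : (0:ℝ) ≤ (b ^ (p+1) - a ^ (p+1)) ^ α / ((p+1) * α) := by
    apply div_nonneg (Real.rpow_nonneg ?_ _) (by positivity)
    have := Real.rpow_le_rpow ha.le ((hax.trans hxx).trans hxb) hp.le; linarith
  have hTT : |(∫ s in a..x', kerF p α x' s * PhiF c q β F y' s)
      - ∫ s in a..x, kerF p α x s * PhiF c q β F y s| ≤
      2 * M * (((q+1) * c ^ q) ^ β * (y' - y) ^ β / ((q+1) * β))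
          * ((b ^ (p+1) - a ^ (p+1)) ^ α / ((p+1) * α))
      + 2 * MP * (((p+1) * a ^ p) ^ α * (x' - x) ^ α / ((p+1) * α)) := by
    rw [hdiff]
    refine (abs_add_le _ _).trans ?_
    have e1 : E * ((b ^ (p+1) - a ^ (p+1)) ^ α / ((p+1) * α)) ≤
        2 * M * (((q+1) * c ^ q) ^ β * (y' - y) ^ β / ((q+1) * β))
          * ((b ^ (p+1) - a ^ (p+1)) ^ α / ((p+1) * α)) := by
      apply mul_le_mul_of_nonneg_right _ hBa0
      rw [hEdef]
      have hcb : (0:ℝ) < (q+1) * β := by positivity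
      gcongr
    have e2 : MP * ((x' ^ (p+1) - x ^ (p+1)) ^ α / ((p+1) * α)) ≤
        MP * (((p+1) * a ^ p) ^ α * (x' - x) ^ α / ((p+1) * α)) := by
      have hca : (0:ℝ) < (p+1) * α := by positivity
      gcongr
    linarith [hT1, hT2]
  rw [mixedKI_eq F x' y', mixedKI_eq F x y, ← mul_sub, abs_mul,
    abs_of_nonneg (c0_pos hp hq hα hβ).le]
  calc c0 p q α β * |(∫ s in a..x', kerF p α x' s * PhiF c q β F y' s)
        - ∫ s in a..x, kerF p α x s * PhiF c q β F y s|
      ≤ c0 p q α β * (2 * M * (((q+1) * c ^ q) ^ β * (y' - y) ^ β / ((q+1) * β))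
          * ((b ^ (p+1) - a ^ (p+1)) ^ α / ((p+1) * α))
        + 2 * MP * (((p+1) * a ^ p) ^ α * (x' - x) ^ α / ((p+1) * α))) :=
        mul_le_mul_of_nonneg_left hTT (c0_pos hp hq hα hβ).le
    _ = c0 p q α β * (2 * MP * ((p+1) * a ^ p) ^ α / ((p+1) * α)) * (x' - x) ^ α
      + c0 p q α β * (2 * M * ((b ^ (p+1) - a ^ (p+1)) ^ α / ((p+1) * α)) *
          ((q+1) * c ^ q) ^ β / ((q+1) * β)) * (y' - y) ^ β := by ring

/-- Hölder condition of exponent `γ = min α β` for the mixed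
Katugampola fractional integral of a continuous function. -/
theorem mixedKI_holder (a b c d p q α β : ℝ)
    (ha : 0 < a) (hab : a < b) (hc : 0 < c) (hcd : c < d)
    (hp : -1 < p) (hp0 : p ≤ 0) (hq : -1 < q) (hq0 : q ≤ 0)
    (hα : 0 < α) (hα1 : α < 1) (hβ : 0 < β) (hβ1 : β < 1)
    (f : ℝ → ℝ → ℝ)
    (hf : ContinuousOn (fun pt : ℝ × ℝ => f pt.1 pt.2) (Icc a b ×ˢ Icc c d)) :
    ∃ C > 0, ∃ δ₀ > 0, ∀ x y h k : ℝ,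
      x ∈ Icc a b → y ∈ Icc c d → x + h ∈ Icc a b → y + k ∈ Icc c d →
      0 ≤ h → 0 ≤ k → h ≤ δ₀ → k ≤ δ₀ →
      |mixedKI a c p q α β f (x + h) (y + k) - mixedKI a c p q α β f x y| ≤
        C * Real.sqrt (h ^ 2 + k ^ 2) ^ (min α β) := by
  have hp1 : 0 < p + 1 := by linarith
  have hq1 : 0 < q + 1 := by linarith
  -- clamped extension
  set F : ℝ → ℝ → ℝ := fun s t => f (max a (min s b)) (max c (min t d)) with hFdef
  have hclamp : Continuous fun pt : ℝ × ℝ => F pt.1 pt.2 := by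
    have hg : Continuous fun pt : ℝ × ℝ =>
        ((max a (min pt.1 b), max c (min pt.2 d)) : ℝ × ℝ) := by fun_prop
    apply hf.comp_continuous hg
    intro pt
    refine ⟨⟨le_max_left _ _, max_le hab.le (min_le_right _ _)⟩,
      ⟨le_max_left _ _, max_le hcd.le (min_le_right _ _)⟩⟩
  have hFeq : ∀ s ∈ Icc a b, ∀ t ∈ Icc c d, F s t = f s t := by
    intro s hs t ht
    rw [hFdef]
    simp only [min_eq_left hs.2, max_eq_right hs.1, min_eq_left ht.2, max_eq_right ht.1]
  obtain ⟨B, hB⟩ := (isCompact_Icc.prod isCompact_Icc).exists_bound_of_continuousOn hf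
  set M : ℝ := max B 0 with hMdef
  have hM : ∀ s t, |F s t| ≤ M := by
    intro s t
    rw [hFdef]
    have := hB (max a (min s b), max c (min t d))
      ⟨⟨le_max_left _ _, max_le hab.le (min_le_right _ _)⟩,
        ⟨le_max_left _ _, max_le hcd.le (min_le_right _ _)⟩⟩
    rw [Real.norm_eq_abs] at this
    exact this.trans (le_max_left _ _)
  have hM0 : 0 ≤ M := le_max_right _ _
  have hcong : ∀ X ∈ Icc a b, ∀ Y ∈ Icc c d,
      mixedKI a c p q α β f X Y = mixedKI a c p q α β F X Y := by
    intro X hX Y hY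
    unfold mixedKI
    congr 1
    apply intervalIntegral.integral_congr
    intro s hs
    rw [uIcc_of_le hX.1] at hs
    simp only
    apply intervalIntegral.integral_congr
    intro t ht
    rw [uIcc_of_le hY.1] at ht
    simp only
    rw [hFeq s ⟨hs.1, hs.2.trans hX.2⟩ t ⟨ht.1, ht.2.trans hY.2⟩]
  set CH : ℝ := c0 p q α β * (2 * (M * ((d ^ (q+1) - c ^ (q+1)) ^ β / ((q+1) * β))) *
      ((p+1) * a ^ p) ^ α / ((p+1) * α)) with hCHdef
  set CK : ℝ := c0 p q α β * (2 * M * ((b ^ (p+1) - a ^ (p+1)) ^ α / ((p+1) * α)) *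
      ((q+1) * c ^ q) ^ β / ((q+1) * β)) with hCKdef
  have hc0 := c0_pos hp1 hq1 hα hβ
  have hdc : (0:ℝ) ≤ (d ^ (q+1) - c ^ (q+1)) ^ β := by
    apply Real.rpow_nonneg
    have := Real.rpow_le_rpow hc.le hcd.le hq1.le; linarith
  have hba : (0:ℝ) ≤ (b ^ (p+1) - a ^ (p+1)) ^ α := by
    apply Real.rpow_nonneg
    have := Real.rpow_le_rpow ha.le hab.le hp1.le; linarith
  have hCH0 : 0 ≤ CH := by
    rw [hCHdef]
    have h1 : (0:ℝ) ≤ ((p+1) * a ^ p) ^ α := Real.rpow_nonneg (by positivity) _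
    have h2 : (0:ℝ) ≤ (d ^ (q+1) - c ^ (q+1)) ^ β / ((q+1) * β) :=
      div_nonneg hdc (by positivity)
    positivity
  have hCK0 : 0 ≤ CK := by
    rw [hCKdef]
    have h1 : (0:ℝ) ≤ ((q+1) * c ^ q) ^ β := Real.rpow_nonneg (by positivity) _
    have h2 : (0:ℝ) ≤ (b ^ (p+1) - a ^ (p+1)) ^ α / ((p+1) * α) :=
      div_nonneg hba (by positivity)
    positivity
  refine ⟨CH + CK + 1, by linarith, 1/2, by norm_num, ?_⟩
  intro x y h k hx hy hxh hyk h0 k0 hhd hkd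
  have key := main_estimate (b := b) (d := d) ha hc hp1 hp0 hq1 hq0 hα hα1.le hβ hβ1.le
    hclamp hM hx.1 (le_add_of_nonneg_right h0) hxh.2 hy.1 (le_add_of_nonneg_right k0) hyk.2
  simp only [add_sub_cancel_left] at key
  rw [hcong (x+h) hxh (y+k) hyk, hcong x hx y hy]
  rw [← hCHdef, ← hCKdef] at key
  set r : ℝ := Real.sqrt (h ^ 2 + k ^ 2) with hrdef
  have hr0 : 0 ≤ r := Real.sqrt_nonneg _
  have hhr : h ≤ r := by
    rw [hrdef, ← Real.sqrt_sq h0]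
    apply Real.sqrt_le_sqrt
    rw [Real.sq_sqrt (by positivity)]
    nlinarith
  have hkr : k ≤ r := by
    rw [hrdef, ← Real.sqrt_sq k0]
    apply Real.sqrt_le_sqrt
    rw [Real.sq_sqrt (by positivity)]
    nlinarith
  have hrg0 : 0 ≤ r ^ (min α β) := Real.rpow_nonneg hr0 _
  rcases eq_or_lt_of_le hr0 with hrz | hrpos
  · have hh : h = 0 := le_antisymm (by rw [hrz]; exact hhr) h0
    have hk : k = 0 := le_antisymm (by rw [hrz]; exact hkr) k0
    rw [hh, hk]
    simp only [add_zero, sub_self, abs_zero]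
    exact mul_nonneg (by linarith) hrg0
  · have hr1 : r ≤ 1 := by
      rw [hrdef, show (1:ℝ) = Real.sqrt 1 by rw [Real.sqrt_one]]
      apply Real.sqrt_le_sqrt
      nlinarith
    have hhα : h ^ α ≤ r ^ (min α β) :=
      (Real.rpow_le_rpow h0 hhr hα.le).trans
        (Real.rpow_le_rpow_of_exponent_ge hrpos hr1 (min_le_left _ _))
    have hkβ : k ^ β ≤ r ^ (min α β) :=
      (Real.rpow_le_rpow k0 hkr hβ.le).trans
        (Real.rpow_le_rpow_of_exponent_ge hrpos hr1 (min_le_right _ _))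
    refine key.trans ?_
    have e1 : CH * h ^ α ≤ CH * r ^ (min α β) := mul_le_mul_of_nonneg_left hhα hCH0
    have e2 : CK * k ^ β ≤ CK * r ^ (min α β) := mul_le_mul_of_nonneg_left hkβ hCK0
    linarith
end

section
/- Let 0 < a < b < ∞, 0 < c < d < ∞, -1 < p, q ≤ 0 and α, β ≥ 1. If f : [a,b] × [c,d] → ℝ is continuous, then dim_H(G(I f)) = dim_B(G(I f)) = 2, where I f is the mixed Katugampola fractional integral of f. -/
open MeasureTheory Set Filter
open scoped Classical

open scoped Topology
open scoped Interval

namespace KatAux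
set_option maxHeartbeats 1000000

/-- MVT bound: `v^α - u^α ≤ α v^(α-1) (v-u)` for `0 ≤ u ≤ v`, `1 ≤ α`. -/
lemma rpow_sub_rpow_le (u v α : ℝ) (hu : 0 ≤ u) (huv : u ≤ v) (hα : 1 ≤ α) :
    v ^ α - u ^ α ≤ α * v ^ (α - 1) * (v - u) := by
  rcases eq_or_lt_of_le huv with rfl | h
  · simp
  have hcont : ContinuousOn (fun w : ℝ => w ^ α) (Icc u v) := fun w _ =>
    (Real.continuousAt_rpow_const w α (Or.inr (by linarith))).continuousWithinAt
  have hder : ∀ w ∈ Ioo u v, HasDerivAt (fun w : ℝ => w ^ α) (α * w ^ (α - 1)) w := fun w _ =>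
    Real.hasDerivAt_rpow_const (Or.inr hα)
  obtain ⟨e, he, hsl⟩ := exists_hasDerivAt_eq_slope (fun w : ℝ => w ^ α)
    (fun w => α * w ^ (α - 1)) h hcont hder
  have he0 : 0 ≤ e := le_trans hu he.1.le
  have hev : e ^ (α - 1) ≤ v ^ (α - 1) :=
    Real.rpow_le_rpow he0 he.2.le (by linarith)
  have hvu : (0:ℝ) < v - u := by linarith
  have hq : v ^ α - u ^ α = α * e ^ (α - 1) * (v - u) := by
    rw [hsl]; field_simp
  rw [hq]
  have hα0 : (0:ℝ) ≤ α := by linarith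
  exact mul_le_mul_of_nonneg_right (mul_le_mul_of_nonneg_left hev hα0) (by linarith)

/-- MVT bound: `x₂^(p+1) - x₁^(p+1) ≤ (p+1) a^p (x₂ - x₁)` for `0 < a ≤ x₁ ≤ x₂`, `-1 < p ≤ 0`. -/
lemma rpow_base_sub_le (a x₁ x₂ p : ℝ) (ha : 0 < a) (h1 : a ≤ x₁) (h12 : x₁ ≤ x₂)
    (hp : -1 < p) (hp0 : p ≤ 0) :
    x₂ ^ (p+1) - x₁ ^ (p+1) ≤ (p+1) * a ^ p * (x₂ - x₁) := by
  rcases eq_or_lt_of_le h12 with rfl | h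
  · simp
  have hcont : ContinuousOn (fun w : ℝ => w ^ (p+1)) (Icc x₁ x₂) := by
    intro w hw
    have hw0 : w ≠ 0 := by have := hw.1; intro h0; rw [h0] at this; linarith
    exact (Real.continuousAt_rpow_const w (p+1) (Or.inl hw0)).continuousWithinAt
  have hder : ∀ w ∈ Ioo x₁ x₂,
      HasDerivAt (fun w : ℝ => w ^ (p+1)) ((p+1) * w ^ p) w := by
    intro w hw
    have hw0 : w ≠ 0 := by have := hw.1; intro h0; rw [h0] at this; linarith
    have := Real.hasDerivAt_rpow_const (x := w) (p := p + 1) (Or.inl hw0)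
    simpa [add_sub_cancel_right] using this
  obtain ⟨e, he, hsl⟩ := exists_hasDerivAt_eq_slope (fun w : ℝ => w ^ (p+1))
    (fun w => (p+1) * w ^ p) h hcont hder
  have hea : a ≤ e := le_trans h1 he.1.le
  have hev : e ^ p ≤ a ^ p := Real.rpow_le_rpow_of_nonpos ha hea hp0
  have hvu : (0:ℝ) < x₂ - x₁ := by linarith
  have hq : x₂ ^ (p+1) - x₁ ^ (p+1) = (p+1) * e ^ p * (x₂ - x₁) := by
    rw [hsl]; field_simp
  rw [hq]
  have hp1 : (0:ℝ) < p + 1 := by linarith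
  exact mul_le_mul_of_nonneg_right (mul_le_mul_of_nonneg_left hev hp1.le) (by linarith)

/-- Continuity of the Katugampola kernel times `s^p`. -/
lemma contOn_kernel (a w x p α : ℝ) (ha : 0 < a) (hα : 1 ≤ α) :
    ContinuousOn (fun s : ℝ => (x ^ (p+1) - s ^ (p+1)) ^ (α-1) * s ^ p) (Icc a w) := by
  intro s hs
  have hs0 : s ≠ 0 := by have := hs.1; intro h0; rw [h0] at this; linarith
  have c1 : ContinuousAt (fun s : ℝ => s ^ (p+1)) s :=
    Real.continuousAt_rpow_const s (p+1) (Or.inl hs0)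
  have c2 : ContinuousAt (fun s : ℝ => x ^ (p+1) - s ^ (p+1)) s := continuousAt_const.sub c1
  have c3 : ContinuousAt (fun u : ℝ => u ^ (α-1)) (x ^ (p+1) - s ^ (p+1)) :=
    Real.continuousAt_rpow_const _ (α-1) (Or.inr (by linarith))
  exact ((c2.rpow_const (Or.inr (by linarith))).mul
    (Real.continuousAt_rpow_const s p (Or.inl hs0))).continuousWithinAt

/-- FTC evaluation of the kernel integral. -/
lemma integral_kernel (a w x p α : ℝ) (ha : 0 < a) (haw : a ≤ w) (hwx : w ≤ x)
    (hp : -1 < p) (hα : 1 ≤ α) :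
    ∫ s in a..w, (x ^ (p+1) - s ^ (p+1)) ^ (α-1) * s ^ p
      = ((x ^ (p+1) - a ^ (p+1)) ^ α - (x ^ (p+1) - w ^ (p+1)) ^ α) / (α * (p+1)) := by
  have hp1 : (0:ℝ) < p + 1 := by linarith
  have hα0 : (0:ℝ) < α := by linarith
  have key : ∀ s ∈ uIcc a w,
      HasDerivAt (fun s : ℝ => -(x ^ (p+1) - s ^ (p+1)) ^ α / (α * (p+1)))
        ((x ^ (p+1) - s ^ (p+1)) ^ (α-1) * s ^ p) s := by
    intro s hs
    rw [uIcc_of_le haw] at hs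
    have hs0 : s ≠ 0 := by have := hs.1; intro h0; rw [h0] at this; linarith
    have h1 : HasDerivAt (fun s : ℝ => s ^ (p+1)) ((p+1) * s ^ p) s := by
      have := Real.hasDerivAt_rpow_const (x := s) (p := p + 1) (Or.inl hs0)
      simpa [add_sub_cancel_right] using this
    have h2 : HasDerivAt (fun s : ℝ => x ^ (p+1) - s ^ (p+1)) (-((p+1) * s ^ p)) s :=
      h1.const_sub _
    have h3 : HasDerivAt (fun u : ℝ => u ^ α)
        (α * (x ^ (p+1) - s ^ (p+1)) ^ (α-1)) (x ^ (p+1) - s ^ (p+1)) :=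
      Real.hasDerivAt_rpow_const (Or.inr hα)
    have h4 := h3.comp s h2
    have h5 := (h4.div_const (α * (p+1))).neg
    refine (h5.congr_of_eventuallyEq (Filter.Eventually.of_forall fun r => ?_)).congr_deriv (Eq.symm ?_)
    · simp [Function.comp, neg_div]
    have hne : α * (p + 1) ≠ 0 := by positivity
    have hrw : -(α * (x ^ (p+1) - s ^ (p+1)) ^ (α-1) * -((p+1) * s ^ p) / (α * (p+1)))
        = α * (x ^ (p+1) - s ^ (p+1)) ^ (α-1) * ((p+1) * s ^ p) / (α * (p+1)) := by
      ring
    rw [hrw, eq_div_iff hne]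
    ring
  rw [intervalIntegral.integral_eq_sub_of_hasDerivAt key
    (((contOn_kernel a w x p α ha hα).mono (by rw [uIcc_of_le haw])).intervalIntegrable)]
  have hww : x ^ (p+1) - w ^ (p+1) = x ^ (p+1) - w ^ (p+1) := rfl
  ring

/-- Key Lipschitz estimate for the univariate Katugampola-type integral. -/
lemma lipJ (a b p α : ℝ) (ha : 0 < a) (hp : -1 < p) (hp0 : p ≤ 0) (hα : 1 ≤ α)
    (h : ℝ → ℝ) (M : ℝ) (hM : ∀ s ∈ Icc a b, |h s| ≤ M)
    (hcont : ContinuousOn h (Icc a b))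
    (x₁ x₂ : ℝ) (hx₁ : a ≤ x₁) (hx : x₁ ≤ x₂) (hx₂ : x₂ ≤ b) :
    |(∫ s in a..x₂, (x₂ ^ (p+1) - s ^ (p+1)) ^ (α-1) * s ^ p * h s)
      - ∫ s in a..x₁, (x₁ ^ (p+1) - s ^ (p+1)) ^ (α-1) * s ^ p * h s|
      ≤ 2 * M * (b ^ (p+1)) ^ (α-1) * a ^ p * (x₂ - x₁) := by
  have hab : a ≤ b := le_trans hx₁ (le_trans hx hx₂)
  have hb : 0 < b := lt_of_lt_of_le ha hab
  have hax₂ : a ≤ x₂ := le_trans hx₁ hx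
  have hα0 : (0:ℝ) < α := by linarith
  have hα1 : (0:ℝ) ≤ α - 1 := by linarith
  have hp1 : (0:ℝ) < p + 1 := by linarith
  have hM0 : 0 ≤ M := le_trans (abs_nonneg _) (hM a ⟨le_rfl, hab⟩)
  set K₀ : ℝ := (b ^ (p+1)) ^ (α-1) with hK₀def
  have hK₀ : 0 ≤ K₀ := Real.rpow_nonneg (Real.rpow_nonneg hb.le _) _
  have hap : 0 < a ^ p := Real.rpow_pos_of_pos ha p
  -- kernel facts
  have kfact : ∀ x s : ℝ, a ≤ s → s ≤ x → x ≤ b →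
      0 ≤ (x ^ (p+1) - s ^ (p+1)) ^ (α-1) ∧ (x ^ (p+1) - s ^ (p+1)) ^ (α-1) ≤ K₀ := by
    intro x s has hsx hxb
    have hs0 : (0:ℝ) ≤ s := le_trans ha.le has
    have h1 : s ^ (p+1) ≤ x ^ (p+1) := Real.rpow_le_rpow hs0 hsx hp1.le
    have h2 : x ^ (p+1) ≤ b ^ (p+1) := Real.rpow_le_rpow (le_trans hs0 hsx) hxb hp1.le
    have h3 : (0:ℝ) ≤ s ^ (p+1) := Real.rpow_nonneg hs0 _
    refine ⟨Real.rpow_nonneg (by linarith) _, ?_⟩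
    exact Real.rpow_le_rpow (by linarith) (by linarith) hα1
  have spfact : ∀ s : ℝ, a ≤ s → 0 < s ^ p ∧ s ^ p ≤ a ^ p := by
    intro s has
    exact ⟨Real.rpow_pos_of_pos (lt_of_lt_of_le ha has) p,
      Real.rpow_le_rpow_of_nonpos ha has hp0⟩
  -- integrands
  set G₂ : ℝ → ℝ := fun s => (x₂ ^ (p+1) - s ^ (p+1)) ^ (α-1) * s ^ p * h s with hG₂
  set G₁ : ℝ → ℝ := fun s => (x₁ ^ (p+1) - s ^ (p+1)) ^ (α-1) * s ^ p * h s with hG₁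
  have c₂ : ContinuousOn G₂ (Icc a x₂) :=
    (contOn_kernel a x₂ x₂ p α ha hα).mul (hcont.mono (Icc_subset_Icc le_rfl hx₂))
  have c₁ : ContinuousOn G₁ (Icc a x₁) :=
    (contOn_kernel a x₁ x₁ p α ha hα).mul
      (hcont.mono (Icc_subset_Icc le_rfl (le_trans hx hx₂)))
  have i₂ : IntervalIntegrable G₂ volume a x₂ :=
    (c₂.mono (by rw [uIcc_of_le hax₂])).intervalIntegrable
  have i₂1 : IntervalIntegrable G₂ volume a x₁ :=
    i₂.mono_set (by rw [uIcc_of_le hx₁, uIcc_of_le hax₂]; exact Icc_subset_Icc le_rfl hx)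
  have i₂2 : IntervalIntegrable G₂ volume x₁ x₂ :=
    i₂.mono_set (by rw [uIcc_of_le hx, uIcc_of_le hax₂]; exact Icc_subset_Icc hx₁ le_rfl)
  have i₁ : IntervalIntegrable G₁ volume a x₁ :=
    (c₁.mono (by rw [uIcc_of_le hx₁])).intervalIntegrable
  have split : (∫ s in a..x₂, G₂ s) - (∫ s in a..x₁, G₁ s)
      = (∫ s in a..x₁, (G₂ s - G₁ s)) + ∫ s in x₁..x₂, G₂ s := by
    rw [intervalIntegral.integral_sub i₂1 i₁,
      ← intervalIntegral.integral_add_adjacent_intervals i₂1 i₂2]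
    ring
  rw [split]
  refine le_trans (abs_add_le _ _) ?_
  -- second term
  have term2 : |∫ s in x₁..x₂, G₂ s| ≤ K₀ * a ^ p * M * (x₂ - x₁) := by
    have hb2 : ∀ s ∈ Ι x₁ x₂, ‖G₂ s‖ ≤ K₀ * a ^ p * M := by
      intro s hs
      rw [uIoc_of_le hx] at hs
      have has : a ≤ s := le_trans hx₁ hs.1.le
      obtain ⟨k0, kle⟩ := kfact x₂ s has hs.2 hx₂
      obtain ⟨sp0, sple⟩ := spfact s has
      have hhs : |h s| ≤ M := hM s ⟨has, le_trans hs.2 hx₂⟩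
      rw [Real.norm_eq_abs, hG₂]
      rw [abs_mul, abs_mul, abs_of_nonneg k0, abs_of_nonneg sp0.le]
      exact mul_le_mul (mul_le_mul kle sple sp0.le hK₀) hhs (abs_nonneg _)
        (by positivity)
    have := intervalIntegral.norm_integral_le_of_norm_le_const hb2
    rw [Real.norm_eq_abs, abs_of_nonneg (by linarith : (0:ℝ) ≤ x₂ - x₁)] at this
    exact this
  -- first term
  have term1 : |∫ s in a..x₁, (G₂ s - G₁ s)| ≤ M * (K₀ * a ^ p * (x₂ - x₁)) := by
    have habs : |∫ s in a..x₁, (G₂ s - G₁ s)| ≤ ∫ s in a..x₁, |G₂ s - G₁ s| := by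
      simpa [Real.norm_eq_abs] using
        intervalIntegral.norm_integral_le_integral_norm (f := fun s => G₂ s - G₁ s)
          (μ := volume) (a := a) (b := x₁) hx₁
    refine le_trans habs ?_
    set bnd : ℝ → ℝ := fun s => ((x₂ ^ (p+1) - s ^ (p+1)) ^ (α-1) * s ^ p
      - (x₁ ^ (p+1) - s ^ (p+1)) ^ (α-1) * s ^ p) * M with hbnd
    have hptw : ∀ s ∈ Icc a x₁, |G₂ s - G₁ s| ≤ bnd s := by
      intro s hs
      have has : a ≤ s := hs.1
      have hsx₁ : s ≤ x₁ := hs.2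
      obtain ⟨k20, k2le⟩ := kfact x₂ s has (le_trans hsx₁ hx) hx₂
      obtain ⟨k10, k1le⟩ := kfact x₁ s has hsx₁ (le_trans hx hx₂)
      obtain ⟨sp0, sple⟩ := spfact s has
      have hK12 : (x₁ ^ (p+1) - s ^ (p+1)) ^ (α-1) ≤ (x₂ ^ (p+1) - s ^ (p+1)) ^ (α-1) := by
        have hs0 : (0:ℝ) ≤ s := le_trans ha.le has
        have hm : x₁ ^ (p+1) ≤ x₂ ^ (p+1) :=
          Real.rpow_le_rpow (le_trans hs0 hsx₁) hx hp1.le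
        have h1 : s ^ (p+1) ≤ x₁ ^ (p+1) := Real.rpow_le_rpow hs0 hsx₁ hp1.le
        exact Real.rpow_le_rpow (by linarith) (by linarith) hα1
      have e1 : G₂ s - G₁ s = ((x₂ ^ (p+1) - s ^ (p+1)) ^ (α-1) * s ^ p
          - (x₁ ^ (p+1) - s ^ (p+1)) ^ (α-1) * s ^ p) * h s := by
        rw [hG₂, hG₁]; ring
      rw [e1, hbnd, abs_mul,
        abs_of_nonneg (sub_nonneg.mpr (mul_le_mul_of_nonneg_right hK12 sp0.le))]
      exact mul_le_mul_of_nonneg_left (hM s ⟨has, le_trans hsx₁ (le_trans hx hx₂)⟩)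
        (sub_nonneg.mpr (mul_le_mul_of_nonneg_right hK12 sp0.le))
    have ibnd : IntervalIntegrable bnd volume a x₁ := by
      apply ContinuousOn.intervalIntegrable
      rw [uIcc_of_le hx₁]
      exact (((contOn_kernel a x₁ x₂ p α ha hα).sub
        (contOn_kernel a x₁ x₁ p α ha hα)).mul continuousOn_const)
    have iabs : IntervalIntegrable (fun s => |G₂ s - G₁ s|) volume a x₁ :=
      (i₂1.sub i₁).abs
    have hmono := intervalIntegral.integral_mono_on hx₁ iabs ibnd hptw
    refine le_trans hmono ?_
    -- compute ∫ bnd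
    have ik₂ : IntervalIntegrable (fun s => (x₂ ^ (p+1) - s ^ (p+1)) ^ (α-1) * s ^ p)
        volume a x₁ := by
      apply ContinuousOn.intervalIntegrable
      rw [uIcc_of_le hx₁]; exact contOn_kernel a x₁ x₂ p α ha hα
    have ik₁ : IntervalIntegrable (fun s => (x₁ ^ (p+1) - s ^ (p+1)) ^ (α-1) * s ^ p)
        volume a x₁ := by
      apply ContinuousOn.intervalIntegrable
      rw [uIcc_of_le hx₁]; exact contOn_kernel a x₁ x₁ p α ha hα
    have ev : (∫ s in a..x₁, bnd s) = ((∫ s in a..x₁, (x₂ ^ (p+1) - s ^ (p+1)) ^ (α-1) * s ^ p)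
        - ∫ s in a..x₁, (x₁ ^ (p+1) - s ^ (p+1)) ^ (α-1) * s ^ p) * M := by
      rw [hbnd]
      rw [intervalIntegral.integral_mul_const, intervalIntegral.integral_sub ik₂ ik₁]
    rw [ev, integral_kernel a x₁ x₂ p α ha hx₁ hx hp hα,
      integral_kernel a x₁ x₁ p α ha hx₁ le_rfl hp hα]
    have hz : (x₁ ^ (p+1) - x₁ ^ (p+1)) ^ α = 0 := by
      rw [sub_self]; exact Real.zero_rpow (by linarith)
    rw [hz]
    -- now pure algebra/inequalities
    set A₂ : ℝ := (x₂ ^ (p+1) - a ^ (p+1)) ^ α with hA₂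
    set A₁ : ℝ := (x₁ ^ (p+1) - a ^ (p+1)) ^ α with hA₁
    set W : ℝ := (x₂ ^ (p+1) - x₁ ^ (p+1)) ^ α with hW
    have ha0 : (0:ℝ) ≤ a := ha.le
    have hr1 : a ^ (p+1) ≤ x₁ ^ (p+1) := Real.rpow_le_rpow ha0 hx₁ hp1.le
    have hr2 : x₁ ^ (p+1) ≤ x₂ ^ (p+1) :=
      Real.rpow_le_rpow (le_trans ha0 hx₁) hx hp1.le
    have hr3 : x₂ ^ (p+1) ≤ b ^ (p+1) :=
      Real.rpow_le_rpow (le_trans (le_trans ha0 hx₁) hx) hx₂ hp1.le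
    have hWnn : 0 ≤ W := Real.rpow_nonneg (by linarith) _
    have hKb : (x₂ ^ (p+1) - a ^ (p+1)) ^ (α-1) ≤ K₀ := by
      have h3 : (0:ℝ) ≤ a ^ (p+1) := Real.rpow_nonneg ha0 _
      exact Real.rpow_le_rpow (by linarith) (by linarith) hα1
    have hA := rpow_sub_rpow_le (x₁ ^ (p+1) - a ^ (p+1)) (x₂ ^ (p+1) - a ^ (p+1)) α
      (by linarith) (by linarith) hα
    have hB := rpow_base_sub_le a x₁ x₂ p ha hx₁ hx hp hp0
    have s1 : α * (x₂ ^ (p+1) - a ^ (p+1)) ^ (α-1) * (x₂ ^ (p+1) - x₁ ^ (p+1))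
        ≤ α * K₀ * ((p+1) * a ^ p * (x₂ - x₁)) := by
      refine mul_le_mul (mul_le_mul_of_nonneg_left hKb hα0.le) hB (by linarith) ?_
      positivity
    have hAA : A₂ - A₁ ≤ α * K₀ * ((p+1) * a ^ p * (x₂ - x₁)) := by
      rw [hA₂, hA₁]
      have : (x₂ ^ (p+1) - a ^ (p+1)) - (x₁ ^ (p+1) - a ^ (p+1))
          = x₂ ^ (p+1) - x₁ ^ (p+1) := by ring
      linarith [hA, s1]
    have hfin : ((A₂ - W) / (α * (p+1)) - (A₁ - 0) / (α * (p+1))) ≤ K₀ * a ^ p * (x₂ - x₁) := by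
      rw [div_sub_div_same, div_le_iff₀ (by positivity)]
      linarith [hAA, hWnn]
    calc ((A₂ - W) / (α * (p+1)) - (A₁ - 0) / (α * (p+1))) * M
          ≤ (K₀ * a ^ p * (x₂ - x₁)) * M := mul_le_mul_of_nonneg_right hfin hM0
      _ = M * (K₀ * a ^ p * (x₂ - x₁)) := by ring
  calc |∫ s in a..x₁, (G₂ s - G₁ s)| + |∫ s in x₁..x₂, G₂ s|
      ≤ M * (K₀ * a ^ p * (x₂ - x₁)) + K₀ * a ^ p * M * (x₂ - x₁) := add_le_add term1 term2
    _ = 2 * M * K₀ * a ^ p * (x₂ - x₁) := by ring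

/-- Pointwise bound for the kernel times power. -/
lemma kernel_ptw_bound (a b x p α : ℝ) (ha : 0 < a) (hp : -1 < p) (hp0 : p ≤ 0) (hα : 1 ≤ α)
    (s : ℝ) (has : a ≤ s) (hsx : s ≤ x) (hxb : x ≤ b) :
    0 ≤ (x ^ (p+1) - s ^ (p+1)) ^ (α-1) ∧
    (x ^ (p+1) - s ^ (p+1)) ^ (α-1) ≤ (b ^ (p+1)) ^ (α-1) ∧
    0 < s ^ p ∧ s ^ p ≤ a ^ p := by
  have hp1 : (0:ℝ) < p + 1 := by linarith
  have hs0 : (0:ℝ) ≤ s := le_trans ha.le has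
  have h1 : s ^ (p+1) ≤ x ^ (p+1) := Real.rpow_le_rpow hs0 hsx hp1.le
  have h2 : x ^ (p+1) ≤ b ^ (p+1) := Real.rpow_le_rpow (le_trans hs0 hsx) hxb hp1.le
  have h3 : (0:ℝ) ≤ s ^ (p+1) := Real.rpow_nonneg hs0 _
  exact ⟨Real.rpow_nonneg (by linarith) _,
    Real.rpow_le_rpow (by linarith) (by linarith) (by linarith),
    Real.rpow_pos_of_pos (lt_of_lt_of_le ha has) p,
    Real.rpow_le_rpow_of_nonpos ha has hp0⟩

section Main

variable (a b c d p q α β : ℝ) (f : ℝ → ℝ → ℝ)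

/-- The inner (in `t`) integral. -/
noncomputable def FF (s y : ℝ) : ℝ :=
  ∫ t in c..y, (y ^ (q+1) - t ^ (q+1)) ^ (β-1) * t ^ q * f s t

lemma mixedKI_eq_outer (x y : ℝ) :
    mixedKI a c p q α β f x y
      = ((p + 1) ^ (1 - α) * (q + 1) ^ (1 - β) / (Real.Gamma α * Real.Gamma β)) *
        ∫ s in a..x, (x ^ (p+1) - s ^ (p+1)) ^ (α-1) * s ^ p * FF c q β f s y := by
  unfold mixedKI FF
  congr 1
  apply intervalIntegral.integral_congr
  intro s _
  have hrw : (fun t => (x ^ (p + 1) - s ^ (p + 1)) ^ (α - 1) * (y ^ (q + 1) - t ^ (q + 1)) ^ (β - 1)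
        * s ^ p * t ^ q * f s t)
      = fun t => ((x ^ (p + 1) - s ^ (p + 1)) ^ (α - 1) * s ^ p) *
          ((y ^ (q + 1) - t ^ (q + 1)) ^ (β - 1) * t ^ q * f s t) := by
    funext t; ring
  show (∫ t in c..y, (x ^ (p + 1) - s ^ (p + 1)) ^ (α - 1) * (y ^ (q + 1) - t ^ (q + 1)) ^ (β - 1)
        * s ^ p * t ^ q * f s t) = _
  rw [hrw, intervalIntegral.integral_const_mul]

/-- mixedKI is bounded and Lipschitz on the rectangle. -/
lemma mixedKI_bound_lip (ha : 0 < a) (hab : a < b) (hc : 0 < c) (hcd : c < d)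
    (hp : -1 < p) (hp0 : p ≤ 0) (hq : -1 < q) (hq0 : q ≤ 0) (hα : 1 ≤ α) (hβ : 1 ≤ β)
    (hf : ContinuousOn (fun pt : ℝ × ℝ => f pt.1 pt.2) (Icc a b ×ˢ Icc c d)) :
    ∃ L > 0, ∃ B : ℝ, (∀ x ∈ Icc a b, ∀ y ∈ Icc c d, |mixedKI a c p q α β f x y| ≤ B) ∧
      ∀ x ∈ Icc a b, ∀ y ∈ Icc c d, ∀ x' ∈ Icc a b, ∀ y' ∈ Icc c d,
        |mixedKI a c p q α β f x' y' - mixedKI a c p q α β f x y|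
          ≤ L * (|x' - x| + |y' - y|) := by
  have hq1 : (0:ℝ) < q + 1 := by linarith
  have hβ1 : (0:ℝ) ≤ β - 1 := by linarith
  set C₀ : ℝ := (p + 1) ^ (1 - α) * (q + 1) ^ (1 - β) / (Real.Gamma α * Real.Gamma β) with hC₀
  -- bound on f
  obtain ⟨M₀, hM₀⟩ := (isCompact_Icc.prod isCompact_Icc).exists_bound_of_continuousOn hf
  set M : ℝ := max M₀ 0 with hMdef
  have hM0 : 0 ≤ M := le_max_right _ _
  have hM : ∀ s ∈ Icc a b, ∀ t ∈ Icc c d, |f s t| ≤ M := by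
    intro s hs t ht
    exact le_trans (hM₀ (s, t) (Set.mk_mem_prod hs ht)) (le_max_left _ _)
  -- continuity of f in second variable
  have hfs : ∀ s ∈ Icc a b, ContinuousOn (fun t => f s t) (Icc c d) := by
    intro s hs
    have : ContinuousOn ((fun pt : ℝ × ℝ => f pt.1 pt.2) ∘ (fun t => (s, t))) (Icc c d) :=
      hf.comp (Continuous.continuousOn (by fun_prop))
        (fun t ht => Set.mk_mem_prod hs ht)
    exact this
  set K₀ : ℝ := (b ^ (p+1)) ^ (α-1) with hK₀def
  set L₀ : ℝ := (d ^ (q+1)) ^ (β-1) with hL₀def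
  have hK₀ : 0 ≤ K₀ := Real.rpow_nonneg (Real.rpow_nonneg (by linarith) _) _
  have hL₀ : 0 ≤ L₀ := Real.rpow_nonneg (Real.rpow_nonneg (by linarith) _) _
  have hap : 0 < a ^ p := Real.rpow_pos_of_pos ha p
  have hcq : 0 < c ^ q := Real.rpow_pos_of_pos hc q
  -- bound on FF
  set MF : ℝ := L₀ * c ^ q * M * (d - c) with hMFdef
  have hMF0 : 0 ≤ MF := by
    have : (0:ℝ) ≤ d - c := by linarith
    positivity
  have hMF : ∀ s ∈ Icc a b, ∀ y ∈ Icc c d, |FF c q β f s y| ≤ MF := by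
    intro s hs y hy
    have hptw : ∀ t ∈ Ι c y, ‖(y ^ (q+1) - t ^ (q+1)) ^ (β-1) * t ^ q * f s t‖
        ≤ L₀ * c ^ q * M := by
      intro t ht
      rw [uIoc_of_le hy.1] at ht
      obtain ⟨k0, kle, sp0, sple⟩ := kernel_ptw_bound c d y q β hc hq hq0 hβ t ht.1.le ht.2
        hy.2
      have hft : |f s t| ≤ M := hM s hs t ⟨ht.1.le, le_trans ht.2 hy.2⟩
      rw [Real.norm_eq_abs, abs_mul, abs_mul, abs_of_nonneg k0, abs_of_nonneg sp0.le]
      exact mul_le_mul (mul_le_mul kle sple sp0.le hL₀) hft (abs_nonneg _) (by positivity)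
    have := intervalIntegral.norm_integral_le_of_norm_le_const hptw
    rw [Real.norm_eq_abs] at this
    refine le_trans this ?_
    rw [abs_of_nonneg (by linarith [hy.1] : (0:ℝ) ≤ y - c)]
    have h1 : y - c ≤ d - c := by linarith [hy.2]
    exact mul_le_mul_of_nonneg_left h1 (by positivity)
  -- Lipschitz of FF in y
  set Ly : ℝ := 2 * M * L₀ * c ^ q with hLydef
  have hLy0 : 0 ≤ Ly := by positivity
  have hFlip : ∀ s ∈ Icc a b, ∀ y₁ ∈ Icc c d, ∀ y₂ ∈ Icc c d, y₁ ≤ y₂ →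
      |FF c q β f s y₂ - FF c q β f s y₁| ≤ Ly * (y₂ - y₁) := by
    intro s hs y₁ hy₁ y₂ hy₂ h12
    have := lipJ c d q β hc hq hq0 hβ (fun t => f s t) M
      (fun t ht => hM s hs t ht) (hfs s hs) y₁ y₂ hy₁.1 h12 hy₂.2
    unfold FF
    calc |(∫ t in c..y₂, (y₂ ^ (q+1) - t ^ (q+1)) ^ (β-1) * t ^ q * f s t)
        - ∫ t in c..y₁, (y₁ ^ (q+1) - t ^ (q+1)) ^ (β-1) * t ^ q * f s t|
        ≤ 2 * M * (d ^ (q+1)) ^ (β-1) * c ^ q * (y₂ - y₁) := this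
      _ = Ly * (y₂ - y₁) := by rw [hLydef, hL₀def]
  -- continuity of FF in s
  have hFc : ∀ y ∈ Icc c d, ContinuousOn (fun s => FF c q β f s y) (Icc a b) := by
    intro y hy
    have hui := (isCompact_Icc.prod isCompact_Icc).uniformContinuousOn_of_continuous hf
    rw [Metric.uniformContinuousOn_iff] at hui
    intro s₀ hs₀
    rw [Metric.continuousWithinAt_iff]
    intro ε hε
    set R : ℝ := L₀ * c ^ q * (d - c) with hRdef
    have hR0 : 0 ≤ R := by
      have : (0:ℝ) ≤ d - c := by linarith
      positivity
    set ε' : ℝ := ε / (R + 1) with hε'def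
    have hε'pos : 0 < ε' := by positivity
    obtain ⟨δ, hδ, huc⟩ := hui ε' hε'pos
    refine ⟨δ, hδ, ?_⟩
    intro s hs hdist
    rw [Real.dist_eq]
    have hint : ∀ s' ∈ Icc a b, IntervalIntegrable
        (fun t => (y ^ (q+1) - t ^ (q+1)) ^ (β-1) * t ^ q * f s' t) volume c y := by
      intro s' hs'
      apply ContinuousOn.intervalIntegrable
      rw [uIcc_of_le hy.1]
      exact (contOn_kernel c y y q β hc hβ).mul
        ((hfs s' hs').mono (Icc_subset_Icc le_rfl hy.2))
    have hsub : FF c q β f s y - FF c q β f s₀ y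
        = ∫ t in c..y, ((y ^ (q+1) - t ^ (q+1)) ^ (β-1) * t ^ q * f s t
            - (y ^ (q+1) - t ^ (q+1)) ^ (β-1) * t ^ q * f s₀ t) := by
      unfold FF
      rw [intervalIntegral.integral_sub (hint s hs) (hint s₀ hs₀)]
    rw [hsub]
    have hptw : ∀ t ∈ Ι c y, ‖(y ^ (q+1) - t ^ (q+1)) ^ (β-1) * t ^ q * f s t
        - (y ^ (q+1) - t ^ (q+1)) ^ (β-1) * t ^ q * f s₀ t‖ ≤ L₀ * c ^ q * ε' := by
      intro t ht
      rw [uIoc_of_le hy.1] at ht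
      obtain ⟨k0, kle, sp0, sple⟩ := kernel_ptw_bound c d y q β hc hq hq0 hβ t ht.1.le ht.2
        hy.2
      have htcd : t ∈ Icc c d := ⟨ht.1.le, le_trans ht.2 hy.2⟩
      have hfd : dist (f s t) (f s₀ t) < ε' := by
        have := huc (s, t) (Set.mk_mem_prod hs htcd) (s₀, t) (Set.mk_mem_prod hs₀ htcd)
          (by
            rw [Prod.dist_eq]
            simp only [dist_self]
            rw [max_eq_left dist_nonneg]
            exact hdist)
        exact this
      rw [Real.dist_eq] at hfd
      have heq : (y ^ (q+1) - t ^ (q+1)) ^ (β-1) * t ^ q * f s t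
          - (y ^ (q+1) - t ^ (q+1)) ^ (β-1) * t ^ q * f s₀ t
          = ((y ^ (q+1) - t ^ (q+1)) ^ (β-1) * t ^ q) * (f s t - f s₀ t) := by ring
      rw [Real.norm_eq_abs, heq, abs_mul, abs_mul, abs_of_nonneg k0, abs_of_nonneg sp0.le]
      exact mul_le_mul (mul_le_mul kle sple sp0.le hL₀) hfd.le (abs_nonneg _) (by positivity)
    have hle := intervalIntegral.norm_integral_le_of_norm_le_const hptw
    rw [Real.norm_eq_abs] at hle
    refine lt_of_le_of_lt hle ?_
    have h1 : L₀ * c ^ q * ε' * |y - c| ≤ R * ε' := by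
      rw [hRdef, abs_of_nonneg (by linarith [hy.1] : (0:ℝ) ≤ y - c)]
      have h2 : |y - c| ≤ d - c := by
        rw [abs_of_nonneg (by linarith [hy.1] : (0:ℝ) ≤ y - c)]; linarith [hy.2]
      calc L₀ * c ^ q * ε' * (y - c) ≤ L₀ * c ^ q * ε' * (d - c) := by
            apply mul_le_mul_of_nonneg_left (by linarith [hy.2]) (by positivity)
        _ = L₀ * c ^ q * (d - c) * ε' := by ring
    refine lt_of_le_of_lt h1 ?_
    rw [hε'def]
    calc R * (ε / (R + 1)) = ε * (R / (R + 1)) := by ring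
      _ < ε * 1 := by
          apply mul_lt_mul_of_pos_left _ hε
          exact (div_lt_one (by linarith)).mpr (by linarith)
      _ = ε := mul_one ε
  -- boundedness of mixedKI
  set B : ℝ := |C₀| * (K₀ * a ^ p * MF) * (b - a) with hBdef
  have hbound : ∀ x ∈ Icc a b, ∀ y ∈ Icc c d, |mixedKI a c p q α β f x y| ≤ B := by
    intro x hx y hy
    rw [mixedKI_eq_outer, abs_mul]
    have hptw : ∀ s ∈ Ι a x, ‖(x ^ (p+1) - s ^ (p+1)) ^ (α-1) * s ^ p * FF c q β f s y‖
        ≤ K₀ * a ^ p * MF := by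
      intro s hs
      rw [uIoc_of_le hx.1] at hs
      obtain ⟨k0, kle, sp0, sple⟩ := kernel_ptw_bound a b x p α ha hp hp0 hα s hs.1.le hs.2
        hx.2
      have hFs : |FF c q β f s y| ≤ MF := hMF s ⟨hs.1.le, le_trans hs.2 hx.2⟩ y hy
      rw [Real.norm_eq_abs, abs_mul, abs_mul, abs_of_nonneg k0, abs_of_nonneg sp0.le]
      exact mul_le_mul (mul_le_mul kle sple sp0.le hK₀) hFs (abs_nonneg _) (by positivity)
    have hle := intervalIntegral.norm_integral_le_of_norm_le_const hptw
    rw [Real.norm_eq_abs] at hle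
    rw [hBdef]
    have h2 : |x - a| ≤ b - a := by
      rw [abs_of_nonneg (by linarith [hx.1] : (0:ℝ) ≤ x - a)]; linarith [hx.2]
    calc |C₀| * |∫ s in a..x, (x ^ (p+1) - s ^ (p+1)) ^ (α-1) * s ^ p * FF c q β f s y|
        ≤ |C₀| * (K₀ * a ^ p * MF * (b - a)) := by
          apply mul_le_mul_of_nonneg_left _ (abs_nonneg _)
          refine le_trans hle ?_
          exact mul_le_mul_of_nonneg_left h2 (by positivity)
      _ = |C₀| * (K₀ * a ^ p * MF) * (b - a) := by ring
  -- Lipschitz in x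
  set Lx : ℝ := |C₀| * (2 * MF * K₀ * a ^ p) with hLxdef
  have hpartx : ∀ y ∈ Icc c d, ∀ x ∈ Icc a b, ∀ x' ∈ Icc a b, x ≤ x' →
      |mixedKI a c p q α β f x' y - mixedKI a c p q α β f x y| ≤ Lx * (x' - x) := by
    intro y hy x hx x' hx' hxx
    rw [mixedKI_eq_outer, mixedKI_eq_outer, ← mul_sub, abs_mul]
    have := lipJ a b p α ha hp hp0 hα (fun s => FF c q β f s y) MF
      (fun s hs => hMF s hs y hy) (hFc y hy) x x' hx.1 hxx hx'.2
    calc |C₀| * |(∫ s in a..x', (x' ^ (p+1) - s ^ (p+1)) ^ (α-1) * s ^ p * FF c q β f s y)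
          - ∫ s in a..x, (x ^ (p+1) - s ^ (p+1)) ^ (α-1) * s ^ p * FF c q β f s y|
        ≤ |C₀| * (2 * MF * (b ^ (p+1)) ^ (α-1) * a ^ p * (x' - x)) :=
          mul_le_mul_of_nonneg_left this (abs_nonneg _)
      _ = Lx * (x' - x) := by rw [hLxdef, hK₀def]; try ring
  -- Lipschitz in y
  set LyC : ℝ := |C₀| * (K₀ * a ^ p * Ly * (b - a)) with hLyCdef
  have hparty : ∀ x ∈ Icc a b, ∀ y ∈ Icc c d, ∀ y' ∈ Icc c d, y ≤ y' →
      |mixedKI a c p q α β f x y' - mixedKI a c p q α β f x y| ≤ LyC * (y' - y) := by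
    intro x hx y hy y' hy' hyy
    rw [mixedKI_eq_outer, mixedKI_eq_outer, ← mul_sub, abs_mul]
    have hint : ∀ z ∈ Icc c d, IntervalIntegrable
        (fun s => (x ^ (p+1) - s ^ (p+1)) ^ (α-1) * s ^ p * FF c q β f s z) volume a x := by
      intro z hz
      apply ContinuousOn.intervalIntegrable
      rw [uIcc_of_le hx.1]
      exact (contOn_kernel a x x p α ha hα).mul
        ((hFc z hz).mono (Icc_subset_Icc le_rfl hx.2))
    have hsub : (∫ s in a..x, (x ^ (p+1) - s ^ (p+1)) ^ (α-1) * s ^ p * FF c q β f s y')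
        - (∫ s in a..x, (x ^ (p+1) - s ^ (p+1)) ^ (α-1) * s ^ p * FF c q β f s y)
        = ∫ s in a..x, ((x ^ (p+1) - s ^ (p+1)) ^ (α-1) * s ^ p * FF c q β f s y'
            - (x ^ (p+1) - s ^ (p+1)) ^ (α-1) * s ^ p * FF c q β f s y) := by
      rw [intervalIntegral.integral_sub (hint y' hy') (hint y hy)]
    rw [hsub]
    have hptw : ∀ s ∈ Ι a x, ‖(x ^ (p+1) - s ^ (p+1)) ^ (α-1) * s ^ p * FF c q β f s y'
        - (x ^ (p+1) - s ^ (p+1)) ^ (α-1) * s ^ p * FF c q β f s y‖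
        ≤ K₀ * a ^ p * (Ly * (y' - y)) := by
      intro s hs
      rw [uIoc_of_le hx.1] at hs
      obtain ⟨k0, kle, sp0, sple⟩ := kernel_ptw_bound a b x p α ha hp hp0 hα s hs.1.le hs.2
        hx.2
      have hFd : |FF c q β f s y' - FF c q β f s y| ≤ Ly * (y' - y) :=
        hFlip s ⟨hs.1.le, le_trans hs.2 hx.2⟩ y hy y' hy' hyy
      have heq : (x ^ (p+1) - s ^ (p+1)) ^ (α-1) * s ^ p * FF c q β f s y'
          - (x ^ (p+1) - s ^ (p+1)) ^ (α-1) * s ^ p * FF c q β f s y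
          = ((x ^ (p+1) - s ^ (p+1)) ^ (α-1) * s ^ p)
            * (FF c q β f s y' - FF c q β f s y) := by ring
      rw [Real.norm_eq_abs, heq, abs_mul, abs_mul, abs_of_nonneg k0, abs_of_nonneg sp0.le]
      exact mul_le_mul (mul_le_mul kle sple sp0.le hK₀) hFd (abs_nonneg _) (by positivity)
    have hle := intervalIntegral.norm_integral_le_of_norm_le_const hptw
    rw [Real.norm_eq_abs] at hle
    have h2 : |x - a| ≤ b - a := by
      rw [abs_of_nonneg (by linarith [hx.1] : (0:ℝ) ≤ x - a)]; linarith [hx.2]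
    calc |C₀| * |∫ s in a..x, ((x ^ (p+1) - s ^ (p+1)) ^ (α-1) * s ^ p * FF c q β f s y'
          - (x ^ (p+1) - s ^ (p+1)) ^ (α-1) * s ^ p * FF c q β f s y)|
        ≤ |C₀| * (K₀ * a ^ p * (Ly * (y' - y)) * (b - a)) := by
          apply mul_le_mul_of_nonneg_left _ (abs_nonneg _)
          refine le_trans hle ?_
          have hpos : 0 ≤ K₀ * a ^ p * (Ly * (y' - y)) := by
            have : (0:ℝ) ≤ y' - y := by linarith
            positivity
          exact mul_le_mul_of_nonneg_left h2 hpos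
      _ = LyC * (y' - y) := by rw [hLyCdef]; ring
  -- assemble
  set L : ℝ := Lx + LyC + 1 with hLdef
  have hLx0 : 0 ≤ Lx := by rw [hLxdef]; positivity
  have hLyC0 : 0 ≤ LyC := by
    rw [hLyCdef]
    have : (0:ℝ) ≤ b - a := by linarith
    positivity
  have hL : 0 < L := by rw [hLdef]; linarith
  refine ⟨L, hL, B, hbound, ?_⟩
  intro x hx y hy x' hx' y' hy'
  have hxpart : |mixedKI a c p q α β f x' y' - mixedKI a c p q α β f x y'| ≤ Lx * |x' - x| := by
    rcases le_total x x' with hle | hle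
    · rw [abs_of_nonneg (by linarith : (0:ℝ) ≤ x' - x)]
      exact hpartx y' hy' x hx x' hx' hle
    · rw [abs_of_nonpos (by linarith : x' - x ≤ 0)]
      rw [abs_sub_comm]
      have := hpartx y' hy' x' hx' x hx hle
      linarith [this]
  have hypart : |mixedKI a c p q α β f x y' - mixedKI a c p q α β f x y| ≤ LyC * |y' - y| := by
    rcases le_total y y' with hle | hle
    · rw [abs_of_nonneg (by linarith : (0:ℝ) ≤ y' - y)]
      exact hparty x hx y hy y' hy' hle
    · rw [abs_of_nonpos (by linarith : y' - y ≤ 0)]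
      rw [abs_sub_comm]
      have := hparty x hx y' hy' y hy hle
      linarith [this]
  calc |mixedKI a c p q α β f x' y' - mixedKI a c p q α β f x y|
      ≤ |mixedKI a c p q α β f x' y' - mixedKI a c p q α β f x y'|
        + |mixedKI a c p q α β f x y' - mixedKI a c p q α β f x y| :=
          abs_sub_le _ _ _
    _ ≤ Lx * |x' - x| + LyC * |y' - y| := add_le_add hxpart hypart
    _ ≤ L * |x' - x| + L * |y' - y| := by
        apply add_le_add
        · exact mul_le_mul_of_nonneg_right (by rw [hLdef]; linarith) (abs_nonneg _)
        · exact mul_le_mul_of_nonneg_right (by rw [hLdef]; linarith) (abs_nonneg _)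
    _ = L * (|x' - x| + |y' - y|) := by ring
end Main

lemma card_Icc_le {lo hi : ℤ} {r : ℝ} (hr : 0 ≤ r) (h : (hi:ℝ) + 1 - lo ≤ r) :
    ((Finset.Icc lo hi).card : ℝ) ≤ r := by
  rw [Int.card_Icc]
  rcases le_or_gt (hi + 1 - lo) 0 with h0 | h0
  · rw [Int.toNat_of_nonpos h0]; simpa using hr
  · have h4 := Int.toNat_of_nonneg h0.le
    have h5 : (((hi + 1 - lo).toNat : ℤ) : ℝ) = ((hi + 1 - lo : ℤ) : ℝ) := by rw [h4]
    push_cast at h5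
    linarith

lemma le_card_Icc {lo hi : ℤ} {r : ℝ} (h : r ≤ (hi:ℝ) + 1 - lo) :
    r ≤ ((Finset.Icc lo hi).card : ℝ) := by
  rw [Int.card_Icc]
  have h2 := Int.self_le_toNat (hi + 1 - lo)
  have h3 : ((hi + 1 - lo : ℤ) : ℝ) ≤ (((hi + 1 - lo).toNat : ℤ) : ℝ) := Int.cast_le.mpr h2
  push_cast at h3 ⊢
  linarith

section Count

variable {a b c d : ℝ} {G : ℝ → ℝ → ℝ} {L : ℝ}

/-- Upper bound for the mesh count of the graph of a Lipschitz function. -/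
lemma mesh_upper (hab : a < b) (hcd : c < d) (hL : 0 < L)
    (hlip : ∀ x ∈ Icc a b, ∀ y ∈ Icc c d, ∀ x' ∈ Icc a b, ∀ y' ∈ Icc c d,
      |G x' y' - G x y| ≤ L * (|x' - x| + |y' - y|))
    {δ : ℝ} (hδ : 0 < δ) :
    {p : ℤ × ℤ × ℤ | (meshCube δ p.1 p.2.1 p.2.2 ∩ graphRect a b c d G).Nonempty}.Finite ∧
    ((meshCount δ (graphRect a b c d G) : ℝ)
      ≤ ((b-a)/δ + 2) * ((d-c)/δ + 2) * (4*L+4)) := by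
  set S := {p : ℤ × ℤ × ℤ | (meshCube δ p.1 p.2.1 p.2.2 ∩ graphRect a b c d G).Nonempty}
    with hS
  set z : ℤ × ℤ → ℝ := fun ij => G (max a (min (ij.1*δ) b)) (max c (min (ij.2*δ) d)) with hz
  set I : Finset ℤ := Finset.Icc ⌈(a-δ)/δ⌉ ⌊b/δ⌋ with hI
  set J : Finset ℤ := Finset.Icc ⌈(c-δ)/δ⌉ ⌊d/δ⌋ with hJ
  set T : Finset (ℤ × ℤ × ℤ) := (I ×ˢ J).biUnion
    (fun ij => (Finset.Icc ⌈z ij/δ - (2*L+1)⌉ ⌊z ij/δ + 2*L⌋).image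
      (fun k => (ij.1, ij.2, k))) with hT
  have hsub : S ⊆ ↑T := by
    rintro ⟨i, j, k⟩ ⟨⟨x, y, w⟩, hcube, hgraph⟩
    obtain ⟨hcx, hcy, hcw⟩ := hcube
    obtain ⟨hgx, hgy, hgw⟩ := hgraph
    simp only at hcx hcy hcw hgx hgy hgw
    have hax : a ≤ x := hgx.1
    have hxb : x ≤ b := hgx.2
    have hcy' : c ≤ y := hgy.1
    have hyd : y ≤ d := hgy.2
    have hix : (i:ℝ) * δ ≤ x := hcx.1
    have hxi : x ≤ ((i:ℝ) + 1) * δ := by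
      have := hcx.2; push_cast at this; linarith
    have hjy : (j:ℝ) * δ ≤ y := hcy.1
    have hyj : y ≤ ((j:ℝ) + 1) * δ := by
      have := hcy.2; push_cast at this; linarith
    have hkw : (k:ℝ) * δ ≤ w := hcw.1
    have hwk : w ≤ ((k:ℝ) + 1) * δ := by
      have := hcw.2; push_cast at this; linarith
    -- i and j ranges
    have hiu : i ≤ ⌊b/δ⌋ := by
      rw [Int.le_floor]
      rw [le_div_iff₀ hδ]
      linarith
    have hil : ⌈(a-δ)/δ⌉ ≤ i := by
      rw [Int.ceil_le]
      rw [div_le_iff₀ hδ]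
      linarith
    have hju : j ≤ ⌊d/δ⌋ := by
      rw [Int.le_floor, le_div_iff₀ hδ]; linarith
    have hjl : ⌈(c-δ)/δ⌉ ≤ j := by
      rw [Int.ceil_le, div_le_iff₀ hδ]; linarith
    -- clamped reference point
    set x₀ : ℝ := max a (min ((i:ℝ)*δ) b) with hx₀
    set y₀ : ℝ := max c (min ((j:ℝ)*δ) d) with hy₀
    have hx₀m : x₀ ∈ Icc a b := by
      constructor
      · exact le_max_left _ _
      · exact max_le hab.le (min_le_right _ _)
    have hy₀m : y₀ ∈ Icc c d := by
      constructor
      · exact le_max_left _ _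
      · exact max_le hcd.le (min_le_right _ _)
    have hxx₀ : |x - x₀| ≤ δ := by
      have hmin : min ((i:ℝ)*δ) b = (i:ℝ)*δ := min_eq_left (le_trans hix hxb)
      rw [hx₀, hmin]
      rcases le_total a ((i:ℝ)*δ) with hcase | hcase
      · rw [max_eq_right hcase, abs_le]; constructor <;> linarith
      · rw [max_eq_left hcase, abs_le]; constructor <;> linarith
    have hyy₀ : |y - y₀| ≤ δ := by
      have hmin : min ((j:ℝ)*δ) d = (j:ℝ)*δ := min_eq_left (le_trans hjy hyd)
      rw [hy₀, hmin]
      rcases le_total c ((j:ℝ)*δ) with hcase | hcase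
      · rw [max_eq_right hcase, abs_le]; constructor <;> linarith
      · rw [max_eq_left hcase, abs_le]; constructor <;> linarith
    have hGz : |G x y - z (i, j)| ≤ 2 * L * δ := by
      have := hlip x₀ hx₀m y₀ hy₀m x hgx y hgy
      rw [hz]
      calc |G x y - G (max a (min ((i:ℝ)*δ) b)) (max c (min ((j:ℝ)*δ) d))|
          ≤ L * (|x - x₀| + |y - y₀|) := this
        _ ≤ L * (δ + δ) := by
            apply mul_le_mul_of_nonneg_left _ hL.le
            exact add_le_add hxx₀ hyy₀
        _ = 2 * L * δ := by ring
    have habs1 : G x y ≤ z (i, j) + 2*L*δ := by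
      have := abs_le.mp hGz; linarith [this.1]
    have habs2 : z (i, j) - 2*L*δ ≤ G x y := by
      have := abs_le.mp hGz; linarith [this.2]
    have hku : k ≤ ⌊z (i, j)/δ + 2*L⌋ := by
      rw [Int.le_floor]
      have h1 : (k:ℝ) ≤ (z (i, j) + 2*L*δ)/δ := by
        rw [le_div_iff₀ hδ]
        have : (k:ℝ)*δ ≤ G x y := by rw [← hgw]; exact hkw
        linarith
      have h2 : (z (i, j) + 2*L*δ)/δ = z (i, j)/δ + 2*L := by
        rw [add_div, mul_div_assoc, div_self hδ.ne', mul_one]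
      linarith [h1, h2.symm.le, h2.le]
    have hkl : ⌈z (i, j)/δ - (2*L+1)⌉ ≤ k := by
      rw [Int.ceil_le]
      have h1 : z (i, j)/δ ≤ (k:ℝ) + 1 + 2*L := by
        rw [div_le_iff₀ hδ]
        have : G x y ≤ ((k:ℝ)+1)*δ := by rw [← hgw]; exact hwk
        nlinarith
      push_cast
      linarith
    refine Finset.mem_coe.mpr (Finset.mem_biUnion.mpr ⟨(i, j), ?_, ?_⟩)
    · exact Finset.mem_product.mpr ⟨Finset.mem_Icc.mpr ⟨hil, hiu⟩,
        Finset.mem_Icc.mpr ⟨hjl, hju⟩⟩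
    · exact Finset.mem_image.mpr ⟨k, Finset.mem_Icc.mpr ⟨hkl, hku⟩, rfl⟩
  have hfin : S.Finite := Set.Finite.subset T.finite_toSet hsub
  refine ⟨hfin, ?_⟩
  have hstep1 : (meshCount δ (graphRect a b c d G) : ℝ) ≤ (T.card : ℝ) := by
    have : meshCount δ (graphRect a b c d G) ≤ T.card := by
      unfold meshCount
      rw [Nat.card_coe_set_eq, ← Set.ncard_coe_finset]
      exact Set.ncard_le_ncard hsub T.finite_toSet
    exact_mod_cast this
  have hstep2 : (T.card : ℝ) ≤ ((I ×ˢ J).card : ℝ) * (4*L+4) := by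
    have hbd := Finset.card_biUnion_le (s := I ×ˢ J)
      (t := fun ij => (Finset.Icc ⌈z ij/δ - (2*L+1)⌉ ⌊z ij/δ + 2*L⌋).image
        (fun k => (ij.1, ij.2, k)))
    have hcast : (T.card : ℝ) ≤ ∑ ij ∈ I ×ˢ J,
        (((Finset.Icc ⌈z ij/δ - (2*L+1)⌉ ⌊z ij/δ + 2*L⌋).image
          (fun k => (ij.1, ij.2, k))).card : ℝ) := by
      rw [hT]
      exact_mod_cast hbd
    refine le_trans hcast ?_
    have hptw : ∀ ij ∈ I ×ˢ J,
        (((Finset.Icc ⌈z ij/δ - (2*L+1)⌉ ⌊z ij/δ + 2*L⌋).image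
          (fun k => (ij.1, ij.2, k))).card : ℝ) ≤ 4*L+4 := by
      intro ij _
      refine le_trans (Nat.cast_le.mpr (Finset.card_image_le)) ?_
      apply card_Icc_le (by linarith)
      have h1 : (⌊z ij/δ + 2*L⌋ : ℝ) ≤ z ij/δ + 2*L := Int.floor_le _
      have h2 : z ij/δ - (2*L+1) ≤ (⌈z ij/δ - (2*L+1)⌉ : ℝ) := Int.le_ceil _
      linarith
    refine le_trans (Finset.sum_le_sum hptw) ?_
    rw [Finset.sum_const, nsmul_eq_mul]
  have hIle : (I.card : ℝ) ≤ (b-a)/δ + 2 := by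
    rw [hI]
    apply card_Icc_le
    · have h1 : 0 ≤ (b-a)/δ := div_nonneg (by linarith) hδ.le
      linarith
    · have h1 : (⌊b/δ⌋ : ℝ) ≤ b/δ := Int.floor_le _
      have h2 : (a-δ)/δ ≤ (⌈(a-δ)/δ⌉ : ℝ) := Int.le_ceil _
      have h3 : (a-δ)/δ = a/δ - 1 := by field_simp
      have h4 : (b-a)/δ = b/δ - a/δ := by field_simp
      linarith
  have hJle : (J.card : ℝ) ≤ (d-c)/δ + 2 := by
    rw [hJ]
    apply card_Icc_le
    · have h1 : 0 ≤ (d-c)/δ := div_nonneg (by linarith) hδ.le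
      linarith
    · have h1 : (⌊d/δ⌋ : ℝ) ≤ d/δ := Int.floor_le _
      have h2 : (c-δ)/δ ≤ (⌈(c-δ)/δ⌉ : ℝ) := Int.le_ceil _
      have h3 : (c-δ)/δ = c/δ - 1 := by field_simp
      have h4 : (d-c)/δ = d/δ - c/δ := by field_simp
      linarith
  have hprod : ((I ×ˢ J).card : ℝ) = (I.card : ℝ) * (J.card : ℝ) := by
    rw [Finset.card_product]; push_cast; ring
  refine le_trans hstep1 (le_trans hstep2 ?_)
  rw [hprod]
  have hIpos : (0:ℝ) ≤ (b-a)/δ + 2 := by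
    have := div_nonneg (by linarith : (0:ℝ) ≤ b - a) hδ.le
    linarith
  have hJpos : (0:ℝ) ≤ (d-c)/δ + 2 := by
    have := div_nonneg (by linarith : (0:ℝ) ≤ d - c) hδ.le
    linarith
  apply mul_le_mul_of_nonneg_right _ (by linarith : (0:ℝ) ≤ 4*L+4)
  exact mul_le_mul hIle hJle (Nat.cast_nonneg _) hIpos

/-- Lower bound for the mesh count. -/
lemma mesh_lower (hab : a < b) (hcd : c < d)
    {δ : ℝ} (hδ : 0 < δ) (hδ1 : δ ≤ (b-a)/4) (hδ2 : δ ≤ (d-c)/4)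
    (hfin : {p : ℤ × ℤ × ℤ |
      (meshCube δ p.1 p.2.1 p.2.2 ∩ graphRect a b c d G).Nonempty}.Finite) :
    (b-a)/(2*δ) * ((d-c)/(2*δ)) ≤ (meshCount δ (graphRect a b c d G) : ℝ) := by
  set S := {p : ℤ × ℤ × ℤ | (meshCube δ p.1 p.2.1 p.2.2 ∩ graphRect a b c d G).Nonempty}
    with hS
  set I : Finset ℤ := Finset.Icc ⌈a/δ⌉ (⌊b/δ⌋ - 1) with hI
  set J : Finset ℤ := Finset.Icc ⌈c/δ⌉ (⌊d/δ⌋ - 1) with hJ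
  set e : ℤ × ℤ → ℤ × ℤ × ℤ := fun ij => (ij.1, ij.2, ⌊G ((ij.1:ℝ)*δ) ((ij.2:ℝ)*δ)/δ⌋)
    with he
  have hinj : Function.Injective e := by
    rintro ⟨i, j⟩ ⟨i', j'⟩ hij
    simp only [he, Prod.mk.injEq] at hij
    exact Prod.ext hij.1 hij.2.1
  have himg : e '' ↑(I ×ˢ J) ⊆ S := by
    rintro _ ⟨⟨i, j⟩, hij, rfl⟩
    rw [Finset.mem_coe, Finset.mem_product] at hij
    obtain ⟨hiI, hjJ⟩ := hij
    rw [hI, Finset.mem_Icc] at hiI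
    rw [hJ, Finset.mem_Icc] at hjJ
    have hai : a ≤ (i:ℝ)*δ := by
      have := Int.ceil_le.mp hiI.1
      rw [div_le_iff₀ hδ] at this
      linarith
    have hib : ((i:ℝ)+1)*δ ≤ b := by
      have h1 : i + 1 ≤ ⌊b/δ⌋ := by omega
      have h2 : ((i:ℝ)+1) ≤ b/δ := by
        have := Int.le_floor.mp h1
        push_cast at this
        linarith
      rw [← le_div_iff₀ hδ]
      exact h2
    have hcj : c ≤ (j:ℝ)*δ := by
      have := Int.ceil_le.mp hjJ.1
      rw [div_le_iff₀ hδ] at this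
      linarith
    have hjd : ((j:ℝ)+1)*δ ≤ d := by
      have h1 : j + 1 ≤ ⌊d/δ⌋ := by omega
      have h2 : ((j:ℝ)+1) ≤ d/δ := by
        have := Int.le_floor.mp h1
        push_cast at this
        linarith
      rw [← le_div_iff₀ hδ]
      exact h2
    set g : ℝ := G ((i:ℝ)*δ) ((j:ℝ)*δ) with hg
    refine ⟨((i:ℝ)*δ, (j:ℝ)*δ, g), ?_, ?_, ?_, ?_⟩
    · -- in the cube
      refine ⟨⟨le_rfl, by push_cast; nlinarith⟩, ⟨le_rfl, by push_cast; nlinarith⟩, ?_, ?_⟩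
      · show (⌊g/δ⌋ : ℝ) * δ ≤ g
        have := Int.floor_le (g/δ)
        calc (⌊g/δ⌋ : ℝ) * δ ≤ (g/δ) * δ := by nlinarith
          _ = g := by field_simp
      · show g ≤ ((⌊g/δ⌋ : ℝ) + 1) * δ
        have := (Int.lt_floor_add_one (g/δ)).le
        push_cast
        calc g = (g/δ) * δ := by field_simp
          _ ≤ ((⌊g/δ⌋ : ℝ) + 1) * δ := by nlinarith
    · refine ⟨hai, ?_⟩
      show (i:ℝ)*δ ≤ b
      nlinarith
    · refine ⟨hcj, ?_⟩
      show (j:ℝ)*δ ≤ d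
      nlinarith
    · rfl
  have hIcard : (b-a)/(2*δ) ≤ (I.card : ℝ) := by
    rw [hI]
    apply le_card_Icc
    have h1 : b/δ - 1 < (⌊b/δ⌋ : ℝ) := Int.sub_one_lt_floor _
    have h2 : (⌈a/δ⌉ : ℝ) < a/δ + 1 := Int.ceil_lt_add_one _
    have h3 : (4:ℝ) ≤ (b-a)/δ := by
      rw [le_div_iff₀ hδ]; linarith
    have h4 : (b-a)/(2*δ) = ((b-a)/δ)/2 := by rw [div_div, mul_comm]
    have h5 : (b-a)/δ = b/δ - a/δ := by field_simp
    push_cast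
    nlinarith
  have hJcard : (d-c)/(2*δ) ≤ (J.card : ℝ) := by
    rw [hJ]
    apply le_card_Icc
    have h1 : d/δ - 1 < (⌊d/δ⌋ : ℝ) := Int.sub_one_lt_floor _
    have h2 : (⌈c/δ⌉ : ℝ) < c/δ + 1 := Int.ceil_lt_add_one _
    have h3 : (4:ℝ) ≤ (d-c)/δ := by
      rw [le_div_iff₀ hδ]; linarith
    have h4 : (d-c)/(2*δ) = ((d-c)/δ)/2 := by rw [div_div, mul_comm]
    have h5 : (d-c)/δ = d/δ - c/δ := by field_simp
    push_cast
    nlinarith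
  have hcount : ((I ×ˢ J).card : ℝ) ≤ (meshCount δ (graphRect a b c d G) : ℝ) := by
    have h1 : (I ×ˢ J).card = (e '' ↑(I ×ˢ J)).ncard := by
      rw [Set.ncard_image_of_injective _ hinj, Set.ncard_coe_finset]
    have h2 : (e '' ↑(I ×ˢ J)).ncard ≤ S.ncard := Set.ncard_le_ncard himg hfin
    have h3 : meshCount δ (graphRect a b c d G) = S.ncard := by
      unfold meshCount
      rw [Nat.card_coe_set_eq]
    rw [h3]
    exact_mod_cast h1 ▸ h2
  refine le_trans ?_ hcount
  rw [Finset.card_product]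
  push_cast
  have hp1 : (0:ℝ) ≤ (b-a)/(2*δ) := div_nonneg (by linarith) (by positivity)
  have hp2 : (0:ℝ) ≤ (d-c)/(2*δ) := div_nonneg (by linarith) (by positivity)
  exact mul_le_mul hIcard hJcard hp2 (Nat.cast_nonneg _)

end Count

section Dims
variable {a b c d : ℝ} {G : ℝ → ℝ → ℝ} {L : ℝ}

/-- Both box dimensions of the graph equal 2. -/
lemma boxDims_eq_two (hab : a < b) (hcd : c < d) (hL : 0 < L)
    (hlip : ∀ x ∈ Icc a b, ∀ y ∈ Icc c d, ∀ x' ∈ Icc a b, ∀ y' ∈ Icc c d,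
      |G x' y' - G x y| ≤ L * (|x' - x| + |y' - y|)) :
    lowerBoxDim (graphRect a b c d G) = 2 ∧ upperBoxDim (graphRect a b c d G) = 2 := by
  set C₁ : ℝ := (b-a)*(d-c)/4 with hC₁def
  set C₂ : ℝ := (b-a+2)*((d-c)+2)*(4*L+4) with hC₂def
  have hba : (0:ℝ) < b - a := by linarith
  have hdc : (0:ℝ) < d - c := by linarith
  have hC₁ : 0 < C₁ := by rw [hC₁def]; positivity
  have hC₂ : 0 < C₂ := by rw [hC₂def]; positivity
  set δ₀ : ℝ := min 1 (min ((b-a)/4) ((d-c)/4)) with hδ₀def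
  have hδ₀ : 0 < δ₀ := by
    rw [hδ₀def]
    apply lt_min one_pos
    apply lt_min <;> positivity
  have key : ∀ δ ∈ Ioo (0:ℝ) δ₀,
      C₁/δ^2 ≤ (meshCount δ (graphRect a b c d G) : ℝ) ∧
      (meshCount δ (graphRect a b c d G) : ℝ) ≤ C₂/δ^2 := by
    intro δ hδmem
    obtain ⟨hδpos, hδlt⟩ := hδmem
    have hδ1 : δ < 1 := lt_of_lt_of_le hδlt (by rw [hδ₀def]; exact min_le_left _ _)
    have hδ2 : δ ≤ (b-a)/4 := le_of_lt (lt_of_lt_of_le hδlt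
      (le_trans (min_le_right _ _) (min_le_left _ _)))
    have hδ3 : δ ≤ (d-c)/4 := le_of_lt (lt_of_lt_of_le hδlt
      (le_trans (min_le_right _ _) (min_le_right _ _)))
    obtain ⟨hfin, hup⟩ := mesh_upper hab hcd hL hlip hδpos
    have hlow := mesh_lower (G := G) hab hcd hδpos hδ2 hδ3 hfin
    constructor
    · have heq : (b-a)/(2*δ) * ((d-c)/(2*δ)) = C₁/δ^2 := by
        rw [hC₁def]; field_simp; ring
      rw [← heq]; exact hlow
    · refine le_trans hup ?_
      have e1 : (b-a)/δ + 2 ≤ (b-a+2)/δ := by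
        rw [add_div]
        have h2 : (2:ℝ) ≤ 2/δ := by
          rw [le_div_iff₀ hδpos]; linarith
        linarith
      have e2 : (d-c)/δ + 2 ≤ (d-c+2)/δ := by
        rw [add_div]
        have h2 : (2:ℝ) ≤ 2/δ := by
          rw [le_div_iff₀ hδpos]; linarith
        linarith
      have hnn1 : (0:ℝ) ≤ (b-a)/δ + 2 := by positivity
      have hnn2 : (0:ℝ) ≤ (d-c)/δ + 2 := by positivity
      have hnn3 : (0:ℝ) ≤ (d-c+2)/δ := by positivity
      have heq : (b-a+2)/δ * ((d-c+2)/δ) * (4*L+4) = C₂/δ^2 := by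
        rw [hC₂def]; field_simp
      rw [← heq]
      apply mul_le_mul_of_nonneg_right _ (by linarith : (0:ℝ) ≤ 4*L+4)
      exact mul_le_mul e1 e2 hnn2 (by positivity)
  -- the squeeze
  have hmem : Ioo (0:ℝ) δ₀ ∈ 𝓝[>] (0:ℝ) := Ioo_mem_nhdsGT hδ₀
  have hquot : ∀ δ ∈ Ioo (0:ℝ) δ₀,
      Real.log C₁ * (-Real.log δ)⁻¹ + 2
        ≤ Real.log (meshCount δ (graphRect a b c d G)) / (-Real.log δ) ∧
      Real.log (meshCount δ (graphRect a b c d G)) / (-Real.log δ)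
        ≤ Real.log C₂ * (-Real.log δ)⁻¹ + 2 := by
    intro δ hδmem
    obtain ⟨hδpos, hδlt⟩ := hδmem
    have hδ1 : δ < 1 := lt_of_lt_of_le hδlt (by rw [hδ₀def]; exact min_le_left _ _)
    obtain ⟨hlow, hup⟩ := key δ ⟨hδpos, hδlt⟩
    have hlogδ : Real.log δ < 0 := Real.log_neg hδpos hδ1
    have hpos : 0 < -Real.log δ := by linarith
    have hNpos : (0:ℝ) < (meshCount δ (graphRect a b c d G) : ℝ) :=
      lt_of_lt_of_le (by positivity) hlow
    have hlogN1 : Real.log C₁ - 2 * Real.log δ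
        ≤ Real.log (meshCount δ (graphRect a b c d G)) := by
      have := Real.log_le_log (by positivity) hlow
      rw [Real.log_div hC₁.ne' (by positivity), Real.log_pow] at this
      push_cast at this
      linarith
    have hlogN2 : Real.log (meshCount δ (graphRect a b c d G))
        ≤ Real.log C₂ - 2 * Real.log δ := by
      have := Real.log_le_log hNpos hup
      rw [Real.log_div hC₂.ne' (by positivity), Real.log_pow] at this
      push_cast at this
      linarith
    constructor
    · have h1 : (Real.log C₁ - 2 * Real.log δ) / (-Real.log δ)
          ≤ Real.log (meshCount δ (graphRect a b c d G)) / (-Real.log δ) := by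
        gcongr
      refine le_trans (le_of_eq ?_) h1
      calc Real.log C₁ * (-Real.log δ)⁻¹ + 2
          = Real.log C₁ * (-Real.log δ)⁻¹ + (2 * (-Real.log δ)) * (-Real.log δ)⁻¹ := by
            rw [mul_assoc, mul_inv_cancel₀ hpos.ne', mul_one]
        _ = (Real.log C₁ - 2 * Real.log δ) / (-Real.log δ) := by
            rw [div_eq_mul_inv]; ring
    · have h1 : Real.log (meshCount δ (graphRect a b c d G)) / (-Real.log δ)
          ≤ (Real.log C₂ - 2 * Real.log δ) / (-Real.log δ) := by
        gcongr
      refine le_trans h1 (le_of_eq ?_)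
      calc (Real.log C₂ - 2 * Real.log δ) / (-Real.log δ)
          = Real.log C₂ * (-Real.log δ)⁻¹ + (2 * (-Real.log δ)) * (-Real.log δ)⁻¹ := by
            rw [div_eq_mul_inv]; ring
        _ = Real.log C₂ * (-Real.log δ)⁻¹ + 2 := by
            rw [mul_assoc, mul_inv_cancel₀ hpos.ne', mul_one]
  have hlog : Tendsto (fun δ : ℝ => -Real.log δ) (𝓝[>] 0) atTop :=
    tendsto_neg_atBot_atTop.comp Real.tendsto_log_nhdsGT_zero
  have hinv : Tendsto (fun δ : ℝ => (-Real.log δ)⁻¹) (𝓝[>] (0:ℝ)) (𝓝 0) :=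
    hlog.inv_tendsto_atTop
  have hl : Tendsto (fun δ : ℝ => Real.log C₁ * (-Real.log δ)⁻¹ + 2) (𝓝[>] (0:ℝ)) (𝓝 2) := by
    have h1 := (hinv.const_mul (Real.log C₁)).add_const 2
    simpa using h1
  have hu : Tendsto (fun δ : ℝ => Real.log C₂ * (-Real.log δ)⁻¹ + 2) (𝓝[>] (0:ℝ)) (𝓝 2) := by
    have h1 := (hinv.const_mul (Real.log C₂)).add_const 2
    simpa using h1
  have htend : Tendsto (fun δ : ℝ =>
      Real.log (meshCount δ (graphRect a b c d G)) / (-Real.log δ)) (𝓝[>] (0:ℝ)) (𝓝 2) := by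
    apply tendsto_of_tendsto_of_tendsto_of_le_of_le' hl hu
    · exact Filter.eventually_of_mem hmem (fun δ hδ => (hquot δ hδ).1)
    · exact Filter.eventually_of_mem hmem (fun δ hδ => (hquot δ hδ).2)
  exact ⟨htend.liminf_eq, htend.limsup_eq⟩

/-- The Hausdorff dimension of the graph is 2. -/
lemma dimH_graph_eq_two (hab : a < b) (hcd : c < d) (hL : 0 < L)
    (hlip : ∀ x ∈ Icc a b, ∀ y ∈ Icc c d, ∀ x' ∈ Icc a b, ∀ y' ∈ Icc c d,
      |G x' y' - G x y| ≤ L * (|x' - x| + |y' - y|)) :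
    dimH (graphRect a b c d G) = 2 := by
  set Φ : ℝ × ℝ → ℝ × ℝ × ℝ := fun pt => (pt.1, pt.2, G pt.1 pt.2) with hΦdef
  have himg : graphRect a b c d G = Φ '' (Icc a b ×ˢ Icc c d) := by
    ext ⟨x, y, w⟩
    constructor
    · rintro ⟨hx, hy, hw⟩
      exact ⟨(x, y), ⟨hx, hy⟩, by simp only [hΦdef]; rw [← hw]⟩
    · rintro ⟨⟨x', y'⟩, ⟨hx', hy'⟩, heq⟩
      simp only [hΦdef, Prod.mk.injEq] at heq
      obtain ⟨h1, h2, h3⟩ := heq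
      subst h1; subst h2; subst h3
      exact ⟨hx', hy', rfl⟩
  have hΦlip : LipschitzOnWith (Real.toNNReal (2*L+1)) Φ (Icc a b ×ˢ Icc c d) := by
    apply LipschitzOnWith.of_dist_le_mul
    intro pt hpt qt hqt
    rw [Real.coe_toNNReal _ (by linarith)]
    have hd1 : dist pt.1 qt.1 ≤ dist pt qt := by
      rw [Prod.dist_eq]; exact le_max_left _ _
    have hd2 : dist pt.2 qt.2 ≤ dist pt qt := by
      rw [Prod.dist_eq]; exact le_max_right _ _
    have hdG : dist (G pt.1 pt.2) (G qt.1 qt.2) ≤ 2*L * dist pt qt := by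
      rw [Real.dist_eq]
      refine le_trans (hlip qt.1 hqt.1 qt.2 hqt.2 pt.1 hpt.1 pt.2 hpt.2) ?_
      have e1 : |pt.1 - qt.1| = dist pt.1 qt.1 := (Real.dist_eq _ _).symm
      have e2 : |pt.2 - qt.2| = dist pt.2 qt.2 := (Real.dist_eq _ _).symm
      rw [e1, e2]
      nlinarith [dist_nonneg (x := pt) (y := qt)]
    have hdist0 : (0:ℝ) ≤ dist pt qt := dist_nonneg
    rw [hΦdef, Prod.dist_eq]
    apply max_le
    · show dist pt.1 qt.1 ≤ (2*L+1) * dist pt qt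
      nlinarith
    · rw [Prod.dist_eq]
      apply max_le
      · show dist pt.2 qt.2 ≤ (2*L+1) * dist pt qt
        nlinarith
      · show dist (G pt.1 pt.2) (G qt.1 qt.2) ≤ (2*L+1) * dist pt qt
        nlinarith
  have hπlip : LipschitzWith 1 (fun r : ℝ × ℝ × ℝ => (r.1, r.2.1)) := by
    apply LipschitzWith.mk_one
    intro r r'
    rw [Prod.dist_eq, Prod.dist_eq, Prod.dist_eq]
    exact max_le_max le_rfl (le_max_left _ _)
  have hπim : (fun r : ℝ × ℝ × ℝ => (r.1, r.2.1)) '' (graphRect a b c d G)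
      = Icc a b ×ˢ Icc c d := by
    rw [himg, ← Set.image_comp]
    have hcomp : ((fun r : ℝ × ℝ × ℝ => (r.1, r.2.1)) ∘ Φ) = id := by
      funext pt; simp [hΦdef]
    rw [hcomp, Set.image_id]
  have hrect : dimH (Icc a b ×ˢ Icc c d : Set (ℝ × ℝ)) = 2 := by
    have hint : (interior (Icc a b ×ˢ Icc c d : Set (ℝ × ℝ))).Nonempty := by
      rw [interior_prod_eq, interior_Icc, interior_Icc]
      exact ⟨((a+b)/2, (c+d)/2), ⟨by constructor <;> linarith, by constructor <;> linarith⟩⟩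
    rw [Real.dimH_of_nonempty_interior hint]
    have : Module.finrank ℝ (ℝ × ℝ) = 2 := by
      rw [Module.finrank_prod, Module.finrank_self]
    rw [this]
    norm_num
  refine le_antisymm ?_ ?_
  · rw [himg]
    exact le_trans (hΦlip.dimH_image_le) hrect.le
  · have := hπlip.dimH_image_le (graphRect a b c d G)
    rw [hπim, hrect] at this
    exact this

end Dims
end KatAux

/-- for `α, β ≥ 1` the graph of the mixed Katugampola fractional
integral of a continuous function has Hausdorff and box dimension `2`. -/
theorem dim_graph_mixedKI_of_one_le (a b c d p q α β : ℝ)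
    (ha : 0 < a) (hab : a < b) (hc : 0 < c) (hcd : c < d)
    (hp : -1 < p) (hp0 : p ≤ 0) (hq : -1 < q) (hq0 : q ≤ 0)
    (hα : 1 ≤ α) (hβ : 1 ≤ β)
    (f : ℝ → ℝ → ℝ)
    (hf : ContinuousOn (fun pt : ℝ × ℝ => f pt.1 pt.2) (Icc a b ×ˢ Icc c d)) :
    dimH (graphRect a b c d (fun x y => mixedKI a c p q α β f x y)) = 2 ∧
    lowerBoxDim (graphRect a b c d (fun x y => mixedKI a c p q α β f x y)) = 2 ∧
    upperBoxDim (graphRect a b c d (fun x y => mixedKI a c p q α β f x y)) = 2 := by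
  obtain ⟨L, hL, B, hbound, hlip⟩ := KatAux.mixedKI_bound_lip a b c d p q α β f
    ha hab hc hcd hp hp0 hq hq0 hα hβ hf
  have hlip' : ∀ x ∈ Icc a b, ∀ y ∈ Icc c d, ∀ x' ∈ Icc a b, ∀ y' ∈ Icc c d,
      |(fun x y => mixedKI a c p q α β f x y) x' y'
        - (fun x y => mixedKI a c p q α β f x y) x y| ≤ L * (|x' - x| + |y' - y|) := hlip
  obtain ⟨hlo, hup⟩ := KatAux.boxDims_eq_two hab hcd hL hlip'
  exact ⟨KatAux.dimH_graph_eq_two hab hcd hL hlip', hlo, hup⟩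
end

section
/- Let f : [a,b] × [c,d] → ℝ be continuous and suppose there exist c₀ > 0 and 0 ≤ s ≤ 1 such that |f(t,u) - f(x,y)| ≤ c₀ ‖(t,u) - (x,y)‖₂^{s} for all (t,u), (x,y) ∈ [a,b] × [c,d]. Then dim_H(G(f)) ≤ \underline{dim}_B(G(f)) ≤ \overline{dim}_B(G(f)) ≤ 3 - s. The same conclusion holds if the Hölder condition is only assumed for pairs of points with ‖(t,u) - (x,y)‖₂ < δ for some δ > 0. -/
open MeasureTheory Set Filter
open scoped Classical

open scoped Topology ENNReal NNReal
set_option maxHeartbeats 1000000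

lemma clamp_mem {a b δ : ℝ} {i : ℤ} {x : ℝ} (hx1 : x ∈ Icc a b)
    (hx2 : x ∈ Icc ((i:ℝ) * δ) ((i + 1) * δ)) :
    max a (min ((i:ℝ) * δ) b) ∈ Icc a b ∧ max a (min ((i:ℝ) * δ) b) ∈ Icc ((i:ℝ)*δ) ((i+1)*δ) := by
  obtain ⟨hax, hxb⟩ := hx1
  obtain ⟨hix, hxi⟩ := hx2
  have hab : a ≤ b := le_trans hax hxb
  have h1 : (i:ℝ) * δ ≤ b := le_trans hix hxb
  have h2 : a ≤ ((i:ℝ)+1) * δ := le_trans hax hxi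
  refine ⟨⟨le_max_left _ _, max_le hab (min_le_right _ _)⟩, ?_, ?_⟩
  · exact le_max_of_le_right (le_min le_rfl h1)
  · exact max_le h2 (le_trans (min_le_left _ _) (le_trans hix hxi))

lemma toNat_cast_le {z : ℤ} {w : ℝ} (h : (z:ℝ) ≤ w) (h0 : 0 ≤ w) : ((z.toNat : ℝ)) ≤ w := by
  rcases le_or_gt z 0 with h' | h'
  · rw [Int.toNat_of_nonpos h']; simpa using h0
  · rw [show ((z.toNat : ℝ)) = ((z.toNat : ℤ) : ℝ) from by push_cast; ring,
      Int.toNat_of_nonneg h'.le]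
    exact h

section Count
variable {a b c d c₀ s δ₀ : ℝ} {f : ℝ → ℝ → ℝ}

lemma mesh_key (hab : a < b) (hcd : c < d) (hc₀ : 0 < c₀) (hs0 : 0 ≤ s) (hδ₀ : 0 < δ₀)
    (hH : ∀ t ∈ Icc a b, ∀ u ∈ Icc c d, ∀ x ∈ Icc a b, ∀ y ∈ Icc c d,
        Real.sqrt ((t - x) ^ 2 + (u - y) ^ 2) < δ₀ →
        |f t u - f x y| ≤ c₀ * Real.sqrt ((t - x) ^ 2 + (u - y) ^ 2) ^ s)
    {δ : ℝ} (hδ : 0 < δ) (hδ2 : Real.sqrt 2 * δ < δ₀) :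
    {p : ℤ × ℤ × ℤ | (meshCube δ p.1 p.2.1 p.2.2 ∩ graphRect a b c d f).Nonempty}.Finite ∧
    (meshCount δ (graphRect a b c d f) : ℝ) ≤
      ((b - a)/δ + 2) * (((d - c)/δ + 2) * (2 * (c₀ * (Real.sqrt 2 * δ) ^ s) / δ + 2)) := by
  set R := c₀ * (Real.sqrt 2 * δ) ^ s with hR
  have hRpos : 0 < R := by
    apply mul_pos hc₀
    apply Real.rpow_pos_of_pos
    positivity
  set F : ℤ → ℤ → ℝ := fun i j => f (max a (min ((i:ℝ)*δ) b)) (max c (min ((j:ℝ)*δ) d)) with hF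
  set K := {p : ℤ × ℤ × ℤ | (meshCube δ p.1 p.2.1 p.2.2 ∩ graphRect a b c d f).Nonempty} with hK
  set T : Finset (ℤ × ℤ × ℤ) :=
    (Finset.Icc (⌈a/δ⌉ - 1) ⌊b/δ⌋) ×ˢ ((Finset.Icc (⌈c/δ⌉ - 1) ⌊d/δ⌋) ×ˢ
      (Finset.Icc 0 (⌊2*R/δ⌋ + 1))) with hT
  set φ : ℤ × ℤ × ℤ → ℤ × ℤ × ℤ :=
    fun p => (p.1, p.2.1, p.2.2 - (⌈(F p.1 p.2.1 - R)/δ⌉ - 1)) with hφ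
  have hmaps : ∀ p ∈ K, φ p ∈ (T : Set (ℤ × ℤ × ℤ)) := by
    rintro ⟨i, j, k⟩ hp
    obtain ⟨⟨x, y, z⟩, hcube, hgx, hgy, hgz⟩ := hp
    simp only [meshCube, Set.mem_prod] at hcube
    obtain ⟨hx, hy, hz⟩ := hcube
    simp only [graphRect] at hgz
    -- bounds on i and j
    have hi2 : i ≤ ⌊b/δ⌋ := by
      rw [Int.le_floor]
      rw [le_div_iff₀ hδ]
      exact le_trans hx.1 hgx.2
    have hi1 : ⌈a/δ⌉ - 1 ≤ i := by
      have : ⌈a/δ⌉ ≤ i + 1 := by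
        rw [Int.ceil_le, div_le_iff₀ hδ]
        push_cast
        exact le_trans hgx.1 hx.2
      omega
    have hj2 : j ≤ ⌊d/δ⌋ := by
      rw [Int.le_floor, le_div_iff₀ hδ]
      exact le_trans hy.1 hgy.2
    have hj1 : ⌈c/δ⌉ - 1 ≤ j := by
      have : ⌈c/δ⌉ ≤ j + 1 := by
        rw [Int.ceil_le, div_le_iff₀ hδ]
        push_cast
        exact le_trans hgy.1 hy.2
      omega
    -- Hölder bound around the clamp point
    obtain ⟨hx₀ab, hx₀c⟩ := clamp_mem hgx hx
    obtain ⟨hy₀cd, hy₀c⟩ := clamp_mem hgy hy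
    set x₀ := max a (min ((i:ℝ)*δ) b)
    set y₀ := max c (min ((j:ℝ)*δ) d)
    have hdx : |x - x₀| ≤ δ := by
      rw [abs_sub_le_iff]
      constructor <;> push_cast at hx hx₀c ⊢ <;> nlinarith [hx.1, hx.2, hx₀c.1, hx₀c.2]
    have hdy : |y - y₀| ≤ δ := by
      rw [abs_sub_le_iff]
      constructor <;> push_cast at hy hy₀c ⊢ <;> nlinarith [hy.1, hy.2, hy₀c.1, hy₀c.2]
    have hdist : Real.sqrt ((x - x₀) ^ 2 + (y - y₀) ^ 2) ≤ Real.sqrt 2 * δ := by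
      have h1 : (x - x₀) ^ 2 ≤ δ ^ 2 := by
        rw [← sq_abs]; exact pow_le_pow_left₀ (abs_nonneg _) hdx 2
      have h2 : (y - y₀) ^ 2 ≤ δ ^ 2 := by
        rw [← sq_abs]; exact pow_le_pow_left₀ (abs_nonneg _) hdy 2
      calc Real.sqrt ((x - x₀) ^ 2 + (y - y₀) ^ 2) ≤ Real.sqrt (2 * δ ^ 2) :=
            Real.sqrt_le_sqrt (by linarith)
        _ = Real.sqrt 2 * δ := by
            rw [Real.sqrt_mul (by norm_num), Real.sqrt_sq hδ.le]
    have hholder : |f x y - F i j| ≤ R := by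
      have := hH x hgx y hgy x₀ hx₀ab y₀ hy₀cd (lt_of_le_of_lt hdist hδ2)
      exact le_trans this
        (mul_le_mul_of_nonneg_left (Real.rpow_le_rpow (Real.sqrt_nonneg _) hdist hs0) hc₀.le)
    -- bounds on k
    have habs := abs_sub_le_iff.mp hholder
    have hk2 : k ≤ ⌊(F i j + R)/δ⌋ := by
      rw [Int.le_floor, le_div_iff₀ hδ]
      have : (k:ℝ) * δ ≤ f x y := hgz ▸ hz.1
      linarith [habs.1]
    have hk1 : ⌈(F i j - R)/δ⌉ ≤ k + 1 := by
      rw [Int.ceil_le, div_le_iff₀ hδ]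
      have : f x y ≤ ((k:ℝ) + 1) * δ := by
        push_cast
        rw [← hgz]
        push_cast at hz
        exact hz.2
      push_cast
      linarith [habs.2]
    -- k-range difference bound
    have hkr : ⌊(F i j + R)/δ⌋ - ⌈(F i j - R)/δ⌉ ≤ ⌊2*R/δ⌋ := by
      rw [Int.le_floor]
      push_cast
      have h1 := Int.floor_le ((F i j + R)/δ)
      have h2 := Int.le_ceil ((F i j - R)/δ)
      have : (F i j + R)/δ - (F i j - R)/δ = 2*R/δ := by field_simp; ring
      linarith
    simp only [hT, hφ, Finset.coe_product, Set.mem_prod, Finset.mem_coe, Finset.mem_Icc]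
    refine ⟨⟨hi1, hi2⟩, ⟨hj1, hj2⟩, ?_, ?_⟩
    · linarith
    · linarith
  have hinj : Set.InjOn φ K := by
    rintro ⟨i, j, k⟩ _ ⟨i', j', k'⟩ _ h
    simp only [hφ, Prod.mk.injEq] at h
    obtain ⟨h1, h2, h3⟩ := h
    subst h1; subst h2
    simp only [Prod.mk.injEq]
    exact ⟨trivial, trivial, by linarith⟩
  have hfin : K.Finite := by
    have himg : (φ '' K).Finite := T.finite_toSet.subset (by
      rintro _ ⟨p, hp, rfl⟩; exact hmaps p hp)
    exact Set.Finite.of_finite_image himg hinj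
  refine ⟨hfin, ?_⟩
  have hcount : meshCount δ (graphRect a b c d f) = K.ncard := by
    rw [meshCount, ← Nat.card_coe_set_eq]
  have hle : K.ncard ≤ T.card := by
    have := Set.ncard_le_ncard_of_injOn φ hmaps hinj T.finite_toSet
    rwa [Set.ncard_coe_finset] at this
  rw [hcount]
  calc (K.ncard : ℝ) ≤ T.card := by exact_mod_cast hle
    _ ≤ ((b - a)/δ + 2) * (((d - c)/δ + 2) * (2 * R / δ + 2)) := by
        rw [hT, Finset.card_product, Finset.card_product]
        push_cast
        have hba : (0:ℝ) ≤ (b - a)/δ + 2 := by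
          have : (0:ℝ) ≤ (b - a)/δ := div_nonneg (by linarith) hδ.le
          linarith
        have hdc : (0:ℝ) ≤ (d - c)/δ + 2 := by
          have : (0:ℝ) ≤ (d - c)/δ := div_nonneg (by linarith) hδ.le
          linarith
        have e1 : ((Finset.Icc (⌈a/δ⌉ - 1) ⌊b/δ⌋).card : ℝ) ≤ (b - a)/δ + 2 := by
          rw [Int.card_Icc]
          apply toNat_cast_le _ hba
          push_cast
          have h1 := Int.floor_le (b/δ)
          have h2 := Int.le_ceil (a/δ)
          have h3 : b/δ - a/δ = (b-a)/δ := by ring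
          linarith
        have e2 : ((Finset.Icc (⌈c/δ⌉ - 1) ⌊d/δ⌋).card : ℝ) ≤ (d - c)/δ + 2 := by
          rw [Int.card_Icc]
          apply toNat_cast_le _ hdc
          push_cast
          have h1 := Int.floor_le (d/δ)
          have h2 := Int.le_ceil (c/δ)
          have h3 : d/δ - c/δ = (d-c)/δ := by ring
          linarith
        have e3 : ((Finset.Icc (0:ℤ) (⌊2*R/δ⌋ + 1)).card : ℝ) ≤ 2 * R / δ + 2 := by
          rw [Int.card_Icc]
          have hnn : (0:ℝ) ≤ 2*R/δ + 2 := by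
            have h4 : (0:ℝ) ≤ 2*R/δ := div_nonneg (by linarith) hδ.le
            linarith
          apply toNat_cast_le _ hnn
          push_cast
          have h1 := Int.floor_le (2*R/δ)
          linarith
        exact mul_le_mul e1 (mul_le_mul e2 e3 (Nat.cast_nonneg _) hdc)
          (mul_nonneg (Nat.cast_nonneg _) (Nat.cast_nonneg _)) hba
end Count

lemma mem_floor_cube {δ x : ℝ} (hδ : 0 < δ) :
    x ∈ Icc ((⌊x/δ⌋ : ℝ) * δ) ((⌊x/δ⌋ + 1 : ℝ) * δ) := by
  constructor
  · rw [← le_div_iff₀ hδ]; exact Int.floor_le _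
  · rw [← div_le_iff₀ hδ]; exact (Int.lt_floor_add_one _).le

lemma graph_subset_cover {a b c d δ : ℝ} (hδ : 0 < δ) (f : ℝ → ℝ → ℝ) :
    graphRect a b c d f ⊆
      ⋃ p : {p : ℤ × ℤ × ℤ | (meshCube δ p.1 p.2.1 p.2.2 ∩ graphRect a b c d f).Nonempty},
        meshCube δ p.1.1 p.1.2.1 p.1.2.2 := by
  rintro ⟨x, y, z⟩ hq
  have hmem : (x, y, z) ∈ meshCube δ ⌊x/δ⌋ ⌊y/δ⌋ ⌊z/δ⌋ :=
    ⟨mem_floor_cube hδ, mem_floor_cube hδ, mem_floor_cube hδ⟩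
  exact Set.mem_iUnion.2 ⟨⟨(⌊x/δ⌋, ⌊y/δ⌋, ⌊z/δ⌋), ⟨(x, y, z), hmem, hq⟩⟩, hmem⟩

lemma graph_nonempty_cube {a b c d δ : ℝ} (hδ : 0 < δ) (hab : a ≤ b) (hcd : c ≤ d)
    (f : ℝ → ℝ → ℝ) :
    {p : ℤ × ℤ × ℤ | (meshCube δ p.1 p.2.1 p.2.2 ∩ graphRect a b c d f).Nonempty}.Nonempty := by
  refine ⟨(⌊a/δ⌋, ⌊c/δ⌋, ⌊f a c/δ⌋), (a, c, f a c),
    ⟨mem_floor_cube hδ, mem_floor_cube hδ, mem_floor_cube hδ⟩,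
    ⟨le_refl a, hab⟩, ⟨le_refl c, hcd⟩, rfl⟩

lemma diam_meshCube {δ : ℝ} (hδ : 0 < δ) (i j k : ℤ) :
    EMetric.diam (meshCube δ i j k) ≤ ENNReal.ofReal δ := by
  apply EMetric.diam_le
  rintro ⟨x₁, y₁, z₁⟩ ⟨hx₁, hy₁, hz₁⟩ ⟨x₂, y₂, z₂⟩ ⟨hx₂, hy₂, hz₂⟩
  have key : ∀ (u v lo hi : ℝ), hi - lo ≤ δ → u ∈ Icc lo hi → v ∈ Icc lo hi →
      edist u v ≤ ENNReal.ofReal δ := by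
    intro u v lo hi hlen hu hv
    rw [edist_dist, Real.dist_eq]
    apply ENNReal.ofReal_le_ofReal
    rw [abs_sub_le_iff]
    constructor <;> [linarith [hu.1, hu.2, hv.1, hv.2]; linarith [hu.1, hu.2, hv.1, hv.2]]
  have hlenx : ∀ (m : ℤ), ((m:ℝ) + 1) * δ - (m:ℝ) * δ ≤ δ := by intro m; ring_nf; norm_num
  rw [Prod.edist_eq, Prod.edist_eq]
  refine max_le (key _ _ _ _ (hlenx i) hx₁ hx₂) (max_le ?_ ?_)
  · exact key _ _ _ _ (hlenx j) hy₁ hy₂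
  · exact key _ _ _ _ (hlenx k) hz₁ hz₂

section Count2
variable {a b c d c₀ s δ₀ : ℝ} {f : ℝ → ℝ → ℝ}

lemma mesh_count_rpow (hab : a < b) (hcd : c < d) (hc₀ : 0 < c₀) (hs0 : 0 ≤ s) (hs1 : s ≤ 1)
    (hδ₀ : 0 < δ₀)
    (hH : ∀ t ∈ Icc a b, ∀ u ∈ Icc c d, ∀ x ∈ Icc a b, ∀ y ∈ Icc c d,
        Real.sqrt ((t - x) ^ 2 + (u - y) ^ 2) < δ₀ →
        |f t u - f x y| ≤ c₀ * Real.sqrt ((t - x) ^ 2 + (u - y) ^ 2) ^ s) :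
    ∃ C : ℝ, 1 ≤ C ∧ ∀ δ : ℝ, 0 < δ → δ ≤ 1 → Real.sqrt 2 * δ < δ₀ →
      (meshCount δ (graphRect a b c d f) : ℝ) ≤ C * δ ^ (s - 3) := by
  have hsq : (0:ℝ) < Real.sqrt 2 ^ s := Real.rpow_pos_of_pos (by positivity) s
  refine ⟨(b - a + 2) * ((d - c + 2) * (2 * c₀ * Real.sqrt 2 ^ s + 2)), ?_, ?_⟩
  · have h1 : (1:ℝ) ≤ b - a + 2 := by linarith
    have h2 : (1:ℝ) ≤ d - c + 2 := by linarith
    have h3 : (1:ℝ) ≤ 2 * c₀ * Real.sqrt 2 ^ s + 2 := by nlinarith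
    have h23 : (1:ℝ) ≤ (d - c + 2) * (2 * c₀ * Real.sqrt 2 ^ s + 2) := by nlinarith
    nlinarith
  intro δ hδ hδ1 hδ2
  have key := (mesh_key hab hcd hc₀ hs0 hδ₀ hH hδ hδ2).2
  have hinv : (1:ℝ) ≤ δ⁻¹ := by
    have h := mul_inv_cancel₀ hδ.ne'
    nlinarith [inv_pos.mpr hδ]
  have hpow1 : (1:ℝ) ≤ δ ^ (s - 1) := by
    have := Real.rpow_le_rpow_of_exponent_ge hδ hδ1 (by linarith : s - 1 ≤ 0)
    rwa [Real.rpow_zero] at this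
  have hmul : (Real.sqrt 2 * δ) ^ s = Real.sqrt 2 ^ s * δ ^ s :=
    Real.mul_rpow (Real.sqrt_nonneg 2) hδ.le
  have hsplit : δ ^ (s - 1) = δ ^ s * δ⁻¹ := by
    rw [show s - 1 = s + (-1) by ring, Real.rpow_add hδ, Real.rpow_neg_one]
  have g1 : (b - a)/δ + 2 ≤ (b - a + 2) * δ⁻¹ := by
    have : (b - a)/δ = (b - a) * δ⁻¹ := div_eq_mul_inv _ _
    nlinarith
  have g2 : (d - c)/δ + 2 ≤ (d - c + 2) * δ⁻¹ := by
    have : (d - c)/δ = (d - c) * δ⁻¹ := div_eq_mul_inv _ _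
    nlinarith
  have hδs : (0:ℝ) < δ ^ s := Real.rpow_pos_of_pos hδ s
  have g3 : 2 * (c₀ * (Real.sqrt 2 * δ) ^ s) / δ + 2 ≤
      (2 * c₀ * Real.sqrt 2 ^ s + 2) * δ ^ (s - 1) := by
    rw [hmul, hsplit]
    have : 2 * (c₀ * (Real.sqrt 2 ^ s * δ ^ s)) / δ = 2 * c₀ * Real.sqrt 2 ^ s * (δ ^ s * δ⁻¹) := by
      rw [div_eq_mul_inv]; ring
    rw [this]
    nlinarith [mul_pos hδs (inv_pos.mpr hδ)]
  have hne1 : (0:ℝ) ≤ (d - c)/δ + 2 := by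
    have : (0:ℝ) ≤ (d - c)/δ := div_nonneg (by linarith) hδ.le
    linarith
  have hne3 : (0:ℝ) ≤ 2 * (c₀ * (Real.sqrt 2 * δ) ^ s) / δ + 2 := by
    have h0 : (0:ℝ) ≤ (Real.sqrt 2 * δ) ^ s := Real.rpow_nonneg (by positivity) s
    have : (0:ℝ) ≤ 2 * (c₀ * (Real.sqrt 2 * δ) ^ s) / δ := by positivity
    linarith
  calc (meshCount δ (graphRect a b c d f) : ℝ)
      ≤ ((b - a)/δ + 2) * (((d - c)/δ + 2) * (2 * (c₀ * (Real.sqrt 2 * δ) ^ s) / δ + 2)) := key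
    _ ≤ ((b - a + 2) * δ⁻¹) * (((d - c + 2) * δ⁻¹) * ((2 * c₀ * Real.sqrt 2 ^ s + 2) * δ ^ (s - 1))) := by
        apply mul_le_mul g1 _ (mul_nonneg hne1 hne3)
          (mul_nonneg (by linarith) (inv_pos.mpr hδ).le)
        apply mul_le_mul g2 g3 hne3 (mul_nonneg (by linarith) (inv_pos.mpr hδ).le)
    _ = (b - a + 2) * ((d - c + 2) * (2 * c₀ * Real.sqrt 2 ^ s + 2)) * δ ^ (s - 3) := by
        rw [show s - 3 = -1 + (-1 + (s - 1)) by ring, Real.rpow_add hδ, Real.rpow_add hδ,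
          Real.rpow_neg_one]
        ring

lemma mesh_count_pos (hab : a < b) (hcd : c < d) (hc₀ : 0 < c₀) (hs0 : 0 ≤ s) (hδ₀ : 0 < δ₀)
    (hH : ∀ t ∈ Icc a b, ∀ u ∈ Icc c d, ∀ x ∈ Icc a b, ∀ y ∈ Icc c d,
        Real.sqrt ((t - x) ^ 2 + (u - y) ^ 2) < δ₀ →
        |f t u - f x y| ≤ c₀ * Real.sqrt ((t - x) ^ 2 + (u - y) ^ 2) ^ s)
    {δ : ℝ} (hδ : 0 < δ) (hδ2 : Real.sqrt 2 * δ < δ₀) :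
    1 ≤ meshCount δ (graphRect a b c d f) := by
  have hfin := (mesh_key hab hcd hc₀ hs0 hδ₀ hH hδ hδ2).1
  have hne := graph_nonempty_cube hδ hab.le hcd.le f
  rw [meshCount]
  haveI := hfin.to_subtype
  haveI := hne.to_subtype
  exact Nat.one_le_iff_ne_zero.mpr Nat.card_pos.ne'
end Count2


section Main
variable {a b c d c₀ s δ₀ : ℝ} {f : ℝ → ℝ → ℝ}

lemma sqrt_two_le_two : Real.sqrt 2 ≤ 2 := by
  nlinarith [Real.sq_sqrt (show (0:ℝ) ≤ 2 by norm_num), Real.sqrt_nonneg 2]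

lemma main_of_local (hab : a < b) (hcd : c < d) (hc₀ : 0 < c₀) (hs0 : 0 ≤ s) (hs1 : s ≤ 1)
    (hδ₀ : 0 < δ₀)
    (hH : ∀ t ∈ Icc a b, ∀ u ∈ Icc c d, ∀ x ∈ Icc a b, ∀ y ∈ Icc c d,
        Real.sqrt ((t - x) ^ 2 + (u - y) ^ 2) < δ₀ →
        |f t u - f x y| ≤ c₀ * Real.sqrt ((t - x) ^ 2 + (u - y) ^ 2) ^ s) :
    dimH (graphRect a b c d f) ≤ ENNReal.ofReal (lowerBoxDim (graphRect a b c d f)) ∧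
    lowerBoxDim (graphRect a b c d f) ≤ upperBoxDim (graphRect a b c d f) ∧
    upperBoxDim (graphRect a b c d f) ≤ 3 - s := by
  set G := graphRect a b c d f with hG
  set ratio : ℝ → ℝ := fun δ => Real.log (meshCount δ G) / (-Real.log δ) with hratio
  obtain ⟨C, hC1, hC⟩ := mesh_count_rpow hab hcd hc₀ hs0 hs1 hδ₀ hH
  have hCpos : 0 < C := lt_of_lt_of_le one_pos hC1
  set τ : ℝ := min (1/2) (δ₀/2) with hτ
  have hτpos : 0 < τ := lt_min (by norm_num) (by linarith)
  have hcond : ∀ δ ∈ Ioo (0:ℝ) τ, 0 < δ ∧ δ < 1 ∧ Real.sqrt 2 * δ < δ₀ := by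
    rintro δ ⟨h1, h2⟩
    have hδτ1 : δ < 1/2 := lt_of_lt_of_le h2 (min_le_left _ _)
    have hδτ2 : δ < δ₀/2 := lt_of_lt_of_le h2 (min_le_right _ _)
    refine ⟨h1, by linarith, ?_⟩
    have := mul_le_mul_of_nonneg_right sqrt_two_le_two h1.le
    linarith
  have hEv : ∀ᶠ δ in 𝓝[>] (0:ℝ), δ ∈ Ioo (0:ℝ) τ :=
    eventually_of_mem (Ioo_mem_nhdsGT_of_mem ⟨le_refl 0, hτpos⟩) (fun x hx => hx)
  have hbound : ∀ δ ∈ Ioo (0:ℝ) τ,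
      0 ≤ ratio δ ∧ ratio δ ≤ (3 - s) + Real.log C / (-Real.log δ) := by
    intro δ hδIoo
    obtain ⟨hδ, hδ1, hδ2⟩ := hcond δ hδIoo
    have hlogδ : 0 < -Real.log δ := by
      have := Real.log_neg hδ hδ1
      linarith
    have hN1 : 1 ≤ meshCount δ G := mesh_count_pos hab hcd hc₀ hs0 hδ₀ hH hδ hδ2
    have hN1' : (1:ℝ) ≤ (meshCount δ G : ℝ) := by exact_mod_cast hN1
    have hlogN : 0 ≤ Real.log (meshCount δ G) := Real.log_nonneg hN1'
    refine ⟨div_nonneg hlogN hlogδ.le, ?_⟩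
    have hNle := hC δ hδ hδ1.le hδ2
    have hrp : (0:ℝ) < δ ^ (s - 3) := Real.rpow_pos_of_pos hδ _
    have hlog2 : Real.log (meshCount δ G) ≤ Real.log C + (s - 3) * Real.log δ := by
      have h := Real.log_le_log (by linarith : (0:ℝ) < (meshCount δ G : ℝ)) hNle
      rwa [Real.log_mul hCpos.ne' hrp.ne', Real.log_rpow hδ] at h
    rw [hratio]
    rw [div_le_iff₀ hlogδ]
    have hcancel : Real.log C / (-Real.log δ) * (-Real.log δ) = Real.log C :=
      div_mul_cancel₀ _ hlogδ.ne'
    nlinarith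
  have hub : ∀ ε : ℝ, 0 < ε → ∀ᶠ δ in 𝓝[>] (0:ℝ), ratio δ ≤ (3 - s) + ε := by
    intro ε hε
    have htend : Tendsto (fun δ : ℝ => Real.log C / (-Real.log δ)) (𝓝[>] (0:ℝ)) (𝓝 0) :=
      Filter.Tendsto.div_atTop tendsto_const_nhds
        (tendsto_neg_atBot_atTop.comp Real.tendsto_log_nhdsGT_zero)
    filter_upwards [hEv, htend.eventually_lt_const hε] with δ h1 h2
    have := (hbound δ h1).2
    linarith
  have hBddAbove : IsBoundedUnder (· ≤ ·) (𝓝[>] (0:ℝ)) ratio :=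
    isBoundedUnder_of_eventually_le (a := (3 - s) + 1) (hub 1 one_pos)
  have hBddBelow : IsBoundedUnder (· ≥ ·) (𝓝[>] (0:ℝ)) ratio :=
    isBoundedUnder_of_eventually_ge (a := (0:ℝ)) (hEv.mono (fun δ h => (hbound δ h).1))
  have hL0 : 0 ≤ lowerBoxDim G :=
    le_liminf_of_le hBddAbove.isCoboundedUnder_ge (hEv.mono (fun δ h => (hbound δ h).1))
  have B1 : lowerBoxDim G ≤ upperBoxDim G := by
    unfold lowerBoxDim upperBoxDim
    exact liminf_le_limsup hBddAbove hBddBelow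
  refine ⟨?_, B1, ?_⟩
  · -- dimH bound
    have key : ∀ t' : ℝ, lowerBoxDim G < t' → dimH G ≤ ENNReal.ofReal t' := by
      intro t' ht'
      have ht'0 : 0 ≤ t' := le_trans hL0 ht'.le
      have hfreq : ∃ᶠ δ in 𝓝[>] (0:ℝ), ratio δ < t' :=
        frequently_lt_of_liminf_lt hBddAbove.isCoboundedUnder_ge ht'
      have hseq : ∀ n : ℕ, ∃ δ : ℝ, (ratio δ < t' ∧ δ ∈ Ioo (0:ℝ) τ) ∧ δ < 1/(n+1) := by
        intro n
        have hmem : Iio (1/((n:ℝ)+1)) ∈ 𝓝[>] (0:ℝ) :=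
          mem_nhdsWithin_of_mem_nhds (Iio_mem_nhds (by positivity))
        exact ((hfreq.and_eventually hEv).and_eventually
          (eventually_of_mem hmem (fun x hx => hx))).exists
      choose δn hδn using hseq
      have hδpos : ∀ n, 0 < δn n := fun n => ((hδn n).1.2).1
      have hNle : ∀ n, (meshCount (δn n) G : ℝ) ≤ (δn n) ^ (-t') := by
        intro n
        obtain ⟨⟨hr, hIoo⟩, _⟩ := hδn n
        obtain ⟨hδ, hδ1, hδ2⟩ := hcond _ hIoo
        have hlogδ : 0 < -Real.log (δn n) := by
          have := Real.log_neg hδ hδ1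
          linarith
        have hN1 : (1:ℝ) ≤ (meshCount (δn n) G : ℝ) := by
          exact_mod_cast mesh_count_pos hab hcd hc₀ hs0 hδ₀ hH hδ hδ2
        have hlt : Real.log (meshCount (δn n) G) < t' * (-Real.log (δn n)) :=
          (div_lt_iff₀ hlogδ).mp hr
        have : (meshCount (δn n) G : ℝ) < Real.exp (t' * (-Real.log (δn n))) := by
          calc (meshCount (δn n) G : ℝ) = Real.exp (Real.log (meshCount (δn n) G)) :=
                (Real.exp_log (by linarith)).symm
            _ < _ := Real.exp_lt_exp.mpr hlt
        refine le_of_lt (lt_of_lt_of_le this (le_of_eq ?_))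
        rw [Real.rpow_def_of_pos hδ]
        ring_nf
      -- Hausdorff measure estimate
      set KK : ℕ → Type := fun n =>
        {p : ℤ × ℤ × ℤ | (meshCube (δn n) p.1 p.2.1 p.2.2 ∩ G).Nonempty} with hKK
      have hfinK : ∀ n, Finite (KK n) := by
        intro n
        obtain ⟨⟨_, hIoo⟩, _⟩ := hδn n
        obtain ⟨hδ, _, hδ2⟩ := hcond _ hIoo
        exact ((mesh_key hab hcd hc₀ hs0 hδ₀ hH hδ hδ2).1).to_subtype
      have hr : Tendsto (fun n => ENNReal.ofReal (δn n)) atTop (𝓝 0) := by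
        have h0 : Tendsto δn atTop (𝓝 0) := by
          apply squeeze_zero (fun n => (hδpos n).le) (fun n => ((hδn n).2).le)
          exact tendsto_one_div_add_atTop_nhds_zero_nat
        simpa using ENNReal.tendsto_ofReal h0
      have hμ := Measure.hausdorffMeasure_le_liminf_tsum (X := ℝ × ℝ × ℝ) (ι := KK) t' G
        (fun n => ENNReal.ofReal (δn n))
        hr (fun n (p : KK n) => meshCube (δn n) p.1.1 p.1.2.1 p.1.2.2)
        (Eventually.of_forall (fun n (p : KK n) => diam_meshCube (hδpos n) _ _ _))
        (Eventually.of_forall (fun n => graph_subset_cover (hδpos n) f))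
      have hterm : ∀ n, (∑' p : KK n,
          EMetric.diam (meshCube (δn n) p.1.1 p.1.2.1 p.1.2.2) ^ t') ≤ 1 := by
        intro n
        haveI := hfinK n
        haveI : Fintype (KK n) := Fintype.ofFinite _
        calc (∑' p : KK n, EMetric.diam (meshCube (δn n) p.1.1 p.1.2.1 p.1.2.2) ^ t')
            ≤ ∑' _ : KK n, (ENNReal.ofReal (δn n)) ^ t' := by
              apply ENNReal.tsum_le_tsum
              intro p
              exact ENNReal.rpow_le_rpow (diam_meshCube (hδpos n) _ _ _) ht'0
          _ = (Fintype.card (KK n)) * (ENNReal.ofReal (δn n)) ^ t' := by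
              rw [tsum_fintype]
              simp [Finset.sum_const, nsmul_eq_mul]
          _ ≤ ENNReal.ofReal ((δn n) ^ (-t')) * (ENNReal.ofReal (δn n)) ^ t' := by
              apply mul_le_mul_left
              have hcard : (Fintype.card (KK n) : ℝ) = (meshCount (δn n) G : ℝ) := by
                rw [meshCount, Nat.card_eq_fintype_card]
              calc (Fintype.card (KK n) : ℝ≥0∞)
                  = ENNReal.ofReal (Fintype.card (KK n) : ℝ) := by
                    rw [ENNReal.ofReal_natCast]
                _ ≤ ENNReal.ofReal ((δn n) ^ (-t')) := by
                    apply ENNReal.ofReal_le_ofReal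
                    rw [hcard]
                    exact hNle n
          _ = 1 := by
              rw [ENNReal.ofReal_rpow_of_pos (hδpos n),
                ← ENNReal.ofReal_mul (Real.rpow_nonneg (hδpos n).le _),
                ← Real.rpow_add (hδpos n)]
              norm_num
      have hμ1 : μH[t'] G ≤ 1 := by
        refine le_trans hμ ?_
        calc liminf (fun n => ∑' p : KK n,
              EMetric.diam (meshCube (δn n) p.1.1 p.1.2.1 p.1.2.2) ^ t') atTop
            ≤ liminf (fun _ : ℕ => (1 : ℝ≥0∞)) atTop :=
              liminf_le_liminf (Eventually.of_forall hterm)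
          _ = 1 := liminf_const 1
      have : dimH G ≤ (t'.toNNReal : ℝ≥0∞) := by
        apply dimH_le_of_hausdorffMeasure_ne_top (d := t'.toNNReal)
        rw [show ((t'.toNNReal : ℝ)) = t' from Real.coe_toNNReal _ ht'0]
        exact ne_top_of_le_ne_top ENNReal.one_ne_top hμ1
      exact this
    apply ENNReal.le_of_forall_pos_le_add
    intro ε hε _
    have h1 := key (lowerBoxDim G + ε) (by
      have : (0:ℝ) < ε := hε
      linarith)
    rwa [ENNReal.ofReal_add hL0 (by positivity : (0:ℝ) ≤ (ε:ℝ)),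
      ENNReal.ofReal_coe_nnreal] at h1
  · -- upper box dim
    apply le_of_forall_pos_le_add
    intro ε hε
    exact limsup_le_of_le hBddBelow.isCoboundedUnder_le (hub ε hε)
end Main


/-- a Hölder condition of exponent `s` gives the upper bound
`3 - s` on the fractal dimensions of the graph; the same holds if the Hölder
condition is only assumed for nearby pairs of points. -/
theorem dim_graph_le_of_holder (a b c d c₀ s : ℝ) (hab : a < b) (hcd : c < d)
    (hc₀ : 0 < c₀) (hs0 : 0 ≤ s) (hs1 : s ≤ 1)
    (f : ℝ → ℝ → ℝ)
    (hf : ContinuousOn (fun pt : ℝ × ℝ => f pt.1 pt.2) (Icc a b ×ˢ Icc c d)) :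
    ((∀ t ∈ Icc a b, ∀ u ∈ Icc c d, ∀ x ∈ Icc a b, ∀ y ∈ Icc c d,
        |f t u - f x y| ≤ c₀ * Real.sqrt ((t - x) ^ 2 + (u - y) ^ 2) ^ s) →
      dimH (graphRect a b c d f) ≤ ENNReal.ofReal (lowerBoxDim (graphRect a b c d f)) ∧
      lowerBoxDim (graphRect a b c d f) ≤ upperBoxDim (graphRect a b c d f) ∧
      upperBoxDim (graphRect a b c d f) ≤ 3 - s) ∧
    (∀ δ > (0 : ℝ),
      (∀ t ∈ Icc a b, ∀ u ∈ Icc c d, ∀ x ∈ Icc a b, ∀ y ∈ Icc c d,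
        Real.sqrt ((t - x) ^ 2 + (u - y) ^ 2) < δ →
        |f t u - f x y| ≤ c₀ * Real.sqrt ((t - x) ^ 2 + (u - y) ^ 2) ^ s) →
      dimH (graphRect a b c d f) ≤ ENNReal.ofReal (lowerBoxDim (graphRect a b c d f)) ∧
      lowerBoxDim (graphRect a b c d f) ≤ upperBoxDim (graphRect a b c d f) ∧
      upperBoxDim (graphRect a b c d f) ≤ 3 - s) := by
  constructor
  · intro h
    exact main_of_local hab hcd hc₀ hs0 hs1 one_pos
      (fun t ht u hu x hx y hy _ => h t ht u hu x hx y hy)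
  · intro δ hδ h
    exact main_of_local hab hcd hc₀ hs0 hs1 hδ h
end

section
/- Let f : [a,b] × [c,d] → ℝ be continuous and suppose there exist numbers c₀ > 0, δ₀ > 0 and 0 ≤ s ≤ 1 with the property that for each (x,y) ∈ [a,b] × [c,d] and each 0 < δ < δ₀ there exists (t,u) ∈ [a,b] × [c,d] with ‖(t,u) - (x,y)‖₂ ≤ δ and |f(t,u) - f(x,y)| ≥ c₀ δ^{s}. Then the lower box dimension satisfies \underline{dim}_B(G(f)) ≥ 3 - s. -/
open MeasureTheory Set Filter
open scoped Classical

lemma fiber_bound (a b c d δ L : ℝ) (f : ℝ → ℝ → ℝ)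
    (hf : ContinuousOn (fun pt : ℝ × ℝ => f pt.1 pt.2) (Icc a b ×ˢ Icc c d))
    (hδ : 0 < δ) (i j : ℤ) (x y t u : ℝ)
    (hx : x ∈ Icc a b) (hy : y ∈ Icc c d) (ht : t ∈ Icc a b) (hu : u ∈ Icc c d)
    (hxQ : x ∈ Icc ((i : ℝ) * δ) (((i : ℝ) + 1) * δ))
    (hyQ : y ∈ Icc ((j : ℝ) * δ) (((j : ℝ) + 1) * δ))
    (htQ : t ∈ Icc ((i : ℝ) * δ) (((i : ℝ) + 1) * δ))
    (huQ : u ∈ Icc ((j : ℝ) * δ) (((j : ℝ) + 1) * δ))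
    (hLd : L ≤ |f t u - f x y|)
    (Tf : Finset (ℤ × ℤ × ℤ))
    (hTf : ∀ k : ℤ, (meshCube δ i j k ∩ graphRect a b c d f).Nonempty → (i, j, k) ∈ Tf) :
    L / (2 * δ) ≤ ((Tf.filter (fun r => (r.1, r.2.1) = (i, j))).card : ℝ) := by
  classical
  set z1 := min (f x y) (f t u) with hz1
  set z2 := max (f x y) (f t u) with hz2
  have hzdiff : L ≤ z2 - z1 := by
    rw [hz1, hz2]
    have := max_sub_min_eq_abs (f x y) (f t u)
    rw [this]; exact hLd
  -- the sub-rectangle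
  set R : Set (ℝ × ℝ) := Icc (max a ((i : ℝ) * δ)) (min b (((i : ℝ) + 1) * δ)) ×ˢ
      Icc (max c ((j : ℝ) * δ)) (min d (((j : ℝ) + 1) * δ)) with hR
  have hRD : R ⊆ Icc a b ×ˢ Icc c d := by
    rintro ⟨p1, p2⟩ ⟨⟨h1, h2⟩, h3, h4⟩
    exact ⟨⟨le_trans (le_max_left _ _) h1, le_trans h2 (min_le_left _ _)⟩,
      ⟨le_trans (le_max_left _ _) h3, le_trans h4 (min_le_left _ _)⟩⟩
  have hRQ : ∀ p : ℝ × ℝ, p ∈ R → p.1 ∈ Icc ((i : ℝ) * δ) (((i : ℝ) + 1) * δ) ∧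
      p.2 ∈ Icc ((j : ℝ) * δ) (((j : ℝ) + 1) * δ) := by
    rintro ⟨p1, p2⟩ ⟨⟨h1, h2⟩, h3, h4⟩
    exact ⟨⟨le_trans (le_max_right _ _) h1, le_trans h2 (min_le_right _ _)⟩,
      ⟨le_trans (le_max_right _ _) h3, le_trans h4 (min_le_right _ _)⟩⟩
  have hxyR : ((x, y) : ℝ × ℝ) ∈ R := by
    refine ⟨⟨max_le hx.1 hxQ.1, le_min hx.2 hxQ.2⟩, ⟨max_le hy.1 hyQ.1, le_min hy.2 hyQ.2⟩⟩
  have htuR : ((t, u) : ℝ × ℝ) ∈ R := by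
    refine ⟨⟨max_le ht.1 htQ.1, le_min ht.2 htQ.2⟩, ⟨max_le hu.1 huQ.1, le_min hu.2 huQ.2⟩⟩
  have hRpre : IsPreconnected R := (isPreconnected_Icc).prod isPreconnected_Icc
  have hRcont : ContinuousOn (fun pt : ℝ × ℝ => f pt.1 pt.2) R := hf.mono hRD
  have hIVT : ∀ z : ℝ, z1 ≤ z → z ≤ z2 → ∃ p : ℝ × ℝ, p ∈ R ∧ f p.1 p.2 = z := by
    intro z h1 h2
    rcases le_total (f x y) (f t u) with hc | hc
    · have := hRpre.intermediate_value hxyR htuR hRcont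
      have hmem : z ∈ Icc (f x y) (f t u) := by
        constructor
        · exact le_trans (by rw [hz1]; exact (min_eq_left hc).symm.le) h1
        · exact le_trans h2 (by rw [hz2]; exact (max_eq_right hc).le)
      obtain ⟨p, hp, hpz⟩ := this hmem
      exact ⟨p, hp, hpz⟩
    · have := hRpre.intermediate_value htuR hxyR hRcont
      have hmem : z ∈ Icc (f t u) (f x y) := by
        constructor
        · exact le_trans (by rw [hz1]; exact (min_eq_right hc).symm.le) h1
        · exact le_trans h2 (by rw [hz2]; exact (max_eq_left hc).le)
      obtain ⟨p, hp, hpz⟩ := this hmem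
      exact ⟨p, hp, hpz⟩
  have hP : ∀ k : ℤ, z1 ≤ (k : ℝ) * δ → (k : ℝ) * δ ≤ z2 → (i, j, k) ∈ Tf := by
    intro k h1 h2
    obtain ⟨⟨p1, p2⟩, hpR, hpz⟩ := hIVT ((k : ℝ) * δ) h1 h2
    apply hTf
    refine ⟨(p1, p2, (k : ℝ) * δ), ?_, ?_⟩
    · obtain ⟨hq1, hq2⟩ := hRQ _ hpR
      refine ⟨hq1, hq2, ⟨le_refl _, ?_⟩⟩
      show (k : ℝ) * δ ≤ ((k : ℝ) + 1) * δ
      nlinarith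
    · obtain ⟨hd1, hd2⟩ := hRD hpR
      exact ⟨hd1, hd2, hpz.symm⟩
  have hP0 : (i, j, ⌊f x y / δ⌋) ∈ Tf := by
    apply hTf
    refine ⟨(x, y, f x y), ?_, ?_⟩
    · refine ⟨hxQ, hyQ, ?_, ?_⟩
      · calc (⌊f x y / δ⌋ : ℝ) * δ ≤ (f x y / δ) * δ :=
              mul_le_mul_of_nonneg_right (Int.floor_le _) hδ.le
          _ = f x y := by field_simp
      · have h1 : f x y / δ < (⌊f x y / δ⌋ : ℝ) + 1 := Int.lt_floor_add_one _
        have : f x y < ((⌊f x y / δ⌋ : ℝ) + 1) * δ := by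
          rw [← div_lt_iff₀ hδ] at *; linarith
        linarith
    · exact ⟨hx, hy, rfl⟩
  set F := Tf.filter (fun r => (r.1, r.2.1) = (i, j)) with hF
  have hone : 1 ≤ F.card := by
    apply Finset.card_pos.2
    exact ⟨(i, j, ⌊f x y / δ⌋), Finset.mem_filter.2 ⟨hP0, rfl⟩⟩
  have htwo : (z2 - z1) / δ - 1 ≤ (F.card : ℝ) := by
    set k1 := ⌈z1 / δ⌉ with hk1
    set k2 := ⌊z2 / δ⌋ with hk2
    have hsub : (Finset.Icc k1 k2).image (fun k => (i, j, k)) ⊆ F := by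
      intro r hr
      obtain ⟨k, hk, rfl⟩ := Finset.mem_image.1 hr
      rw [Finset.mem_Icc] at hk
      refine Finset.mem_filter.2 ⟨hP k ?_ ?_, rfl⟩
      · have : z1 / δ ≤ (k : ℝ) := le_trans (Int.le_ceil _) (by exact_mod_cast hk.1)
        calc z1 = (z1 / δ) * δ := by field_simp
          _ ≤ (k : ℝ) * δ := mul_le_mul_of_nonneg_right this hδ.le
      · have : (k : ℝ) ≤ z2 / δ := le_trans (by exact_mod_cast hk.2) (Int.floor_le _)
        calc (k : ℝ) * δ ≤ (z2 / δ) * δ := mul_le_mul_of_nonneg_right this hδ.le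
          _ = z2 := by field_simp
    have hcard : (Finset.Icc k1 k2).card ≤ F.card := by
      have hinj : Function.Injective (fun k : ℤ => ((i, j, k) : ℤ × ℤ × ℤ)) := by
        intro k1 k2 h; simpa using h
      calc (Finset.Icc k1 k2).card = ((Finset.Icc k1 k2).image (fun k => (i, j, k))).card :=
            (Finset.card_image_of_injective _ hinj).symm
        _ ≤ F.card := Finset.card_le_card hsub
    have h1 : ((Finset.Icc k1 k2).card : ℝ) = ((k2 + 1 - k1).toNat : ℝ) := by
      rw [Int.card_Icc]
    have h2 : ((k2 + 1 - k1 : ℤ) : ℝ) ≤ ((k2 + 1 - k1).toNat : ℝ) := by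
      exact_mod_cast Int.self_le_toNat _
    have h3 : z2 / δ - 1 < (k2 : ℝ) := Int.sub_one_lt_floor _
    have h4 : (k1 : ℝ) < z1 / δ + 1 := Int.ceil_lt_add_one _
    have h5 : ((Finset.Icc k1 k2).card : ℝ) ≤ (F.card : ℝ) := by exact_mod_cast hcard
    have h6 : (z2 - z1) / δ = z2 / δ - z1 / δ := by ring
    push_cast at h1 h2
    linarith
  rcases le_or_gt L (2 * δ) with hc | hc
  · calc L / (2 * δ) ≤ 1 := by
          rw [div_le_one (by positivity)]; exact hc
      _ ≤ (F.card : ℝ) := by exact_mod_cast hone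
  · have e1 : L / (2 * δ) ≤ L / δ - 1 := by
      have h6 : L / δ - 1 - L / (2 * δ) = (L - 2 * δ) / (2 * δ) := by
        field_simp; ring
      have h7 : (0:ℝ) ≤ (L - 2 * δ) / (2 * δ) :=
        div_nonneg (by linarith) (by positivity)
      linarith
    have e2 : L / δ - 1 ≤ (z2 - z1) / δ - 1 := by
      have : L / δ ≤ (z2 - z1) / δ := by gcongr
      linarith
    linarith

set_option maxHeartbeats 2000000 in
/-- a reverse Hölder-type oscillation condition of exponent `s`
gives the lower bound `3 - s` on the lower box dimension of the graph. -/
theorem lowerBoxDim_graph_ge (a b c d c₀ δ₀ s : ℝ) (hab : a < b) (hcd : c < d)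
    (hc₀ : 0 < c₀) (hδ₀ : 0 < δ₀) (hs0 : 0 ≤ s) (hs1 : s ≤ 1)
    (f : ℝ → ℝ → ℝ)
    (hf : ContinuousOn (fun pt : ℝ × ℝ => f pt.1 pt.2) (Icc a b ×ˢ Icc c d))
    (hosc : ∀ x ∈ Icc a b, ∀ y ∈ Icc c d, ∀ δ : ℝ, 0 < δ → δ < δ₀ →
      ∃ t ∈ Icc a b, ∃ u ∈ Icc c d,
        Real.sqrt ((t - x) ^ 2 + (u - y) ^ 2) ≤ δ ∧
        c₀ * δ ^ s ≤ |f t u - f x y|) :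
    3 - s ≤ lowerBoxDim (graphRect a b c d f) := by
  classical
  obtain ⟨M, hMn⟩ := (isCompact_Icc.prod isCompact_Icc).exists_bound_of_continuousOn hf
  have hM : ∀ x ∈ Icc a b, ∀ y ∈ Icc c d, |f x y| ≤ M := by
    intro x hx y hy
    simpa [Real.norm_eq_abs] using hMn (x, y) (Set.mk_mem_prod hx hy)
  have hM0 : 0 ≤ M :=
    (abs_nonneg _).trans (hM a (Set.left_mem_Icc.2 hab.le) c (Set.left_mem_Icc.2 hcd.le))
  set G := graphRect a b c d f with hGdef
  -- index bound helper
  have hidx : ∀ δ : ℝ, 0 < δ → ∀ i : ℤ, ∀ x lo hi : ℝ,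
      (i : ℝ) * δ ≤ x → x ≤ ((i : ℝ) + 1) * δ → lo ≤ x → x ≤ hi →
      ⌊lo / δ⌋ - 1 ≤ i ∧ i ≤ ⌊hi / δ⌋ := by
    intro δ hδ i x lo hi h1 h2 h3 h4
    constructor
    · have ha : lo / δ ≤ (i : ℝ) + 1 := by
        rw [div_le_iff₀ hδ]; linarith
      have hb : (⌊lo / δ⌋ : ℝ) ≤ (i : ℝ) + 1 := le_trans (Int.floor_le _) ha
      have : ⌊lo / δ⌋ ≤ i + 1 := by exact_mod_cast hb
      omega
    · apply Int.le_floor.2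
      rw [le_div_iff₀ hδ]; linarith
  -- finiteness of the cube-index set
  have hfin : ∀ δ : ℝ, 0 < δ →
      ({p : ℤ × ℤ × ℤ | (meshCube δ p.1 p.2.1 p.2.2 ∩ G).Nonempty}).Finite := by
    intro δ hδ
    apply Set.Finite.subset (((Set.finite_Icc (⌊a/δ⌋ - 1) ⌊b/δ⌋).prod
      ((Set.finite_Icc (⌊c/δ⌋ - 1) ⌊d/δ⌋).prod (Set.finite_Icc (⌊(-M)/δ⌋ - 1) ⌊M/δ⌋))))
    rintro ⟨i, j, k⟩ ⟨⟨X, Y, Z⟩, ⟨hX, hY, hZ⟩, hXab, hYcd, hZf⟩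
    dsimp only at hX hY hZ hXab hYcd hZf
    have hfb : |f X Y| ≤ M := hM X hXab Y hYcd
    rw [abs_le] at hfb
    refine ⟨?_, ?_, ?_⟩
    · exact Set.mem_Icc.2 ((hidx δ hδ i X a b hX.1 hX.2 hXab.1 hXab.2))
    · exact Set.mem_Icc.2 ((hidx δ hδ j Y c d hY.1 hY.2 hYcd.1 hYcd.2))
    · exact Set.mem_Icc.2 ((hidx δ hδ k Z (-M) M hZ.1 hZ.2 (by rw [hZf]; linarith)
        (by rw [hZf]; linarith)))
  have hcount : ∀ δ : ℝ, (hδ : 0 < δ) → meshCount δ G = ((hfin δ hδ).toFinset).card := by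
    intro δ hδ
    rw [meshCount, Nat.card_coe_set_eq, Set.ncard_eq_toFinset_card _ (hfin δ hδ)]
  -- upper bound on the count
  set B : ℝ := (b - a + 3) * (d - c + 3) * (2 * M + 3) with hBdef
  have hB1 : 1 ≤ B := by
    have h1 : (3:ℝ) ≤ b - a + 3 := by linarith
    have h2 : (3:ℝ) ≤ d - c + 3 := by linarith
    have h3 : (3:ℝ) ≤ 2 * M + 3 := by linarith
    have h12 : (9:ℝ) ≤ (b - a + 3) * (d - c + 3) := by nlinarith
    rw [hBdef]; nlinarith
  have hupper : ∀ δ : ℝ, 0 < δ → δ ≤ 1 → (meshCount δ G : ℝ) ≤ B / δ ^ 3 := by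
    intro δ hδ hδ1
    have hfac : ∀ (lo hi : ℝ), 0 ≤ hi - lo →
        (((Finset.Icc (⌊lo/δ⌋ - 1) ⌊hi/δ⌋).card : ℝ)) ≤ (hi - lo + 3) / δ := by
      intro lo hi hlh
      rw [Int.card_Icc]
      have e0 : (((⌊hi/δ⌋ + 1 - (⌊lo/δ⌋ - 1)).toNat : ℤ) : ℝ) =
          max ((⌊hi/δ⌋ + 1 - (⌊lo/δ⌋ - 1) : ℤ) : ℝ) 0 := by
        rw [Int.toNat_eq_max]; push_cast; rfl
      have h1 : ((⌊hi/δ⌋ : ℝ)) ≤ hi / δ := Int.floor_le _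
      have h2 : lo / δ - 1 < ((⌊lo/δ⌋ : ℝ)) := Int.sub_one_lt_floor _
      have h3 : (((⌊hi/δ⌋ + 1 - (⌊lo/δ⌋ - 1) : ℤ)) : ℝ) ≤ (hi - lo)/δ + 3 := by
        push_cast
        have : (hi - lo)/δ = hi/δ - lo/δ := by ring
        linarith
      have h4 : (hi - lo)/δ + 3 ≤ (hi - lo + 3)/δ := by
        have h5 : 3 ≤ 3 / δ := by
          rw [le_div_iff₀ hδ]; linarith
        have : (hi - lo + 3)/δ = (hi - lo)/δ + 3/δ := by ring
        linarith
      have h6 : (0:ℝ) ≤ (hi - lo + 3)/δ := div_nonneg (by linarith) hδ.le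
      calc (((⌊hi/δ⌋ + 1 - (⌊lo/δ⌋ - 1)).toNat : ℕ) : ℝ)
          = max ((⌊hi/δ⌋ + 1 - (⌊lo/δ⌋ - 1) : ℤ) : ℝ) 0 := by exact_mod_cast e0
        _ ≤ (hi - lo + 3) / δ := max_le (le_trans h3 h4) h6
    rw [hcount δ hδ]
    set Tf := (hfin δ hδ).toFinset
    have hsub : Tf ⊆ Finset.Icc (⌊a/δ⌋ - 1) ⌊b/δ⌋ ×ˢ
        (Finset.Icc (⌊c/δ⌋ - 1) ⌊d/δ⌋ ×ˢ Finset.Icc (⌊(-M)/δ⌋ - 1) ⌊M/δ⌋) := by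
      intro p hp
      rw [Set.Finite.mem_toFinset] at hp
      obtain ⟨⟨X, Y, Z⟩, ⟨hX, hY, hZ⟩, hXab, hYcd, hZf⟩ := hp
      dsimp only at hX hY hZ hXab hYcd hZf
      have hfb : |f X Y| ≤ M := hM X hXab Y hYcd
      rw [abs_le] at hfb
      rw [Finset.mem_product, Finset.mem_product, Finset.mem_Icc, Finset.mem_Icc,
        Finset.mem_Icc]
      exact ⟨hidx δ hδ p.1 X a b hX.1 hX.2 hXab.1 hXab.2,
        hidx δ hδ p.2.1 Y c d hY.1 hY.2 hYcd.1 hYcd.2,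
        hidx δ hδ p.2.2 Z (-M) M hZ.1 hZ.2 (by rw [hZf]; linarith) (by rw [hZf]; linarith)⟩
    have hcardle := Finset.card_le_card hsub
    rw [Finset.card_product, Finset.card_product] at hcardle
    have f1 := hfac a b (by linarith)
    have f2 := hfac c d (by linarith)
    have f3 := hfac (-M) M (by linarith)
    have hy1 : (0:ℝ) ≤ (b - a + 3)/δ := div_nonneg (by linarith) hδ.le
    have hy2 : (0:ℝ) ≤ (d - c + 3)/δ := div_nonneg (by linarith) hδ.le
    calc (Tf.card : ℝ)
        ≤ (((Finset.Icc (⌊a/δ⌋ - 1) ⌊b/δ⌋).card *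
            ((Finset.Icc (⌊c/δ⌋ - 1) ⌊d/δ⌋).card * (Finset.Icc (⌊(-M)/δ⌋ - 1) ⌊M/δ⌋).card) : ℕ) : ℝ) := by
          exact_mod_cast hcardle
      _ = ((Finset.Icc (⌊a/δ⌋ - 1) ⌊b/δ⌋).card : ℝ) *
            (((Finset.Icc (⌊c/δ⌋ - 1) ⌊d/δ⌋).card : ℝ) * ((Finset.Icc (⌊(-M)/δ⌋ - 1) ⌊M/δ⌋).card : ℝ)) := by
          push_cast; ring
      _ ≤ ((b - a + 3)/δ) * (((d - c + 3)/δ) * ((M - -M + 3)/δ)) := by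
          apply mul_le_mul f1 ?_ (mul_nonneg (Nat.cast_nonneg _) (Nat.cast_nonneg _)) hy1
          apply mul_le_mul f2 f3 (Nat.cast_nonneg _) hy2
      _ = B / δ ^ 3 := by
          rw [hBdef]; field_simp; ring
  -- lower bound on the count
  set K : ℝ := c₀ * (b - a) * (d - c) / 32 with hKdef
  have hK : 0 < K := by
    rw [hKdef]
    apply div_pos (mul_pos (mul_pos hc₀ (by linarith)) (by linarith)) (by norm_num)
  have key : ∀ δ : ℝ, 0 < δ → δ < δ₀ → 6 * δ ≤ b - a → 6 * δ ≤ d - c →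
      K * (δ ^ s / δ ^ 3) ≤ (meshCount δ G : ℝ) := by
    intro δ hδ hδ0 hba hdc
    set Tf := (hfin δ hδ).toFinset with hTfdef
    have hmemTf : ∀ p : ℤ × ℤ × ℤ, (meshCube δ p.1 p.2.1 p.2.2 ∩ G).Nonempty → p ∈ Tf := by
      intro p hp
      rw [hTfdef, Set.Finite.mem_toFinset]
      exact hp
    set Cor : Finset (ℤ × ℤ) :=
      Finset.Icc (⌈a/δ⌉ + 1) (⌊b/δ⌋ - 1) ×ˢ Finset.Icc (⌈c/δ⌉ + 1) (⌊d/δ⌋ - 1) with hCorDef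
    have key2 : ∀ p : ℤ × ℤ, ∃ q : ℤ × ℤ, p ∈ Cor →
        (p.1 - 1 ≤ q.1 ∧ q.1 ≤ p.1) ∧ (p.2 - 1 ≤ q.2 ∧ q.2 ≤ p.2) ∧
        c₀ * δ ^ s / (2 * δ) ≤ ((Tf.filter (fun r => (r.1, r.2.1) = q)).card : ℝ) := by
      rintro ⟨i, j⟩
      by_cases hp : (i, j) ∈ Cor
      swap
      · exact ⟨(i, j), fun h => absurd h hp⟩
      rw [hCorDef, Finset.mem_product, Finset.mem_Icc, Finset.mem_Icc] at hp
      obtain ⟨⟨hi1, hi2⟩, hj1, hj2⟩ := hp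
      have hmargLo : ∀ (lo : ℝ) (n : ℤ), ⌈lo/δ⌉ + 1 ≤ n → lo ≤ ((n : ℝ) - 1) * δ := by
        intro lo n hn
        have h1 : (⌈lo/δ⌉ : ℝ) ≤ (n : ℝ) - 1 := by
          have : (⌈lo/δ⌉ : ℝ) ≤ ((n - 1 : ℤ) : ℝ) := by exact_mod_cast (by omega : ⌈lo/δ⌉ ≤ n - 1)
          push_cast at this; linarith
        have h2 : lo / δ ≤ (n : ℝ) - 1 := le_trans (Int.le_ceil _) h1
        calc lo = (lo/δ) * δ := by field_simp
          _ ≤ ((n : ℝ) - 1) * δ := mul_le_mul_of_nonneg_right h2 hδ.le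
      have hmargHi : ∀ (hi : ℝ) (n : ℤ), n ≤ ⌊hi/δ⌋ - 1 → ((n : ℝ) + 1) * δ ≤ hi := by
        intro hi n hn
        have h1 : ((n : ℝ) + 1) ≤ (⌊hi/δ⌋ : ℝ) := by
          have : ((n + 1 : ℤ) : ℝ) ≤ (⌊hi/δ⌋ : ℝ) := by exact_mod_cast (by omega : n + 1 ≤ ⌊hi/δ⌋)
          push_cast at this; linarith
        have h2 : ((n : ℝ) + 1) ≤ hi / δ := le_trans h1 (Int.floor_le _)
        calc ((n : ℝ) + 1) * δ ≤ (hi/δ) * δ := mul_le_mul_of_nonneg_right h2 hδ.le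
          _ = hi := by field_simp
      have hma := hmargLo a i hi1
      have hmb := hmargHi b i hi2
      have hmc := hmargLo c j hj1
      have hmd := hmargHi d j hj2
      set X := (i : ℝ) * δ with hXdef
      set Y := (j : ℝ) * δ with hYdef
      have hXab : X ∈ Icc a b := ⟨by nlinarith, by nlinarith⟩
      have hYcd : Y ∈ Icc c d := ⟨by nlinarith, by nlinarith⟩
      obtain ⟨t, ht, u, hu, hdist, hval⟩ := hosc X hXab Y hYcd δ hδ hδ0
      have hsq : (t - X) ^ 2 + (u - Y) ^ 2 ≤ δ ^ 2 := by
        have h0 : 0 ≤ (t - X) ^ 2 + (u - Y) ^ 2 := by positivity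
        have h1 := Real.sq_sqrt h0
        nlinarith [Real.sqrt_nonneg ((t - X) ^ 2 + (u - Y) ^ 2)]
      have htX : -δ ≤ t - X ∧ t - X ≤ δ := by
        constructor <;> nlinarith [sq_nonneg (u - Y)]
      have huY : -δ ≤ u - Y ∧ u - Y ≤ δ := by
        constructor <;> nlinarith [sq_nonneg (t - X)]
      set i' : ℤ := if (i : ℝ) * δ ≤ t then i else i - 1 with hi'def
      set j' : ℤ := if (j : ℝ) * δ ≤ u then j else j - 1 with hj'def
      have hti' : t ∈ Icc ((i' : ℝ) * δ) (((i' : ℝ) + 1) * δ) := by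
        rw [hi'def]; split_ifs with h
        · exact ⟨h, by nlinarith [htX.2]⟩
        · push_cast
          constructor <;> nlinarith [htX.1, le_of_not_ge h]
      have hXi' : X ∈ Icc ((i' : ℝ) * δ) (((i' : ℝ) + 1) * δ) := by
        rw [hi'def]; split_ifs with h
        · exact ⟨le_refl _, by nlinarith⟩
        · push_cast
          constructor <;> nlinarith
      have huj' : u ∈ Icc ((j' : ℝ) * δ) (((j' : ℝ) + 1) * δ) := by
        rw [hj'def]; split_ifs with h
        · exact ⟨h, by nlinarith [huY.2]⟩
        · push_cast
          constructor <;> nlinarith [huY.1, le_of_not_ge h]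
      have hYj' : Y ∈ Icc ((j' : ℝ) * δ) (((j' : ℝ) + 1) * δ) := by
        rw [hj'def]; split_ifs with h
        · exact ⟨le_refl _, by nlinarith⟩
        · push_cast
          constructor <;> nlinarith
      refine ⟨(i', j'), fun _ => ⟨?_, ?_, ?_⟩⟩
      · constructor <;> (rw [hi'def]; split_ifs <;> omega)
      · constructor <;> (rw [hj'def]; split_ifs <;> omega)
      · exact fiber_bound a b c d δ (c₀ * δ ^ s) f hf hδ i' j' X Y t u hXab hYcd ht hu
          hXi' hYj' hti' huj' hval Tf (fun k hk => hmemTf (i', j', k) hk)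
    choose σ hσ using key2
    set I := Cor.image σ with hIdef
    have hfib4 : ∀ q ∈ I, (Cor.filter (fun p => σ p = q)).card ≤ 4 := by
      intro q _
      have hsub : Cor.filter (fun p => σ p = q) ⊆
          {(q.1, q.2), (q.1 + 1, q.2), (q.1, q.2 + 1), (q.1 + 1, q.2 + 1)} := by
        intro p hp
        rw [Finset.mem_filter] at hp
        obtain ⟨hpc, hpq⟩ := hp
        obtain ⟨⟨h1, h2⟩, ⟨h3, h4⟩, _⟩ := hσ p hpc
        rw [hpq] at h1 h2 h3 h4
        simp only [Finset.mem_insert, Finset.mem_singleton, Prod.ext_iff]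
        have hA : p.1 = q.1 ∨ p.1 = q.1 + 1 := by omega
        have hB : p.2 = q.2 ∨ p.2 = q.2 + 1 := by omega
        rcases hA with hA | hA <;> rcases hB with hB | hB <;> simp [hA, hB]
      refine le_trans (Finset.card_le_card hsub) ?_
      refine le_trans (Finset.card_insert_le _ _) ?_
      refine le_trans (Nat.add_le_add_right (Finset.card_insert_le _ _) 1) ?_
      refine le_trans (Nat.add_le_add_right (Nat.add_le_add_right (Finset.card_insert_le _ _) 1) 1) ?_
      simp
    have hCor4 : Cor.card ≤ 4 * I.card := Finset.card_le_mul_card_image Cor 4 hfib4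
    have hsum : ∑ q ∈ I, (Tf.filter (fun r => (r.1, r.2.1) = q)).card ≤ Tf.card := by
      rw [← Finset.card_biUnion]
      · exact Finset.card_le_card (Finset.biUnion_subset.2 fun q _ => Finset.filter_subset _ _)
      · intro q1 _ q2 _ hne
        rw [Function.onFun, Finset.disjoint_left]
        intro r h1 h2
        rw [Finset.mem_filter] at h1 h2
        exact hne (h1.2.symm.trans h2.2)
    have hc' : (0:ℝ) ≤ c₀ * δ ^ s / (2 * δ) := by
      apply div_nonneg (mul_nonneg hc₀.le (Real.rpow_nonneg hδ.le s)) (by linarith)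
    have hlowsum : (I.card : ℝ) * (c₀ * δ ^ s / (2 * δ)) ≤ (Tf.card : ℝ) := by
      have h1 : ∀ q ∈ I, c₀ * δ ^ s / (2 * δ) ≤ ((Tf.filter (fun r => (r.1, r.2.1) = q)).card : ℝ) := by
        intro q hq
        obtain ⟨p, hp, rfl⟩ := Finset.mem_image.1 hq
        exact (hσ p hp).2.2
      calc (I.card : ℝ) * (c₀ * δ ^ s / (2 * δ))
          = ∑ _q ∈ I, (c₀ * δ ^ s / (2 * δ)) := by rw [Finset.sum_const, nsmul_eq_mul]
        _ ≤ ∑ q ∈ I, ((Tf.filter (fun r => (r.1, r.2.1) = q)).card : ℝ) := Finset.sum_le_sum h1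
        _ = ((∑ q ∈ I, (Tf.filter (fun r => (r.1, r.2.1) = q)).card : ℕ) : ℝ) := by push_cast; rfl
        _ ≤ (Tf.card : ℝ) := by exact_mod_cast hsum
    have hCorCard : ((b - a)/(2*δ)) * ((d - c)/(2*δ)) ≤ (Cor.card : ℝ) := by
      have hfac2 : ∀ (lo hi : ℝ), 6 * δ ≤ hi - lo →
          (hi - lo)/(2*δ) ≤ ((Finset.Icc (⌈lo/δ⌉ + 1) (⌊hi/δ⌋ - 1)).card : ℝ) := by
        intro lo hi hlh
        rw [Int.card_Icc]
        have h1 : hi/δ - 1 < ((⌊hi/δ⌋ : ℝ)) := Int.sub_one_lt_floor _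
        have h2 : ((⌈lo/δ⌉ : ℝ)) < lo/δ + 1 := Int.ceil_lt_add_one _
        have h3 : ((⌊hi/δ⌋ - 1 + 1 - (⌈lo/δ⌉ + 1) : ℤ) : ℝ) ≤ (((⌊hi/δ⌋ - 1 + 1 - (⌈lo/δ⌉ + 1)).toNat : ℕ) : ℝ) := by
          exact_mod_cast Int.self_le_toNat _
        have h4 : (hi - lo)/δ - 3 ≤ ((⌊hi/δ⌋ - 1 + 1 - (⌈lo/δ⌉ + 1) : ℤ) : ℝ) := by
          push_cast
          have : (hi - lo)/δ = hi/δ - lo/δ := by ring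
          linarith
        have h5 : (hi - lo)/(2*δ) ≤ (hi - lo)/δ - 3 := by
          have e : (hi - lo)/δ - 3 - (hi - lo)/(2*δ) = ((hi - lo) - 6*δ)/(2*δ) := by
            field_simp; ring
          have : (0:ℝ) ≤ ((hi - lo) - 6*δ)/(2*δ) := div_nonneg (by linarith) (by linarith)
          linarith
        linarith
      rw [hCorDef, Finset.card_product]
      push_cast
      have f1 := hfac2 a b hba
      have f2 := hfac2 c d hdc
      have hp2 : (0:ℝ) ≤ (d - c)/(2*δ) := div_nonneg (by linarith) (by linarith)
      exact mul_le_mul f1 f2 hp2 (Nat.cast_nonneg _)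
    have hIc : (Cor.card : ℝ) / 4 ≤ (I.card : ℝ) := by
      have : (Cor.card : ℝ) ≤ 4 * (I.card : ℝ) := by exact_mod_cast hCor4
      linarith
    rw [hcount δ hδ]
    have hchain : (((b - a)/(2*δ)) * ((d - c)/(2*δ)) / 4) * (c₀ * δ ^ s / (2 * δ)) ≤ (Tf.card : ℝ) := by
      refine le_trans (mul_le_mul ?_ (le_refl _) hc' ?_) hlowsum
      · refine le_trans ?_ hIc
        linarith
      · exact Nat.cast_nonneg _
    refine le_trans (le_of_eq ?_) hchain
    rw [hKdef]
    field_simp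
    ring
  -- assemble the liminf bound
  set δ₁ : ℝ := min δ₀ (min ((b - a) / 6) ((d - c) / 6)) with hδ₁def
  have hδ₁pos : 0 < δ₁ := lt_min hδ₀ (lt_min (by linarith) (by linarith))
  have hgood : ∀ δ : ℝ, 0 < δ → δ < δ₁ → K * (δ ^ s / δ ^ 3) ≤ (meshCount δ G : ℝ) := by
    intro δ hδ hlt
    refine key δ hδ (lt_of_lt_of_le hlt (min_le_left _ _)) ?_ ?_
    · have h := lt_of_lt_of_le hlt ((min_le_right _ _).trans (min_le_left _ _))
      linarith
    · have h := lt_of_lt_of_le hlt ((min_le_right _ _).trans (min_le_right _ _))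
      linarith
  have hNpos : ∀ δ : ℝ, 0 < δ → δ < δ₁ → 0 < (meshCount δ G : ℝ) := by
    intro δ hδ hlt
    refine lt_of_lt_of_le ?_ (hgood δ hδ hlt)
    exact mul_pos hK (div_pos (Real.rpow_pos_of_pos hδ s) (by positivity))
  have hub : ∀ᶠ δ in nhdsWithin (0:ℝ) (Ioi 0),
      Real.log (meshCount δ G) / (-Real.log δ) ≤ Real.log B + 3 := by
    have hmem : Ioo (0:ℝ) (min δ₁ (Real.exp (-1))) ∈ nhdsWithin (0:ℝ) (Ioi 0) :=
      Ioo_mem_nhdsGT_of_mem ⟨le_refl 0, lt_min hδ₁pos (Real.exp_pos _)⟩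
    filter_upwards [hmem] with δ hδmem
    obtain ⟨hδ, hδlt⟩ := hδmem
    have h1 : δ < δ₁ := lt_of_lt_of_le hδlt (min_le_left _ _)
    have h2 : δ < Real.exp (-1) := lt_of_lt_of_le hδlt (min_le_right _ _)
    have hlogδ : Real.log δ < -1 := by
      calc Real.log δ < Real.log (Real.exp (-1)) := Real.log_lt_log hδ h2
        _ = -1 := Real.log_exp _
    have hX : (1:ℝ) < -Real.log δ := by linarith
    have hexp1 : Real.exp (-1 : ℝ) < 1 := by
      rw [Real.exp_lt_one_iff]; norm_num
    have hδ1 : δ ≤ 1 := by linarith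
    have hN1 : (1:ℝ) ≤ (meshCount δ G : ℝ) := by
      have h := hNpos δ hδ h1
      exact_mod_cast Nat.one_le_cast.2 (Nat.cast_pos.1 h)
    have hNB := hupper δ hδ hδ1
    have hlogN : Real.log (meshCount δ G) ≤ Real.log B + 3 * (-Real.log δ) := by
      calc Real.log (meshCount δ G) ≤ Real.log (B / δ ^ 3) :=
            Real.log_le_log (by linarith) hNB
        _ = Real.log B - Real.log (δ ^ 3) := Real.log_div (by linarith) (by positivity)
        _ = Real.log B - 3 * Real.log δ := by rw [Real.log_pow]; push_cast; ring
        _ = Real.log B + 3 * (-Real.log δ) := by ring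
    have hlogN0 : 0 ≤ Real.log (meshCount δ G) := Real.log_nonneg hN1
    have hlogB0 : 0 ≤ Real.log B := Real.log_nonneg hB1
    rw [div_le_iff₀ (by linarith : (0:ℝ) < -Real.log δ)]
    nlinarith
  have cobdd : IsCoboundedUnder (· ≥ ·) (nhdsWithin (0:ℝ) (Ioi 0))
      (fun δ : ℝ => Real.log (meshCount δ G) / (-Real.log δ)) := by
    apply Filter.IsBoundedUnder.isCoboundedUnder_ge
    exact ⟨Real.log B + 3, eventually_map.2 hub⟩
  have hlb : ∀ ε : ℝ, 0 < ε → ∀ᶠ δ in nhdsWithin (0:ℝ) (Ioi 0),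
      3 - s - ε ≤ Real.log (meshCount δ G) / (-Real.log δ) := by
    intro ε hε
    set C : ℝ := max 1 (|Real.log K| / ε) with hCdef
    have hC1 : (1:ℝ) ≤ C := le_max_left _ _
    have hmem : Ioo (0:ℝ) (min δ₁ (Real.exp (-C))) ∈ nhdsWithin (0:ℝ) (Ioi 0) :=
      Ioo_mem_nhdsGT_of_mem ⟨le_refl 0, lt_min hδ₁pos (Real.exp_pos _)⟩
    filter_upwards [hmem] with δ hδmem
    obtain ⟨hδ, hδlt⟩ := hδmem
    have h1 : δ < δ₁ := lt_of_lt_of_le hδlt (min_le_left _ _)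
    have h2 : δ < Real.exp (-C) := lt_of_lt_of_le hδlt (min_le_right _ _)
    have hlogδ : Real.log δ < -C := by
      calc Real.log δ < Real.log (Real.exp (-C)) := Real.log_lt_log hδ h2
        _ = -C := Real.log_exp _
    have hX0 : (0:ℝ) < -Real.log δ := by linarith
    have hXC : C ≤ -Real.log δ := by linarith
    have hKX : |Real.log K| ≤ ε * (-Real.log δ) := by
      have h3 : |Real.log K| / ε ≤ C := le_max_right _ _
      rw [div_le_iff₀ hε] at h3
      nlinarith
    have hNlow := hgood δ hδ h1
    have hrpos : 0 < δ ^ s / δ ^ 3 := div_pos (Real.rpow_pos_of_pos hδ s) (by positivity)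
    have hlogN : Real.log K + s * Real.log δ - 3 * Real.log δ ≤
        Real.log (meshCount δ G) := by
      have hle := Real.log_le_log (mul_pos hK hrpos) hNlow
      have heq : Real.log (K * (δ ^ s / δ ^ 3)) =
          Real.log K + s * Real.log δ - 3 * Real.log δ := by
        rw [Real.log_mul (ne_of_gt hK) (ne_of_gt hrpos),
          Real.log_div (ne_of_gt (Real.rpow_pos_of_pos hδ s)) (by positivity),
          Real.log_rpow hδ, Real.log_pow]
        push_cast; ring
      rw [heq] at hle
      exact hle
    rw [le_div_iff₀ hX0]
    have h4 : -(ε * (-Real.log δ)) ≤ Real.log K := by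
      have := neg_abs_le (Real.log K)
      linarith
    nlinarith
  rw [lowerBoxDim]
  refine le_of_forall_pos_le_add fun ε hε => ?_
  have h := Filter.le_liminf_of_le cobdd (hlb ε hε)
  linarith
end
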